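/- arXiv:2001.11632 — 10 statements merged into one kernel-verified Lean document; each statement's English description precedes it below -/
import Mathlib

section
/- For every positive integer m, the equation m = 3x^2 + 2xy + 3y^2 has a solution in integers x, y if and only if both of the following hold: (1) for every prime q with q ≡ 5 or 7 (mod 8), the q-adic valuation of m is even; and (2) either (a) m is odd and the total number of prime factors of m (counted with multiplicity) that are congruent to 3 mod 8 is odd, or (b) the 2-adic valuation of m is at least 2. -/
open Zsqrtd

local notation "ℤα" => Zsqrtd (-2)

namespace SqrtNegTwo

theorem norm_eq (z : ℤα) : z.norm = z.re ^ 2 + 2 * z.im ^ 2 := by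
  rw [Zsqrtd.norm_def]; ring

theorem norm_nonneg' (z : ℤα) : 0 ≤ z.norm := Zsqrtd.norm_nonneg (by norm_num) z

theorem norm_pos' {z : ℤα} (hz : z ≠ 0) : 0 < z.norm :=
  lt_of_le_of_ne (norm_nonneg' z) (fun h => hz ((Zsqrtd.norm_eq_zero_iff (by norm_num) z).mp h.symm))

/-- quotient for the Euclidean algorithm -/
def zdiv (x y : ℤα) : ℤα :=
  ⟨round (((x * star y).re : ℚ) / ((y.norm : ℤ) : ℚ)),
   round (((x * star y).im : ℚ) / ((y.norm : ℤ) : ℚ))⟩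

def zmod (x y : ℤα) : ℤα := x - y * zdiv x y

theorem zdiv_zero (x : ℤα) : zdiv x 0 = 0 := by
  simp [zdiv, Zsqrtd.ext_iff]

theorem round_key (a N : ℤ) (hN : 0 < N) :
    ((a - N * round ((a : ℚ) / (N : ℚ)) : ℤ) : ℚ) ^ 2 ≤ (N : ℚ) ^ 2 / 4 := by
  have hN' : (N : ℚ) ≠ 0 := Int.cast_ne_zero.mpr hN.ne'
  have h := abs_sub_round ((a : ℚ) / (N : ℚ))
  have heq : ((a - N * round ((a : ℚ) / (N : ℚ)) : ℤ) : ℚ)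
      = (N : ℚ) * ((a : ℚ) / (N : ℚ) - round ((a : ℚ) / (N : ℚ))) := by
    push_cast
    field_simp
  rw [heq, mul_pow]
  have h2 : ((a : ℚ) / (N : ℚ) - round ((a : ℚ) / (N : ℚ))) ^ 2 ≤ (1 / 2 : ℚ) ^ 2 := by
    rw [← sq_abs]
    have : (0:ℚ) ≤ |(a : ℚ) / (N : ℚ) - round ((a : ℚ) / (N : ℚ))| := abs_nonneg _
    nlinarith
  nlinarith [sq_nonneg ((N:ℚ))]

theorem norm_zmod_lt (x : ℤα) {y : ℤα} (hy : y ≠ 0) : (zmod x y).norm < y.norm := by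
  have hN : 0 < y.norm := norm_pos' hy
  set q : ℤα := zdiv x y with hq
  set r : ℤα := zmod x y with hr
  have h1 : r * star y = x * star y - (y.norm : ℤα) * q := by
    rw [Zsqrtd.norm_eq_mul_conj]
    rw [hr, zmod, ← hq]
    ring
  have h2 : r.norm * y.norm = (r * star y).norm := by
    rw [Zsqrtd.norm_mul, Zsqrtd.norm_conj]
  have hre : (r * star y).re = (x * star y).re - y.norm * q.re := by
    rw [h1]; simp [Zsqrtd.re_sub, Zsqrtd.re_mul, Zsqrtd.re_intCast, Zsqrtd.im_intCast]
  have him : (r * star y).im = (x * star y).im - y.norm * q.im := by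
    rw [h1]; simp [Zsqrtd.im_sub, Zsqrtd.im_mul, Zsqrtd.re_intCast, Zsqrtd.im_intCast]
  have hqre : q.re = round (((x * star y).re : ℚ) / ((y.norm : ℤ) : ℚ)) := rfl
  have hqim : q.im = round (((x * star y).im : ℚ) / ((y.norm : ℤ) : ℚ)) := rfl
  have h3 : (r * star y).norm = ((x * star y).re - y.norm * q.re) ^ 2 + 2 * ((x * star y).im - y.norm * q.im) ^ 2 := by
    rw [norm_eq, hre, him]
  have b1 : (((x * star y).re - y.norm * q.re : ℤ) : ℚ) ^ 2 ≤ ((y.norm : ℤ) : ℚ) ^ 2 / 4 := by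
    rw [hqre]; exact round_key (x * star y).re y.norm hN
  have b2 : (((x * star y).im - y.norm * q.im : ℤ) : ℚ) ^ 2 ≤ ((y.norm : ℤ) : ℚ) ^ 2 / 4 := by
    rw [hqim]; exact round_key (x * star y).im y.norm hN
  have hNQ : (0:ℚ) < ((y.norm : ℤ) : ℚ) := by exact_mod_cast hN
  have key : ((r.norm : ℤ) : ℚ) * ((y.norm : ℤ) : ℚ) < ((y.norm : ℤ) : ℚ) * ((y.norm : ℤ) : ℚ) := by
    have : ((r.norm : ℤ) : ℚ) * ((y.norm : ℤ) : ℚ)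
        = (((x * star y).re - y.norm * q.re : ℤ) : ℚ) ^ 2 + 2 * (((x * star y).im - y.norm * q.im : ℤ) : ℚ) ^ 2 := by
      rw [← Int.cast_mul, h2, h3]; push_cast; ring
    rw [this]
    nlinarith
  have := (mul_lt_mul_iff_left₀ hNQ).mp key
  exact_mod_cast this

theorem natAbs_norm_zmod_lt (x : ℤα) {y : ℤα} (hy : y ≠ 0) :
    (zmod x y).norm.natAbs < y.norm.natAbs :=
  Int.natAbs_lt_natAbs_of_nonneg_of_lt (norm_nonneg' _) (norm_zmod_lt x hy)

instance : Nontrivial (ℤα) := ⟨⟨0, 1, by decide⟩⟩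

theorem norm_le_norm_mul_left (x : ℤα) {y : ℤα} (hy : y ≠ 0) :
    (Zsqrtd.norm x).natAbs ≤ (Zsqrtd.norm (x * y)).natAbs := by
  rw [Zsqrtd.norm_mul, Int.natAbs_mul]
  exact le_mul_of_one_le_right (Nat.zero_le _)
    (Int.natAbs_pos.mpr (fun h => hy ((Zsqrtd.norm_eq_zero_iff (by norm_num) y).mp h)))

instance euclideanDomain : EuclideanDomain (ℤα) :=
  { Zsqrtd.commRing, (inferInstance : Nontrivial ℤα) with
    quotient := zdiv
    remainder := zmod
    quotient_zero := zdiv_zero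
    quotient_mul_add_remainder_eq := fun x y => by rw [zmod]; ring
    r := _
    r_wellFounded := (measure (Int.natAbs ∘ Zsqrtd.norm)).wf
    remainder_lt := fun x y hy => natAbs_norm_zmod_lt x hy
    mul_left_not_lt := fun a _ hb0 => not_lt_of_ge <| norm_le_norm_mul_left a hb0 }

theorem rep_of_not_irreducible (p : ℕ) (hp : p.Prime)
    (hpi : ¬Irreducible (p : ℤα)) : ∃ x y : ℤ, (p : ℤ) = x ^ 2 + 2 * y ^ 2 := by
  have hpu : ¬IsUnit (p : ℤα) := by
    rw [← Zsqrtd.norm_eq_one_iff]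
    rw [Zsqrtd.norm_natCast, Int.natAbs_mul, Int.natAbs_natCast]
    intro h'
    nlinarith [hp.two_le]
  have hab : ∃ a b : ℤα, (p : ℤα) = a * b ∧ ¬IsUnit a ∧ ¬IsUnit b := by
    simpa only [true_and, not_false_iff, exists_prop, irreducible_iff, hpu, not_forall,
      not_or] using hpi
  obtain ⟨a, b, hpab, hau, hbu⟩ := hab
  have hnap : (Zsqrtd.norm a).natAbs = p := by
    have h1 : (Zsqrtd.norm a).natAbs * (Zsqrtd.norm b).natAbs = p ^ 2 := by
      rw [← Int.natAbs_mul, ← Zsqrtd.norm_mul, ← hpab, Zsqrtd.norm_natCast,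
        Int.natAbs_mul, Int.natAbs_natCast, sq]
    exact ((hp.mul_eq_prime_sq_iff (mt Zsqrtd.norm_eq_one_iff.1 hau)
      (mt Zsqrtd.norm_eq_one_iff.1 hbu)).1 h1).1
  refine ⟨a.re, a.im, ?_⟩
  have := norm_eq a
  have h2 : (Zsqrtd.norm a) = (p : ℤ) := by
    rw [← hnap, Int.natAbs_of_nonneg (norm_nonneg' a)]
  rw [← h2, this]

theorem prime_rep {p : ℕ} (hp : p.Prime) (h : p = 2 ∨ p % 8 = 1 ∨ p % 8 = 3) :
    ∃ x y : ℤ, (p : ℤ) = x ^ 2 + 2 * y ^ 2 := by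
  rcases h with rfl | h
  · exact ⟨0, 1, by norm_num⟩
  have hp2 : p ≠ 2 := by rintro rfl; omega
  haveI : Fact p.Prime := ⟨hp⟩
  have hsq : IsSquare (-2 : ZMod p) := (ZMod.exists_sq_eq_neg_two_iff hp2).mpr h
  obtain ⟨r, hr⟩ := hsq
  -- lift r to an integer a with p ∣ a^2 + 2
  set a : ℤ := (r.val : ℤ) with ha
  have hdvd : (p : ℤ) ∣ a ^ 2 + 2 := by
    have : ((a ^ 2 + 2 : ℤ) : ZMod p) = 0 := by
      push_cast [ha]
      rw [ZMod.natCast_val, ZMod.cast_id, pow_two, ← hr]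
      ring
    exact (ZMod.intCast_zmod_eq_zero_iff_dvd _ _).mp this
  apply rep_of_not_irreducible p hp
  intro hirr
  have hprime : Prime (p : ℤα) := hirr.prime
  have hfact : ((a ^ 2 + 2 : ℤ) : ℤα) = (⟨a, 1⟩ : ℤα) * (⟨a, -1⟩ : ℤα) := by
    ext <;> simp only [Zsqrtd.re_intCast, Zsqrtd.im_intCast, Zsqrtd.re_mul, Zsqrtd.im_mul] <;> ring
  have hd2 : (p : ℤα) ∣ (⟨a, 1⟩ : ℤα) * (⟨a, -1⟩ : ℤα) := by
    rw [← hfact]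
    have : ((p : ℤ) : ℤα) ∣ ((a ^ 2 + 2 : ℤ) : ℤα) :=
      (Zsqrtd.intCast_dvd_intCast (d := -2) _ _).mpr hdvd
    exact_mod_cast this
  have hd3 := hprime.2.2 _ _ hd2
  have hnd1 : ¬ ((p : ℤ) ∣ (1 : ℤ)) := by
    intro hcon
    have h1 : (p : ℤ) ≤ 1 := Int.le_of_dvd one_pos hcon
    have h2 : (2 : ℤ) ≤ (p : ℤ) := by exact_mod_cast hp.two_le
    omega
  rcases hd3 with hd3 | hd3
  · have := ((Zsqrtd.intCast_dvd (p : ℤ) _).mp (by exact_mod_cast hd3)).2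
    exact hnd1 this
  · have := ((Zsqrtd.intCast_dvd (p : ℤ) _).mp (by exact_mod_cast hd3)).2
    exact hnd1 (dvd_neg.mp this)

theorem rep_mul {a b : ℕ}
    (ha : ∃ x y : ℤ, (a : ℤ) = x ^ 2 + 2 * y ^ 2) (hb : ∃ x y : ℤ, (b : ℤ) = x ^ 2 + 2 * y ^ 2) :
    ∃ x y : ℤ, ((a * b : ℕ) : ℤ) = x ^ 2 + 2 * y ^ 2 := by
  obtain ⟨x, y, hxy⟩ := ha
  obtain ⟨u, v, huv⟩ := hb
  exact ⟨x * u - 2 * y * v, x * v + y * u, by push_cast; rw [hxy, huv]; ring⟩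

theorem even_factorization_of_rep (q : ℕ) (hq : q.Prime) (hq8 : q % 8 = 5 ∨ q % 8 = 7) :
    ∀ m : ℕ, 0 < m → (∃ x y : ℤ, (m : ℤ) = x ^ 2 + 2 * y ^ 2) → Even (m.factorization q) := by
  intro m
  induction m using Nat.strong_induction_on with
  | _ m ih =>
    intro hm ⟨x, y, hxy⟩
    by_cases hdvd : q ∣ m
    · haveI : Fact q.Prime := ⟨hq⟩
      have hq2 : q ≠ 2 := by rintro rfl; omega
      -- work in ZMod q
      have h0 : ((x : ZMod q)) ^ 2 + 2 * ((y : ZMod q)) ^ 2 = 0 := by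
        have : ((m : ℕ) : ZMod q) = 0 := (ZMod.natCast_eq_zero_iff m q).mpr hdvd
        have h1 : (((m : ℤ)) : ZMod q) = 0 := by exact_mod_cast this
        rw [hxy] at h1
        push_cast at h1
        exact h1
      have hqy : (q : ℤ) ∣ y := by
        by_contra hy
        have hY : ((y : ZMod q)) ≠ 0 := by
          intro h
          exact hy (by exact_mod_cast (ZMod.intCast_zmod_eq_zero_iff_dvd y q).mp h)
        have hsq : IsSquare (-2 : ZMod q) := by
          refine ⟨(x : ZMod q) * ((y : ZMod q))⁻¹, ?_⟩
          have hX2 : ((x : ZMod q)) ^ 2 = -2 * ((y : ZMod q)) ^ 2 := by linear_combination h0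
          field_simp
          linear_combination -hX2
        have := (ZMod.exists_sq_eq_neg_two_iff hq2).mp hsq
        omega
      have hqx : (q : ℤ) ∣ x := by
        have h2 : (q : ℤ) ∣ x ^ 2 := by
          have hqm : (q : ℤ) ∣ (m : ℤ) := by exact_mod_cast Int.natCast_dvd_natCast.mpr hdvd
          have : x ^ 2 = (m : ℤ) - 2 * y ^ 2 := by rw [hxy]; ring
          rw [this]
          exact dvd_sub hqm (Dvd.dvd.mul_left (hqy.pow (by norm_num)) 2)
        exact (Nat.prime_iff_prime_int.mp hq).dvd_of_dvd_pow h2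
      obtain ⟨x', rfl⟩ := hqx
      obtain ⟨y', rfl⟩ := hqy
      have hq2dvd : (q ^ 2 : ℕ) ∣ m := by
        have : ((q ^ 2 : ℕ) : ℤ) ∣ (m : ℤ) := by
          refine ⟨x' ^ 2 + 2 * y' ^ 2, ?_⟩
          rw [hxy]; push_cast; ring
        exact_mod_cast this
      obtain ⟨m', hm'⟩ := hq2dvd
      have hm'pos : 0 < m' := by
        rcases Nat.eq_zero_or_pos m' with h | h
        · subst h; simp at hm'; omega
        · exact h
      have hqpos : 0 < q := hq.pos
      have hm'lt : m' < m := by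
        have h1 : 1 < q ^ 2 := by nlinarith [hq.two_le]
        calc m' < q ^ 2 * m' := by nlinarith
        _ = m := hm'.symm
      have hrep' : ∃ x y : ℤ, (m' : ℤ) = x ^ 2 + 2 * y ^ 2 := by
        refine ⟨x', y', ?_⟩
        have hq2ne : ((q : ℤ) ^ 2) ≠ 0 := by positivity
        have : ((q:ℤ) ^ 2) * (m' : ℤ) = ((q:ℤ) ^ 2) * (x' ^ 2 + 2 * y' ^ 2) := by
          have hcast : (m : ℤ) = (q : ℤ) ^ 2 * (m' : ℤ) := by exact_mod_cast congrArg (Nat.cast : ℕ → ℤ) hm'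
          rw [← hcast, hxy]; ring
        exact mul_left_cancel₀ hq2ne this
      have heq : m.factorization q = 2 + m'.factorization q := by
        rw [hm', Nat.factorization_mul (by positivity) hm'pos.ne', Finsupp.add_apply,
          hq.factorization_pow, Finsupp.single_apply, if_pos rfl]
      rw [heq]
      obtain ⟨k, hk⟩ := ih m' hm'lt hm'pos hrep'
      exact ⟨1 + k, by omega⟩
    · rw [Nat.factorization_eq_zero_of_not_dvd hdvd]
      exact Even.zero

theorem rep_of_forall_primes :
    ∀ n : ℕ, (∀ q : ℕ, q.Prime → q ∣ n → (q = 2 ∨ q % 8 = 1 ∨ q % 8 = 3)) →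
      ∃ x y : ℤ, (n : ℤ) = x ^ 2 + 2 * y ^ 2 := by
  refine induction_on_primes ?_ ?_ ?_
  · exact fun _ => ⟨0, 0, by norm_num⟩
  · exact fun _ => ⟨1, 0, by norm_num⟩
  · intro p a hp ih hcond
    exact rep_mul (prime_rep hp (hcond p hp (dvd_mul_right p a)))
      (ih fun q hq hqa => hcond q hq (Dvd.dvd.mul_left hqa p))

theorem rep_of_cond {m : ℕ} (hm : 0 < m)
    (H : ∀ q : ℕ, q.Prime → (q % 8 = 5 ∨ q % 8 = 7) → Even (m.factorization q)) :
    ∃ x y : ℤ, (m : ℤ) = x ^ 2 + 2 * y ^ 2 := by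
  obtain ⟨b, a, hb0, ha0, hab, hsqf⟩ := Nat.sq_mul_squarefree_of_pos hm
  -- hab : a ^ 2 * b = m, hsqf : Squarefree b
  have hbprimes : ∀ q : ℕ, q.Prime → q ∣ b → (q = 2 ∨ q % 8 = 1 ∨ q % 8 = 3) := by
    intro q hq hqb
    rcases hq.eq_two_or_odd' with h2 | hodd
    · exact Or.inl h2
    obtain ⟨k, hk⟩ := hodd
    have h8 : q % 8 = 1 ∨ q % 8 = 3 ∨ q % 8 = 5 ∨ q % 8 = 7 := by omega
    rcases h8 with h | h | h | h
    · tauto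
    · tauto
    all_goals {
      exfalso
      have hE := H q hq (by tauto)
      have hfm : m.factorization q = 2 * a.factorization q + b.factorization q := by
        rw [← hab, Nat.factorization_mul (by positivity) hb0.ne', Finsupp.add_apply,
          Nat.factorization_pow, Finsupp.smul_apply]
        simp
      have hvb : b.factorization q = 1 := by
        have hle := hsqf.natFactorization_le_one q
        have hge : 1 ≤ b.factorization q := (hq.dvd_iff_one_le_factorization hb0.ne').mp hqb
        omega
      rw [hfm, hvb] at hE
      obtain ⟨j, hj⟩ := hE
      omega }
  obtain ⟨x, y, hxy⟩ := rep_of_forall_primes b hbprimes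
  exact ⟨a * x, a * y, by rw [← hab]; push_cast; rw [hxy]; ring⟩

theorem form_iff (m : ℕ) :
    (∃ x y : ℤ, (m : ℤ) = 3 * x ^ 2 + 2 * x * y + 3 * y ^ 2) ↔
      ∃ a b : ℤ, (m : ℤ) = a ^ 2 + 2 * b ^ 2 ∧ Even (a + b) := by
  constructor
  · rintro ⟨x, y, h⟩
    exact ⟨x - y, x + y, by rw [h]; ring, ⟨x, by ring⟩⟩
  · rintro ⟨a, b, h, ⟨x, hx⟩⟩
    refine ⟨x, b - x, ?_⟩
    rw [h]
    linear_combination (a - b + 2 * x) * hx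

theorem rep2_iff (m : ℕ) (hm : 0 < m) :
    (∃ a b : ℤ, (m : ℤ) = a ^ 2 + 2 * b ^ 2 ∧ Even (a + b)) ↔
      ((∀ q : ℕ, q.Prime → (q % 8 = 5 ∨ q % 8 = 7) → Even (m.factorization q)) ∧
        (m % 8 = 3 ∨ 4 ∣ m)) := by
  constructor
  · rintro ⟨a, b, h, he⟩
    refine ⟨fun q hq hq8 => even_factorization_of_rep q hq hq8 m hm ⟨a, b, h⟩, ?_⟩
    have hab := Int.even_add.mp he
    by_cases hea : Even a
    · -- both even : 4 ∣ m
      right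
      have heb : Even b := hab.mp hea
      obtain ⟨a', rfl⟩ := hea
      obtain ⟨b', rfl⟩ := heb
      have h4 : ((4 : ℕ) : ℤ) ∣ (m : ℤ) := ⟨a' ^ 2 + 2 * b' ^ 2, by rw [h]; push_cast; ring⟩
      exact_mod_cast h4
    · -- both odd : m % 8 = 3
      left
      have hob : ¬ Even b := fun hb => hea (hab.mpr hb)
      rw [Int.not_even_iff_odd] at hea hob
      obtain ⟨k, hk⟩ := hea
      obtain ⟨l, hl⟩ := hob
      have hkk : Even (k * (k + 1)) := Int.even_mul_succ_self k
      obtain ⟨j, hj⟩ := hkk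
      have hz : (m : ℤ) = 8 * (j + l ^ 2 + l) + 3 := by
        rw [h, hk, hl]
        linear_combination 4 * hj
      have hz' : (m : ℤ) % 8 = 3 := by omega
      omega
  · rintro ⟨H, hc⟩
    rcases hc with h3 | h4
    · obtain ⟨a, b, h⟩ := rep_of_cond hm H
      have hodda : Odd a := by
        rw [← Int.not_even_iff_odd]
        intro hea
        obtain ⟨a', rfl⟩ := hea
        have h2 : ((2 : ℕ) : ℤ) ∣ (m : ℤ) := ⟨a' ^ 2 + a' ^ 2 + b ^ 2, by rw [h]; push_cast; ring⟩
        have : (2 : ℕ) ∣ m := by exact_mod_cast h2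
        omega
      have hoddb : Odd b := by
        rw [← Int.not_even_iff_odd]
        intro heb
        obtain ⟨b', rfl⟩ := heb
        obtain ⟨k, hk⟩ := hodda
        have hkk : Even (k * (k + 1)) := Int.even_mul_succ_self k
        obtain ⟨j, hj⟩ := hkk
        have hz : (m : ℤ) = 8 * (j + b' ^ 2) + 1 := by
          rw [h, hk]
          linear_combination 4 * hj
        omega
      exact ⟨a, b, h, hodda.add_odd hoddb⟩
    · obtain ⟨m', hm'⟩ := h4
      have hm'pos : 0 < m' := by omega
      have H' : ∀ q : ℕ, q.Prime → (q % 8 = 5 ∨ q % 8 = 7) → Even (m'.factorization q) := by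
        intro q hq hq8
        have hq2 : q ≠ 2 := by rintro rfl; omega
        have hqm : m.factorization q = m'.factorization q := by
          rw [hm', Nat.factorization_mul (by norm_num) hm'pos.ne', Finsupp.add_apply]
          have h40 : (4 : ℕ).factorization q = 0 := by
            apply Nat.factorization_eq_zero_of_not_dvd
            intro hdvd
            have : q ∣ 2 := hq.dvd_of_dvd_pow (n := 2) (by norm_num; exact hdvd : q ∣ 2 ^ 2)
            exact hq2 ((Nat.prime_dvd_prime_iff_eq hq Nat.prime_two).mp this)
          rw [h40, zero_add]
        rw [← hqm]
        exact H q hq hq8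
      obtain ⟨a, b, hab⟩ := rep_of_cond hm'pos H'
      refine ⟨2 * a, 2 * b, ?_, ⟨a + b, by ring⟩⟩
      rw [hm']
      push_cast
      rw [hab]
      ring

theorem cast_eq_three_pow (m : ℕ) (hm : 0 < m) (hodd : Odd m)
    (H : ∀ q : ℕ, q.Prime → (q % 8 = 5 ∨ q % 8 = 7) → Even (m.factorization q)) :
    (m : ZMod 8) =
      3 ^ (∑ p ∈ m.primeFactors.filter (fun p => p % 8 = 3), m.factorization p) := by
  conv_lhs => rw [← Nat.factorization_prod_pow_eq_self hm.ne']
  rw [Finsupp.prod]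
  push_cast
  rw [← Finset.prod_filter_mul_prod_filter_not m.factorization.support (fun p => p % 8 = 3)]
  have hsupp : m.factorization.support = m.primeFactors := Nat.support_factorization m
  have h1 : ∏ p ∈ m.factorization.support.filter (fun p => p % 8 = 3),
      ((p : ZMod 8)) ^ (m.factorization p)
      = 3 ^ (∑ p ∈ m.primeFactors.filter (fun p => p % 8 = 3), m.factorization p) := by
    rw [hsupp, ← Finset.prod_pow_eq_pow_sum]
    apply Finset.prod_congr rfl
    intro p hp
    have hp8 : p % 8 = 3 := (Finset.mem_filter.mp hp).2
    have : ((p : ℕ) : ZMod 8) = ((p % 8 : ℕ) : ZMod 8) := (ZMod.natCast_mod p 8).symm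
    rw [this, hp8]
    norm_num
  have h2 : ∏ p ∈ m.factorization.support.filter (fun p => ¬ p % 8 = 3),
      ((p : ZMod 8)) ^ (m.factorization p) = 1 := by
    apply Finset.prod_eq_one
    intro p hp
    obtain ⟨hps, hp8⟩ := Finset.mem_filter.mp hp
    rw [hsupp] at hps
    have hpp : p.Prime := Nat.prime_of_mem_primeFactors hps
    have hpdvd : p ∣ m := Nat.dvd_of_mem_primeFactors hps
    have hpodd : p % 2 = 1 := by
      rcases hpp.eq_two_or_odd with h | h
      · subst h
        exfalso
        rw [Nat.odd_iff] at hodd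
        omega
      · exact h
    have h8 : p % 8 = 1 ∨ p % 8 = 5 ∨ p % 8 = 7 := by omega
    have hcast : ((p : ℕ) : ZMod 8) = ((p % 8 : ℕ) : ZMod 8) := (ZMod.natCast_mod p 8).symm
    rcases h8 with h | h | h
    · rw [hcast, h]; norm_num
    · obtain ⟨k, hk⟩ := H p hpp (Or.inl h)
      rw [hcast, h, hk, ← two_mul, pow_mul,
        show (((5 : ℕ) : ZMod 8)) ^ 2 = 1 from by decide, one_pow]
    · obtain ⟨k, hk⟩ := H p hpp (Or.inr h)
      rw [hcast, h, hk, ← two_mul, pow_mul,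
        show (((7 : ℕ) : ZMod 8)) ^ 2 = 1 from by decide, one_pow]
  rw [h1, h2, mul_one]

theorem mod8_eq_three_iff (m : ℕ) (hm : 0 < m)
    (H : ∀ q : ℕ, q.Prime → (q % 8 = 5 ∨ q % 8 = 7) → Even (m.factorization q)) :
    ((Odd m ∧
        Odd (∑ p ∈ m.primeFactors.filter (fun p => p % 8 = 3), m.factorization p)) ↔
      m % 8 = 3) := by
  have hcast3 : ∀ n : ℕ, ((n : ZMod 8) = 3 ↔ n % 8 = 3) := by
    intro n
    constructor
    · intro h
      have : ((n : ℕ) : ZMod 8) = ((3 : ℕ) : ZMod 8) := by exact_mod_cast h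
      have := (ZMod.natCast_eq_natCast_iff n 3 8).mp this
      unfold Nat.ModEq at this
      omega
    · intro h
      have : ((n % 8 : ℕ) : ZMod 8) = (n : ZMod 8) := ZMod.natCast_mod n 8
      rw [← this, h]
      norm_num
  constructor
  · rintro ⟨hodd, hS⟩
    have h := cast_eq_three_pow m hm hodd H
    obtain ⟨k, hk⟩ := hS
    rw [hk, pow_add, pow_mul, pow_one,
      show ((3 : ZMod 8)) ^ 2 = 1 from by decide, one_pow, one_mul] at h
    exact (hcast3 m).mp h
  · intro h3
    have hodd : Odd m := by rw [Nat.odd_iff]; omega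
    refine ⟨hodd, ?_⟩
    by_contra hS
    rw [Nat.not_odd_iff_even] at hS
    have h := cast_eq_three_pow m hm hodd H
    obtain ⟨k, hk⟩ := hS
    rw [hk, ← two_mul, pow_mul,
      show ((3 : ZMod 8)) ^ 2 = 1 from by decide, one_pow] at h
    rw [(hcast3 m).mpr h3] at h
    exact absurd h (by decide)

end SqrtNegTwo

theorem repr_by_3x2_2xy_3y2 (m : ℕ) (hm : 0 < m) :
    (∃ x y : ℤ, (m : ℤ) = 3 * x ^ 2 + 2 * x * y + 3 * y ^ 2) ↔
      (∀ q : ℕ, q.Prime → (q % 8 = 5 ∨ q % 8 = 7) → Even (m.factorization q)) ∧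
      ((Odd m ∧
          Odd (∑ p ∈ m.primeFactors.filter (fun p => p % 8 = 3), m.factorization p)) ∨
        2 ≤ m.factorization 2) := by
  rw [SqrtNegTwo.form_iff, SqrtNegTwo.rep2_iff m hm]
  have h4 : (4 ∣ m) ↔ 2 ≤ m.factorization 2 := by
    rw [← Nat.Prime.pow_dvd_iff_le_factorization Nat.prime_two hm.ne']
    norm_num
  constructor
  · rintro ⟨H, hc⟩
    refine ⟨H, ?_⟩
    rcases hc with h3 | hd
    · exact Or.inl ((SqrtNegTwo.mod8_eq_three_iff m hm H).mpr h3)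
    · exact Or.inr (h4.mp hd)
  · rintro ⟨H, hc⟩
    refine ⟨H, ?_⟩
    rcases hc with h3 | hd
    · exact Or.inl ((SqrtNegTwo.mod8_eq_three_iff m hm H).mp h3)
    · exact Or.inr (h4.mpr hd)
end

section
/- Let K be an imaginary quadratic field with ring of integers O_K, let 𝔞 be a nonzero ideal of O_K, and let m be a positive integer written as m = p_1⋯p_r · q_1^{e_1}⋯q_s^{e_s}, where the p_i are (not necessarily distinct) primes that are not inert in K (i.e., p_iO_K is not a prime ideal), the q_j are distinct primes that are inert in K (i.e., q_jO_K is a prime ideal), r, s ≥ 0, and all e_j > 0. Then N(𝔞) = m if and only if all e_j are even and there exist prime ideals 𝔭_1, …, 𝔭_r of O_K with N(𝔭_i) = p_i such that 𝔞 = 𝔭_1⋯𝔭_r · (q_1O_K)^{e_1/2}⋯(q_sO_K)^{e_s/2}. -/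
set_option synthInstance.maxHeartbeats 1000000
set_option maxHeartbeats 1000000

open NumberField

section Aux

variable {K : Type*} [Field K] [NumberField K]

theorem aux_norm_nat_span (hdeg : Module.finrank ℚ K = 2) (n : ℕ) :
    Ideal.absNorm (Ideal.span {((n:ℕ) : 𝓞 K)} : Ideal (𝓞 K)) = n ^ 2 := by
  rw [Ideal.absNorm_span_singleton]
  have h : ((n : ℕ) : 𝓞 K) = algebraMap ℤ (𝓞 K) (n : ℤ) := by push_cast; rfl
  rw [h, Algebra.norm_algebraMap_of_basis (RingOfIntegers.basis K),
    ← Module.finrank_eq_card_basis (RingOfIntegers.basis K), RingOfIntegers.rank, hdeg]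
  simp [Int.natAbs_pow]

theorem aux_mem_of_dvd_absNorm {P : Ideal (𝓞 K)} (hP : P.IsPrime) (hPb : P ≠ ⊥)
    {q : ℕ} (hq : q.Prime) (hd : q ∣ Ideal.absNorm P) : ((q:ℕ) : 𝓞 K) ∈ P := by
  have hmax : P.IsMaximal := hP.isMaximal hPb
  have hne : Ideal.absNorm P ≠ 0 := by
    simp [Ideal.absNorm_eq_zero_iff, hPb]
  have hfin : Finite (𝓞 K ⧸ P) := (Ideal.absNorm_ne_zero_iff P).mp hne
  letI : Field (𝓞 K ⧸ P) := Ideal.Quotient.field P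
  letI : Fintype (𝓞 K ⧸ P) := Fintype.ofFinite _
  obtain ⟨n, hcp, hcard⟩ := FiniteField.card (𝓞 K ⧸ P) (ringChar (𝓞 K ⧸ P))
  have hcardeq : Ideal.absNorm P = Fintype.card (𝓞 K ⧸ P) := by
    rw [Ideal.absNorm_apply, Submodule.cardQuot_apply, Nat.card_eq_fintype_card]
  rw [hcardeq, hcard] at hd
  have heq : q = ringChar (𝓞 K ⧸ P) := by
    have h2 := hq.dvd_of_dvd_pow (n := (n:ℕ)) (by exact_mod_cast hd)
    exact ((Nat.prime_dvd_prime_iff_eq hq hcp).mp h2)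
  rw [← Ideal.Quotient.eq_zero_iff_mem, map_natCast, heq]
  exact ringChar.Nat.cast_ringChar

theorem aux_norm_of_not_inert (hdeg : Module.finrank ℚ K = 2)
    {P : Ideal (𝓞 K)} (hP : P.IsPrime) (hPb : P ≠ ⊥)
    {p : ℕ} (hp : p.Prime)
    (hni : ¬(Ideal.span {((p:ℕ) : 𝓞 K)} : Ideal (𝓞 K)).IsPrime)
    (hmem : ((p:ℕ) : 𝓞 K) ∈ P) : Ideal.absNorm P = p := by
  have hle : (Ideal.span {((p:ℕ) : 𝓞 K)} : Ideal (𝓞 K)) ≤ P :=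
    (Ideal.span_singleton_le_iff_mem _).mpr hmem
  have hdvd : P ∣ Ideal.span {((p:ℕ) : 𝓞 K)} := Ideal.dvd_iff_le.mpr hle
  obtain ⟨C, hC⟩ := hdvd
  have hnorm := congrArg Ideal.absNorm hC
  rw [aux_norm_nat_span hdeg, map_mul] at hnorm
  have hNP : Ideal.absNorm P ∣ p ^ 2 := ⟨_, hnorm⟩
  obtain ⟨k, hk2, hkeq⟩ := (Nat.dvd_prime_pow hp).mp hNP
  interval_cases k
  · exact absurd (Ideal.absNorm_eq_one_iff.mp (by simpa using hkeq)) hP.ne_top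
  · simpa using hkeq
  · exfalso
    rw [hkeq] at hnorm
    have hp2 : (0:ℕ) < p ^ 2 := pow_pos hp.pos 2
    have hC1 : Ideal.absNorm C = 1 :=
      (Nat.eq_of_mul_eq_mul_left hp2 (by linarith)).symm
    have hCt : C = ⊤ := Ideal.absNorm_eq_one_iff.mp hC1
    rw [hCt, Ideal.mul_top] at hC
    exact hni (hC ▸ hP)

theorem aux_inert_dvd {q : ℕ} (hq : q.Prime)
    (hin : (Ideal.span {((q:ℕ) : 𝓞 K)} : Ideal (𝓞 K)).IsPrime)
    {𝔠 : Ideal (𝓞 K)} (h𝔠 : 𝔠 ≠ ⊥) (hd : q ∣ Ideal.absNorm 𝔠) :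
    (Ideal.span {((q:ℕ) : 𝓞 K)} : Ideal (𝓞 K)) ∣ 𝔠 := by
  have hQb : (Ideal.span {((q:ℕ) : 𝓞 K)} : Ideal (𝓞 K)) ≠ ⊥ := by
    rw [Ne, Ideal.span_singleton_eq_bot]
    exact_mod_cast (Nat.cast_ne_zero (R := 𝓞 K)).mpr hq.ne_zero
  have hQmax := hin.isMaximal hQb
  generalize hn : Ideal.absNorm 𝔠 = n at hd
  induction n using Nat.strong_induction_on generalizing 𝔠 with
  | _ n ih =>
  rcases eq_or_ne 𝔠 ⊤ with rfl | hct
  · simp only [Ideal.absNorm_top] at hn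
    exact absurd (Nat.dvd_one.mp (hn ▸ hd)) hq.ne_one
  · obtain ⟨P, hPmax, hle⟩ := Ideal.exists_le_maximal 𝔠 hct
    have hPb : P ≠ ⊥ := fun h => h𝔠 (le_bot_iff.mp (h ▸ hle))
    obtain ⟨C, hC⟩ := Ideal.dvd_iff_le.mpr hle
    have hCb : C ≠ ⊥ := fun h => h𝔠 (by simp [hC, h])
    have hCn : Ideal.absNorm C ≠ 0 := by simp [Ideal.absNorm_eq_zero_iff, hCb]
    have hnn : n = Ideal.absNorm P * Ideal.absNorm C := by
      rw [← hn, hC, map_mul]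
    rcases (Nat.Prime.dvd_mul hq).mp (hnn ▸ hd) with h1 | h2
    · have hmem := aux_mem_of_dvd_absNorm hPmax.isPrime hPb hq h1
      have hQP : (Ideal.span {((q:ℕ) : 𝓞 K)} : Ideal (𝓞 K)) = P :=
        hQmax.eq_of_le hPmax.ne_top ((Ideal.span_singleton_le_iff_mem _).mpr hmem)
      exact hQP ▸ Ideal.dvd_iff_le.mpr hle
    · have hP1 : Ideal.absNorm P ≠ 1 := by
        simp [Ideal.absNorm_eq_one_iff, hPmax.ne_top]
      have hP0 : Ideal.absNorm P ≠ 0 := by simp [Ideal.absNorm_eq_zero_iff, hPb]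
      have hlt : Ideal.absNorm C < n := by
        rw [hnn]
        exact lt_mul_of_one_lt_left (Nat.pos_of_ne_zero hCn) (by omega)
      exact dvd_trans (ih _ hlt hCb rfl h2) ⟨P, by rw [hC, mul_comm]⟩

theorem aux_peel (hdeg : Module.finrank ℚ K = 2) {q : ℕ} (hq : q.Prime)
    (hin : (Ideal.span {((q:ℕ) : 𝓞 K)} : Ideal (𝓞 K)).IsPrime)
    {𝔞 : Ideal (𝓞 K)} (h𝔞 : 𝔞 ≠ ⊥) {e n : ℕ}
    (hn : Ideal.absNorm 𝔞 = q ^ e * n) (hqn : ¬ q ∣ n) :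
    Even e ∧ ∃ 𝔠 : Ideal (𝓞 K), 𝔠 ≠ ⊥ ∧ Ideal.absNorm 𝔠 = n ∧
      𝔞 = (Ideal.span {((q:ℕ) : 𝓞 K)} : Ideal (𝓞 K)) ^ (e / 2) * 𝔠 := by
  have hQb : (Ideal.span {((q:ℕ) : 𝓞 K)} : Ideal (𝓞 K)) ≠ ⊥ := by
    rw [Ne, Ideal.span_singleton_eq_bot]
    exact_mod_cast (Nat.cast_ne_zero (R := 𝓞 K)).mpr hq.ne_zero
  have hirr : Irreducible (Ideal.span {((q:ℕ) : 𝓞 K)} : Ideal (𝓞 K)) :=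
    (Ideal.prime_of_isPrime hQb hin).irreducible
  have h𝔞0 : 𝔞 ≠ 0 := by rwa [Ideal.zero_eq_bot]
  obtain ⟨k, 𝔠, hndvd, h𝔞eq⟩ := WfDvdMonoid.max_power_factor h𝔞0 hirr
  have h𝔠b : 𝔠 ≠ ⊥ := by
    rintro rfl
    exact h𝔞 (by simpa using h𝔞eq)
  have hnc : Ideal.absNorm 𝔞 = q ^ (2 * k) * Ideal.absNorm 𝔠 := by
    rw [h𝔞eq, map_mul, map_pow, aux_norm_nat_span hdeg, ← pow_mul, mul_comm 2 k, mul_comm k 2]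
  have hqnc : ¬ q ∣ Ideal.absNorm 𝔠 := fun h => hndvd (aux_inert_dvd hq hin h𝔠b h)
  have hn0 : n ≠ 0 := fun h => hqn (h ▸ dvd_zero q)
  have hc0 : Ideal.absNorm 𝔠 ≠ 0 := by simp [Ideal.absNorm_eq_zero_iff, h𝔠b]
  have hkey : e = 2 * k := by
    have h1 := congrArg (fun x => x.factorization q) (hn ▸ hnc)
    simpa [Nat.factorization_mul (pow_ne_zero _ hq.ne_zero) hn0,
      Nat.factorization_mul (pow_ne_zero _ hq.ne_zero) hc0,
      Nat.Prime.factorization_pow, hq, Nat.factorization_eq_zero_of_not_dvd hqn,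
      Nat.factorization_eq_zero_of_not_dvd hqnc] using h1
  have hneq : n = Ideal.absNorm 𝔠 := by
    have := hn ▸ hnc
    rw [hkey] at this
    exact Nat.eq_of_mul_eq_mul_left (pow_pos hq.pos _) this
  refine ⟨⟨k, by omega⟩, 𝔠, h𝔠b, hneq.symm, ?_⟩
  rw [h𝔞eq, hkey, Nat.mul_div_cancel_left k (by norm_num)]

theorem aux_split (hdeg : Module.finrank ℚ K = 2) :
    ∀ (r : ℕ) (p : Fin r → ℕ), (∀ i, (p i).Prime) →
    (∀ i, ¬(Ideal.span {((p i : ℕ) : 𝓞 K)} : Ideal (𝓞 K)).IsPrime) →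
    ∀ (𝔠 : Ideal (𝓞 K)), 𝔠 ≠ ⊥ → Ideal.absNorm 𝔠 = ∏ i, p i →
    ∃ 𝔭 : Fin r → Ideal (𝓞 K),
      (∀ i, (𝔭 i).IsPrime) ∧ (∀ i, Ideal.absNorm (𝔭 i) = p i) ∧ 𝔠 = ∏ i, 𝔭 i := by
  intro r
  induction r with
  | zero =>
    intro p hp hpni 𝔠 h𝔠 hnorm
    simp only [Finset.univ_eq_empty, Finset.prod_empty] at hnorm ⊢
    exact ⟨fun i => i.elim0, fun i => i.elim0, fun i => i.elim0,
      by rw [Ideal.absNorm_eq_one_iff.mp hnorm, Ideal.one_eq_top]⟩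
  | succ r ih =>
    intro p hp hpni 𝔠 h𝔠 hnorm
    have hct : 𝔠 ≠ ⊤ := by
      intro h
      rw [h, Ideal.absNorm_top] at hnorm
      have hd : p 0 ∣ ∏ i, p i := Finset.dvd_prod_of_mem p (Finset.mem_univ 0)
      rw [← hnorm] at hd
      exact (hp 0).ne_one (Nat.dvd_one.mp hd)
    obtain ⟨P, hPmax, hle⟩ := Ideal.exists_le_maximal 𝔠 hct
    have hPb : P ≠ ⊥ := fun h => h𝔠 (le_bot_iff.mp (h ▸ hle))
    obtain ⟨C, hC⟩ := Ideal.dvd_iff_le.mpr hle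
    have hCb : C ≠ ⊥ := fun h => h𝔠 (by simp [hC, h])
    have hNPdvd : Ideal.absNorm P ∣ ∏ i, p i := by
      rw [← hnorm]; exact Ideal.absNorm_dvd_absNorm_of_le hle
    have hNP1 : Ideal.absNorm P ≠ 1 := by
      simp [Ideal.absNorm_eq_one_iff, hPmax.ne_top]
    have hℓ : (Ideal.absNorm P).minFac.Prime := Nat.minFac_prime hNP1
    obtain ⟨i₀, _, hi₀⟩ := hℓ.prime.exists_mem_finset_dvd
      ((Nat.minFac_dvd _).trans hNPdvd)
    have hℓeq : (Ideal.absNorm P).minFac = p i₀ :=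
      (Nat.prime_dvd_prime_iff_eq hℓ (hp i₀)).mp hi₀
    have hmem : ((p i₀ : ℕ) : 𝓞 K) ∈ P :=
      hℓeq ▸ aux_mem_of_dvd_absNorm hPmax.isPrime hPb hℓ (Nat.minFac_dvd _)
    have hNP : Ideal.absNorm P = p i₀ :=
      aux_norm_of_not_inert hdeg hPmax.isPrime hPb (hp i₀) (hpni i₀) hmem
    have hNC : Ideal.absNorm C = ∏ i : Fin r, p (i₀.succAbove i) := by
      have h1 : (∏ i, p i) = p i₀ * Ideal.absNorm C := by
        rw [← hnorm, hC, map_mul, hNP]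
      rw [Fin.prod_univ_succAbove p i₀] at h1
      exact (Nat.eq_of_mul_eq_mul_left (hp i₀).pos h1.symm)
    obtain ⟨𝔭', h1', h2', h3'⟩ := ih (p ∘ i₀.succAbove) (fun i => hp _)
      (fun i => hpni _) C hCb hNC
    refine ⟨i₀.insertNth P 𝔭', ?_, ?_, ?_⟩
    · intro i
      refine Fin.succAboveCases i₀ ?_ ?_ i
      · rw [Fin.insertNth_apply_same]; exact hPmax.isPrime
      · intro j; rw [Fin.insertNth_apply_succAbove]; exact h1' j
    · intro i
      refine Fin.succAboveCases i₀ ?_ ?_ i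
      · rw [Fin.insertNth_apply_same]; exact hNP
      · intro j; rw [Fin.insertNth_apply_succAbove]; exact h2' j
    · rw [Fin.prod_univ_succAbove _ i₀, Fin.insertNth_apply_same, hC, h3']
      congr 1
      exact Finset.prod_congr rfl fun j _ => by rw [Fin.insertNth_apply_succAbove]

theorem aux_main (hdeg : Module.finrank ℚ K = 2) :
    ∀ (s : ℕ) (q e : Fin s → ℕ), (∀ j, (q j).Prime) → Function.Injective q →
    (∀ j, (Ideal.span {((q j : ℕ) : 𝓞 K)} : Ideal (𝓞 K)).IsPrime) →
    ∀ (r : ℕ) (p : Fin r → ℕ), (∀ i, (p i).Prime) →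
    (∀ i, ¬(Ideal.span {((p i : ℕ) : 𝓞 K)} : Ideal (𝓞 K)).IsPrime) →
    ∀ (𝔞 : Ideal (𝓞 K)), 𝔞 ≠ ⊥ →
    Ideal.absNorm 𝔞 = (∏ i, p i) * ∏ j, q j ^ e j →
    (∀ j, Even (e j)) ∧
      ∃ 𝔭 : Fin r → Ideal (𝓞 K),
        (∀ i, (𝔭 i).IsPrime) ∧ (∀ i, Ideal.absNorm (𝔭 i) = p i) ∧
        𝔞 = (∏ i, 𝔭 i) *
          ∏ j, (Ideal.span {((q j : ℕ) : 𝓞 K)} : Ideal (𝓞 K)) ^ (e j / 2) := by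
  intro s
  induction s with
  | zero =>
    intro q e hq hqinj hqinert r p hp hpni 𝔞 h𝔞 hnorm
    simp only [Finset.univ_eq_empty, Finset.prod_empty, mul_one] at hnorm ⊢
    obtain ⟨𝔭, h1, h2, h3⟩ := aux_split hdeg r p hp hpni 𝔞 h𝔞 hnorm
    exact ⟨fun j => j.elim0, 𝔭, h1, h2, h3⟩
  | succ s ih =>
    intro q e hq hqinj hqinert r p hp hpni 𝔞 h𝔞 hnorm
    set n : ℕ := (∏ i, p i) * ∏ j : Fin s, q (Fin.succ j) ^ e (Fin.succ j) with hn
    have hnorm' : Ideal.absNorm 𝔞 = q 0 ^ e 0 * n := by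
      rw [hnorm, Fin.prod_univ_succ (fun j => q j ^ e j), hn]; ring
    have hq0n : ¬ q 0 ∣ n := by
      intro hdvd
      rcases (Nat.Prime.dvd_mul (hq 0)).mp hdvd with h1 | h2
      · obtain ⟨i, _, hi⟩ := (hq 0).prime.exists_mem_finset_dvd h1
        have : q 0 = p i := (Nat.prime_dvd_prime_iff_eq (hq 0) (hp i)).mp hi
        exact hpni i (this ▸ hqinert 0)
      · obtain ⟨j, _, hj⟩ := (hq 0).prime.exists_mem_finset_dvd h2
        have hd2 : q 0 ∣ q (Fin.succ j) := (hq 0).dvd_of_dvd_pow hj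
        have : q 0 = q (Fin.succ j) :=
          (Nat.prime_dvd_prime_iff_eq (hq 0) (hq _)).mp hd2
        exact (Fin.succ_ne_zero j).symm (hqinj this)
    obtain ⟨heven0, 𝔠, h𝔠b, h𝔠n, h𝔞eq⟩ :=
      aux_peel hdeg (hq 0) (hqinert 0) h𝔞 hnorm' hq0n
    obtain ⟨heven', 𝔭, h1, h2, h3⟩ := ih (q ∘ Fin.succ) (e ∘ Fin.succ)
      (fun j => hq _) (fun a b hab => Fin.succ_injective s (hqinj hab))
      (fun j => hqinert _) r p hp hpni 𝔠 h𝔠b h𝔠n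
    refine ⟨fun j => ?_, 𝔭, h1, h2, ?_⟩
    · refine Fin.cases heven0 (fun j => heven' j) j
    · rw [h𝔞eq, h3,
        Fin.prod_univ_succ (fun j => (Ideal.span {((q j : ℕ) : 𝓞 K)} : Ideal (𝓞 K)) ^ (e j / 2))]
      simp only [Function.comp_apply]
      ring

end Aux

theorem norm_decomposition_OK (K : Type*) [Field K] [NumberField K]
    (hdeg : Module.finrank ℚ K = 2) (himag : IsEmpty (K →+* ℝ))
    (𝔞 : Ideal (𝓞 K)) (h𝔞 : 𝔞 ≠ ⊥)
    (m : ℕ) (hm : 0 < m)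
    (r s : ℕ) (p : Fin r → ℕ) (q : Fin s → ℕ) (e : Fin s → ℕ)
    (hp : ∀ i, (p i).Prime)
    (hpnotinert : ∀ i, ¬(Ideal.span {((p i : ℕ) : 𝓞 K)} : Ideal (𝓞 K)).IsPrime)
    (hq : ∀ j, (q j).Prime) (hqinj : Function.Injective q)
    (hqinert : ∀ j, (Ideal.span {((q j : ℕ) : 𝓞 K)} : Ideal (𝓞 K)).IsPrime)
    (he : ∀ j, 0 < e j)
    (hmfact : m = (∏ i, p i) * ∏ j, q j ^ e j) :
    Ideal.absNorm 𝔞 = m ↔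
      (∀ j, Even (e j)) ∧
      ∃ 𝔭 : Fin r → Ideal (𝓞 K),
        (∀ i, (𝔭 i).IsPrime) ∧ (∀ i, Ideal.absNorm (𝔭 i) = p i) ∧
        𝔞 = (∏ i, 𝔭 i) *
          ∏ j, (Ideal.span {((q j : ℕ) : 𝓞 K)} : Ideal (𝓞 K)) ^ (e j / 2) := by
  constructor
  · intro hnorm
    exact aux_main hdeg s q e hq hqinj hqinert r p hp hpnotinert 𝔞 h𝔞
      (hnorm.trans hmfact)
  · rintro ⟨heven, 𝔭, h1, h2, rfl⟩
    rw [hmfact, map_mul, map_prod, map_prod]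
    congr 1
    · exact Finset.prod_congr rfl fun i _ => h2 i
    · refine Finset.prod_congr rfl fun j _ => ?_
      rw [map_pow, aux_norm_nat_span hdeg, ← pow_mul]
      congr 1
      have := (heven j).two_dvd
      omega
end

section
/- Let O be the order of conductor f in an imaginary quadratic field K, let 𝔞 be a proper O-ideal, and let m be a positive integer relatively prime to f, written as m = p_1⋯p_r · q_1^{e_1}⋯q_s^{e_s}, where the p_i are (not necessarily distinct) primes coprime to f that are not inert in K (i.e., p_iO_K is not a prime ideal), the q_j are distinct primes coprime to f that are inert in K (i.e., q_jO_K is a prime ideal), r, s ≥ 0, and all e_j > 0. Then N(𝔞) = m if and only if all e_j are even and there exist prime ideals 𝔭_1, …, 𝔭_r of O with N(𝔭_i) = p_i such that 𝔞 = 𝔭_1⋯𝔭_r · (q_1O)^{e_1/2}⋯(q_sO)^{e_s/2}. -/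
set_option synthInstance.maxHeartbeats 1000000
set_option maxHeartbeats 1000000
set_option linter.unusedVariables false
set_option linter.unusedSectionVars false
open NumberField

/-- An order in the field `K`: a subring that is free of rank `2` as a `ℤ`-module. -/
def IsQuadraticOrder (K : Type*) [Field K] (O : Subring K) : Prop :=
  Module.Free ℤ O ∧ Module.finrank ℤ O = 2

/-- The conductor of an order `O` in `K`: the index `[𝒪_K : O]` of `O` in the
ring of integers (the integral closure of `ℤ` in `K`). -/
noncomputable def orderConductor (K : Type*) [Field K] (O : Subring K) : ℕ :=
  AddSubgroup.relIndex O.toAddSubgroup (integralClosure ℤ K).toSubring.toAddSubgroup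

/-- A proper ideal of an order `O` in `K`: a nonzero ideal whose multiplier ring
`{β ∈ K : β𝔞 ⊆ 𝔞}` is exactly `O`. -/
def IsProperIdeal {K : Type*} [Field K] (O : Subring K) (𝔞 : Ideal O) : Prop :=
  𝔞 ≠ ⊥ ∧ ∀ β : K, (∀ a ∈ 𝔞, ∃ c ∈ 𝔞, β * (a : K) = (c : K)) ↔ β ∈ O

lemma absNorm_le_eq {K : Type*} [Field K] [NumberField K] {I J : Ideal (𝓞 K)} (h : I ≤ J)
    (he : Ideal.absNorm I = Ideal.absNorm J) (h0 : Ideal.absNorm I ≠ 0) : I = J := by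
  obtain ⟨C, rfl⟩ := Ideal.dvd_iff_le.mpr h
  have hJ : Ideal.absNorm J ≠ 0 := fun hz => h0 (by rw [he, hz])
  have h2 : Ideal.absNorm J * Ideal.absNorm C = Ideal.absNorm J * 1 := by
    rw [← _root_.map_mul, he, mul_one]
  have h3 : Ideal.absNorm C = 1 := Nat.eq_of_mul_eq_mul_left (Nat.pos_of_ne_zero hJ) h2
  rw [Ideal.absNorm_eq_one_iff.mp h3, Ideal.mul_top]



section Oside
variable {K : Type*} [Field K] {O : Subring K}
variable (ι : O →+* 𝓞 K) (hι : ∀ x : O, ((ι x : 𝓞 K) : K) = (x : K))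
variable (f : ℕ) (hcond : ∀ y : 𝓞 K, ∃ z : O, ι z = (f : 𝓞 K) * y)

include hι in
lemma inc_inj : Function.Injective ι := by
  intro a b h
  have : ((a : O) : K) = b := by rw [← hι a, ← hι b, h]
  exact Subtype.ext this

include hcond in
lemma map_mem_fmul {I : Ideal O} {y : 𝓞 K} (hy : y ∈ Ideal.map ι I) :
    ∃ z ∈ I, ι z = (f : 𝓞 K) * y := by
  have hy' : y ∈ Submodule.span (𝓞 K) (⇑ι '' (I : Set O)) := hy
  rw [Submodule.mem_span_set'] at hy'
  obtain ⟨n, c, g, hsum⟩ := hy'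
  choose d hd using fun i => hcond (c i)
  choose a ha hag using fun (i : Fin n) => (g i).2
  refine ⟨∑ i, d i * a i, Ideal.sum_mem _ fun i _ => I.mul_mem_left _ (ha i), ?_⟩
  rw [map_sum, ← hsum, Finset.mul_sum]
  refine Finset.sum_congr rfl fun i _ => ?_
  rw [map_mul, hd i, hag i, smul_eq_mul, mul_assoc]

include hι hcond in
lemma contract_eq {I : Ideal O} (hI : I ⊔ Ideal.span {((f : ℕ) : O)} = ⊤) :
    Ideal.comap ι (Ideal.map ι I) = I := by
  refine le_antisymm ?_ Ideal.le_comap_map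
  intro x hx
  rw [Ideal.mem_comap] at hx
  obtain ⟨z, hzI, hz⟩ := map_mem_fmul ι f hcond hx
  have hfx : ((f : ℕ) : O) * x ∈ I := by
    have h2 : ι (((f : ℕ) : O) * x) = ι z := by rw [map_mul, map_natCast, hz]
    rwa [inc_inj ι hι h2]
  have h1 : (1 : O) ∈ I ⊔ Ideal.span {((f : ℕ) : O)} := by rw [hI]; trivial
  obtain ⟨a, haI, b, hb, hab⟩ := Submodule.mem_sup.mp h1
  obtain ⟨c, rfl⟩ := Ideal.mem_span_singleton'.mp hb
  have : x = x * a + c * (((f : ℕ) : O) * x) := by linear_combination x * hab.symm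
  rw [this]
  exact I.add_mem (I.mul_mem_left _ haI) (I.mul_mem_left _ hfx)

include hι hcond in
lemma quot_surj {𝔅 : Ideal (𝓞 K)} {n : ℕ} (hn : ((n : ℕ) : 𝓞 K) ∈ 𝔅) (hnf : n.Coprime f) :
    Function.Surjective ((Ideal.Quotient.mk 𝔅).comp ι) := by
  intro yq
  obtain ⟨y, rfl⟩ := Ideal.Quotient.mk_surjective yq
  obtain ⟨A, B, hAB⟩ : ∃ A B : ℤ, (n : ℤ) * A + (f : ℤ) * B = 1 := by
    refine ⟨Nat.gcdA n f, Nat.gcdB n f, ?_⟩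
    have := Nat.gcd_eq_gcd_ab n f
    rw [hnf] at this
    push_cast at this ⊢
    linarith
  obtain ⟨z, hz⟩ := hcond ((B : 𝓞 K) * y)
  refine ⟨z, ?_⟩
  have hAB' : (n : 𝓞 K) * (A : 𝓞 K) + (f : 𝓞 K) * (B : 𝓞 K) = 1 := by
    have := congrArg (fun t : ℤ => (t : 𝓞 K)) hAB
    push_cast at this
    exact this
  have key : (ι z : 𝓞 K) - y = -((n : 𝓞 K) * ((A : 𝓞 K) * y)) := by
    rw [hz]; linear_combination y * hAB'
  have hmem : (ι z : 𝓞 K) - y ∈ 𝔅 := by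
    rw [key]
    exact 𝔅.neg_mem (𝔅.mul_mem_right _ (by exact_mod_cast hn))
  exact Ideal.Quotient.eq.mpr hmem

end Oside

lemma card_smul_mem' {R : Type*} [CommRing R] (I : Ideal R) :
    ((Nat.card (R ⧸ I) : ℕ) : R) ∈ I := by
  have h : ((Nat.card (R ⧸ I) : ℕ) : R ⧸ I) = 0 := by
    have h2 := card_nsmul_eq_zero' (x := (1 : R ⧸ I))
    simpa [nsmul_eq_mul] using h2
  rwa [← map_natCast (Ideal.Quotient.mk I), Ideal.Quotient.eq_zero_iff_mem] at h

section Oside2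
variable {K : Type*} [Field K] {O : Subring K}
variable (ι : O →+* 𝓞 K) (hι : ∀ x : O, ((ι x : 𝓞 K) : K) = (x : K))
variable (f : ℕ) (hcond : ∀ y : 𝓞 K, ∃ z : O, ι z = (f : 𝓞 K) * y)

include hι hcond in
lemma quot_card {𝔅 : Ideal (𝓞 K)} {n : ℕ} (hn : ((n : ℕ) : 𝓞 K) ∈ 𝔅) (hnf : n.Coprime f) :
    Nat.card (O ⧸ Ideal.comap ι 𝔅) = Nat.card (𝓞 K ⧸ 𝔅) := by
  have hker : RingHom.ker ((Ideal.Quotient.mk 𝔅).comp ι) = Ideal.comap ι 𝔅 := by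
    rw [← RingHom.comap_ker, Ideal.mk_ker]
  have e := RingHom.quotientKerEquivOfSurjective (quot_surj ι hι f hcond hn hnf)
  have e := (Ideal.quotEquivOfEq hker.symm).trans e
  exact Nat.card_congr e.toEquiv

omit hι hcond in
lemma prime_to_f {I : Ideal O} {n : ℕ} (hn : ((n : ℕ) : O) ∈ I) (hnf : n.Coprime f) :
    I ⊔ Ideal.span {((f : ℕ) : O)} = ⊤ := by
  rw [Ideal.eq_top_iff_one]
  obtain ⟨A, B, hAB⟩ : ∃ A B : ℤ, (n : ℤ) * A + (f : ℤ) * B = 1 := by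
    refine ⟨Nat.gcdA n f, Nat.gcdB n f, ?_⟩
    have h3 := Nat.gcd_eq_gcd_ab n f
    rw [hnf] at h3
    push_cast at h3 ⊢
    linarith
  have h1 : (1 : O) = (A : O) * ((n : ℕ) : O) + (B : O) * ((f : ℕ) : O) := by
    have := congrArg (fun t : ℤ => (t : O)) hAB
    push_cast at this
    linear_combination -this
  rw [h1]
  exact Submodule.add_mem_sup (I.mul_mem_left _ hn)
    (Ideal.mul_mem_left _ _ (Ideal.subset_span rfl))

include hι hcond in
lemma card_eq_absNorm_map [NumberField K] {I : Ideal O} {n : ℕ} (hn : ((n : ℕ) : O) ∈ I)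
    (hnf : n.Coprime f) :
    Nat.card (O ⧸ I) = Ideal.absNorm (Ideal.map ι I) := by
  have h1 : Ideal.comap ι (Ideal.map ι I) = I :=
    contract_eq ι hι f hcond (prime_to_f f hn hnf)
  have hn' : ((n : ℕ) : 𝓞 K) ∈ Ideal.map ι I := by
    rw [← map_natCast ι]; exact Ideal.mem_map_of_mem ι hn
  have h2 := quot_card ι hι f hcond hn' hnf
  rw [h1] at h2
  rw [h2, Ideal.absNorm_apply, Submodule.cardQuot_apply]


include hι hcond in
lemma map_comap_eq [NumberField K] {𝔅 : Ideal (𝓞 K)} (hb : 𝔅 ≠ ⊥)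
    (hnf : (Ideal.absNorm 𝔅).Coprime f) : Ideal.map ι (Ideal.comap ι 𝔅) = 𝔅 := by
  set n := Ideal.absNorm 𝔅 with hn
  have hn𝔅 : ((n : ℕ) : 𝓞 K) ∈ 𝔅 := Ideal.absNorm_mem 𝔅
  have hnO : ((n : ℕ) : O) ∈ Ideal.comap ι 𝔅 := by
    rw [Ideal.mem_comap, map_natCast]; exact hn𝔅
  have h2 : Nat.card (O ⧸ Ideal.comap ι 𝔅) = n := by
    rw [quot_card ι hι f hcond hn𝔅 hnf, hn, Ideal.absNorm_apply, Submodule.cardQuot_apply]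
  have h3 : Ideal.absNorm (Ideal.map ι (Ideal.comap ι 𝔅)) = n := by
    rw [← card_eq_absNorm_map ι hι f hcond hnO hnf, h2]
  refine absNorm_le_eq Ideal.map_comap_le ?_ ?_
  · rw [h3]
  · rw [h3]; exact fun hz => hb (Ideal.absNorm_eq_zero_iff.mp (hn ▸ hz))

end Oside2




section OKside
variable {K : Type*} [Field K] [NumberField K] (hdeg : Module.finrank ℚ K = 2)

include hdeg in
lemma absNorm_span_natCast (n : ℕ) :
    Ideal.absNorm (Ideal.span {((n : ℕ) : 𝓞 K)}) = n ^ 2 := by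
  have hrk : Module.finrank ℤ (𝓞 K) = 2 := by rw [RingOfIntegers.rank]; exact hdeg
  have hb := Module.Free.chooseBasis ℤ (𝓞 K)
  have hcard : Fintype.card (Module.Free.ChooseBasisIndex ℤ (𝓞 K)) = 2 := by
    rw [Module.finrank_eq_card_chooseBasisIndex ℤ (𝓞 K)] at hrk; exact hrk
  have h1 : ((n : ℕ) : 𝓞 K) = algebraMap ℤ (𝓞 K) (n : ℤ) := by push_cast; rfl
  rw [Ideal.absNorm_span_singleton, h1, Algebra.norm_algebraMap_of_basis hb, hcard]
  simp [Int.natAbs_pow]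

lemma exists_prime_dvd_mem {R : Type*} [CommRing R] {P : Ideal R} (hP : P.IsPrime)
    (hne : P ≠ ⊤) : ∀ n : ℕ, n ≠ 0 → ((n : ℕ) : R) ∈ P →
    ∃ ℓ : ℕ, ℓ.Prime ∧ ℓ ∣ n ∧ ((ℓ : ℕ) : R) ∈ P := by
  intro n
  induction n using Nat.strong_induction_on with
  | _ n ih =>
    intro hn0 hmem
    rcases eq_or_ne n 1 with rfl | hn1
    · exact absurd ((Ideal.eq_top_iff_one P).mpr (by exact_mod_cast hmem)) hne
    by_cases hprime : n.Prime
    · exact ⟨n, hprime, dvd_rfl, hmem⟩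
    · obtain ⟨a, ha, ha2, halt⟩ := Nat.exists_dvd_of_not_prime2 (by omega) hprime
      obtain ⟨b, rfl⟩ := ha
      have hb0 : b ≠ 0 := by rintro rfl; simp at hn0
      have hblt : b < a * b := by nlinarith [Nat.pos_of_ne_zero hb0, ha2]
      have hcast : ((a : ℕ) : R) * ((b : ℕ) : R) ∈ P := by push_cast at hmem ⊢; exact hmem
      rcases hP.mem_or_mem hcast with h | h
      · obtain ⟨ℓ, h1, h2, h3⟩ := ih a halt (by omega) h
        exact ⟨ℓ, h1, h2.mul_right b, h3⟩
      · obtain ⟨ℓ, h1, h2, h3⟩ := ih b hblt hb0 h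
        exact ⟨ℓ, h1, h2.mul_left a, h3⟩

include hdeg in
lemma norm_eq_of_not_inert {ℓ : ℕ} (hℓ : ℓ.Prime)
    (hni : ¬(Ideal.span {((ℓ : ℕ) : 𝓞 K)} : Ideal (𝓞 K)).IsPrime)
    {P : Ideal (𝓞 K)} (hP : P.IsPrime) (hbot : P ≠ ⊥) (hmem : ((ℓ : ℕ) : 𝓞 K) ∈ P) :
    Ideal.absNorm P = ℓ := by
  have hle : Ideal.span {((ℓ : ℕ) : 𝓞 K)} ≤ P := by
    rw [Ideal.span_le, Set.singleton_subset_iff]; exact hmem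
  have hdvd : Ideal.absNorm P ∣ ℓ ^ 2 := by
    rw [← absNorm_span_natCast hdeg]
    exact Ideal.absNorm_dvd_absNorm_of_le hle
  obtain ⟨k, hk2, hkeq⟩ := (Nat.dvd_prime_pow hℓ).mp hdvd
  interval_cases k
  · rw [pow_zero] at hkeq
    exact absurd (Ideal.absNorm_eq_one_iff.mp hkeq) hP.ne_top
  · rw [pow_one] at hkeq; exact hkeq
  · exfalso
    have heq : Ideal.span {((ℓ : ℕ) : 𝓞 K)} = P := by
      refine absNorm_le_eq hle ?_ ?_
      · rw [absNorm_span_natCast hdeg, hkeq]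
      · rw [absNorm_span_natCast hdeg]
        exact pow_ne_zero 2 hℓ.ne_zero
    exact hni (heq ▸ hP)

end OKside

section MultisetHelpers
variable {ι' β γ : Type*}

lemma sum_replicate_prod [CommMonoid β] (s : Finset ι') (n : ι' → ℕ) (a : ι' → β) :
    (∑ j ∈ s, Multiset.replicate (n j) (a j)).prod = ∏ j ∈ s, a j ^ n j := by
  classical
  induction s using Finset.induction_on with
  | empty => simp
  | insert _ _ hx ih =>
    rw [Finset.sum_insert hx, Finset.prod_insert hx, Multiset.prod_add, ih,
      Multiset.prod_replicate]

lemma sum_replicate_map [CommMonoid β] (g : β → γ) (s : Finset ι') (n : ι' → ℕ) (a : ι' → β) :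
    (∑ j ∈ s, Multiset.replicate (n j) (a j)).map g
      = ∑ j ∈ s, Multiset.replicate (n j) (g (a j)) := by
  classical
  induction s using Finset.induction_on with
  | empty => simp
  | insert _ _ hx ih =>
    rw [Finset.sum_insert hx, Finset.sum_insert hx, Multiset.map_add, ih, Multiset.map_replicate]

lemma coprime_multiset_prod (k : ℕ) (M : Multiset ℕ) (h : ∀ x ∈ M, Nat.Coprime k x) :
    Nat.Coprime k M.prod := by
  induction M using Multiset.induction_on with
  | empty => simp [Nat.coprime_one_right]
  | cons a M ih =>
    rw [Multiset.prod_cons]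
    exact Nat.Coprime.mul_right (h a (Multiset.mem_cons_self a M))
      (ih fun x hx => h x (Multiset.mem_cons_of_mem hx))

lemma multiset_matching [CommMonoid β] (N : β → γ) :
    ∀ (r : ℕ) (p : Fin r → γ) (F : Multiset β),
      F.map N = Multiset.map p Finset.univ.val →
      ∃ Q : Fin r → β, (∀ i, Q i ∈ F) ∧ (∀ i, N (Q i) = p i) ∧ F.prod = ∏ i, Q i := by
  intro r
  induction r with
  | zero =>
    intro p F h
    simp only [Finset.univ_eq_empty, Finset.empty_val, Multiset.map_zero] at h
    rw [Multiset.map_eq_zero] at h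
    subst h
    exact ⟨fun i => i.elim0, fun i => i.elim0, fun i => i.elim0, by simp⟩
  | succ r ih =>
    intro p F h
    have huniv : Multiset.map p Finset.univ.val
        = p 0 ::ₘ Multiset.map (p ∘ Fin.succ) Finset.univ.val := by
      rw [Fin.univ_val_map, Fin.univ_val_map, List.ofFn_succ]
      rfl
    have hp0 : p 0 ∈ F.map N := by rw [h, huniv]; exact Multiset.mem_cons_self _ _
    obtain ⟨P, hPF, hNP⟩ := Multiset.mem_map.mp hp0
    obtain ⟨F₂, rfl⟩ := Multiset.exists_cons_of_mem hPF
    rw [Multiset.map_cons, huniv, hNP] at h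
    have h2 : F₂.map N = Multiset.map (p ∘ Fin.succ) Finset.univ.val :=
      (Multiset.cons_inj_right _).mp h
    obtain ⟨Q', hQ'mem, hQ'N, hQ'prod⟩ := ih (p ∘ Fin.succ) F₂ h2
    refine ⟨Fin.cases P Q', ?_, ?_, ?_⟩
    · intro i
      refine Fin.cases ?_ ?_ i
      · exact Multiset.mem_cons_self _ _
      · intro j; exact Multiset.mem_cons_of_mem (hQ'mem j)
    · intro i
      refine Fin.cases ?_ ?_ i
      · simpa using hNP
      · intro j; simpa using hQ'N j
    · rw [Multiset.prod_cons, hQ'prod, Fin.prod_univ_succ]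
      simp

end MultisetHelpers

section Main
variable {K : Type*} [Field K] [NumberField K]

theorem ok_forward (hdeg : Module.finrank ℚ K = 2)
    {r s : ℕ} {p : Fin r → ℕ} {q : Fin s → ℕ} {e : Fin s → ℕ}
    (hp : ∀ i, (p i).Prime)
    (hpnotinert : ∀ i, ¬(Ideal.span {((p i : ℕ) : 𝓞 K)} : Ideal (𝓞 K)).IsPrime)
    (hq : ∀ j, (q j).Prime)
    (hqinj : Function.Injective q)
    (hqinert : ∀ j, (Ideal.span {((q j : ℕ) : 𝓞 K)} : Ideal (𝓞 K)).IsPrime)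
    (𝔟 : Ideal (𝓞 K))
    (hN : Ideal.absNorm 𝔟 = (∏ i, p i) * ∏ j, q j ^ e j) :
    (∀ j, Even (e j)) ∧
    ∃ 𝔔 : Fin r → Ideal (𝓞 K), (∀ i, (𝔔 i).IsPrime) ∧ (∀ i, Ideal.absNorm (𝔔 i) = p i) ∧
      𝔟 = (∏ i, 𝔔 i) * ∏ j, (Ideal.span {((q j : ℕ) : 𝓞 K)} : Ideal (𝓞 K)) ^ (e j / 2) := by
  classical
  set A := ∏ i, p i with hA
  set B := ∏ j, q j ^ e j with hB
  have hA0 : A ≠ 0 := Finset.prod_ne_zero_iff.mpr fun i _ => (hp i).ne_zero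
  have hB0 : B ≠ 0 := Finset.prod_ne_zero_iff.mpr fun j _ => pow_ne_zero _ (hq j).ne_zero
  have hm0 : A * B ≠ 0 := mul_ne_zero hA0 hB0
  have hbot : 𝔟 ≠ ⊥ := by
    intro hb; rw [hb, Ideal.absNorm_bot] at hN; exact hm0 hN.symm
  have hqp : ∀ j i, q j ≠ p i := fun j i hji => hpnotinert i (hji ▸ hqinert j)
  set F := UniqueFactorizationMonoid.normalizedFactors 𝔟 with hF
  have hFprod : F.prod = 𝔟 :=
    associated_iff_eq.mp (UniqueFactorizationMonoid.prod_normalizedFactors hbot)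
  have hFprime : ∀ P ∈ F, Prime P := fun P hP =>
    UniqueFactorizationMonoid.prime_of_normalized_factor P hP
  set Q : Fin s → Ideal (𝓞 K) := fun j => Ideal.span {((q j : ℕ) : 𝓞 K)} with hQdef
  have hQn : ∀ j, Ideal.absNorm (Q j) = q j ^ 2 := fun j => absNorm_span_natCast hdeg (q j)
  have hQbot : ∀ j, Q j ≠ ⊥ := by
    intro j hz
    have h1 := hQn j; rw [hz, Ideal.absNorm_bot] at h1
    exact (pow_ne_zero 2 (hq j).ne_zero) h1.symm
  have hQinj : Function.Injective Q := by
    intro j k hjk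
    have h1 : q j ^ 2 = q k ^ 2 := by rw [← hQn j, ← hQn k, hjk]
    exact hqinj (Nat.pow_left_injective two_ne_zero h1)
  set v : Fin s → ℕ := fun j => F.count (Q j) with hv
  set G : Multiset (Ideal (𝓞 K)) := ∑ j, Multiset.replicate (v j) (Q j) with hG
  have hcountG : ∀ x, G.count x = ∑ j, (if Q j = x then v j else 0) := by
    intro x
    rw [hG, Multiset.count_sum']
    exact Finset.sum_congr rfl fun j _ => Multiset.count_replicate _ _ _
  have hGcount : ∀ j, G.count (Q j) = v j := by
    intro j
    rw [hcountG]
    rw [Finset.sum_eq_single j (fun k _ hkj => if_neg fun h => hkj (hQinj h))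
      (fun h => absurd (Finset.mem_univ j) h)]
    exact if_pos rfl
  have hGle : G ≤ F := by
    rw [Multiset.le_iff_count]
    intro x
    rw [hcountG]
    by_cases hx : ∃ j, Q j = x
    · obtain ⟨j, rfl⟩ := hx
      rw [Finset.sum_eq_single j (fun k _ hkj => if_neg fun h => hkj (hQinj h))
        (fun h => absurd (Finset.mem_univ j) h), if_pos rfl]
    · push_neg at hx
      rw [Finset.sum_eq_zero fun k _ => if_neg (hx k)]
      exact Nat.zero_le _
  set F' := F - G with hF'
  have hFsplit : F' + G = F := tsub_add_cancel_of_le hGle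
  have hcount0 : ∀ j, F'.count (Q j) = 0 := by
    intro j
    rw [hF', Multiset.count_sub, hGcount j, hv]
    simp
  have hmem' : ∀ P ∈ F', P ∈ F := fun P h => Multiset.mem_of_le (Multiset.sub_le_self _ _) h
  have classify : ∀ P ∈ F', ∃ i, Ideal.absNorm P = p i := by
    intro P hPF'
    have hPF : P ∈ F := hmem' P hPF'
    have hPprime : Prime P := hFprime P hPF
    have hPisp : P.IsPrime := Ideal.isPrime_of_prime hPprime
    have hPbot : P ≠ ⊥ := by simpa [Ideal.zero_eq_bot] using hPprime.ne_zero
    have hPdvd : P ∣ 𝔟 := hFprod ▸ Multiset.dvd_prod hPF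
    have hble : 𝔟 ≤ P := Ideal.le_of_dvd hPdvd
    have hNdvd : Ideal.absNorm P ∣ A * B := hN ▸ Ideal.absNorm_dvd_absNorm_of_le hble
    have hNP0 : Ideal.absNorm P ≠ 0 := by rw [Ne, Ideal.absNorm_eq_zero_iff]; exact hPbot
    obtain ⟨ℓ, hℓp, hℓdvd, hℓmem⟩ := exists_prime_dvd_mem hPisp hPisp.ne_top
      (Ideal.absNorm P) hNP0 (Ideal.absNorm_mem P)
    have hℓm : ℓ ∣ A * B := hℓdvd.trans hNdvd
    have hcases : (∃ i, ℓ = p i) ∨ (∃ j, ℓ = q j) := by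
      rcases (Nat.Prime.dvd_mul hℓp).mp hℓm with h | h
      · left
        obtain ⟨i, _, hi⟩ := (hℓp.prime.dvd_finset_prod_iff _).mp h
        exact ⟨i, (Nat.prime_dvd_prime_iff_eq hℓp (hp i)).mp hi⟩
      · right
        obtain ⟨j, _, hj⟩ := (hℓp.prime.dvd_finset_prod_iff _).mp h
        exact ⟨j, (Nat.prime_dvd_prime_iff_eq hℓp (hq j)).mp (hℓp.dvd_of_dvd_pow hj)⟩
    rcases hcases with ⟨i, rfl⟩ | ⟨j, rfl⟩
    · exact ⟨i, norm_eq_of_not_inert hdeg hℓp (hpnotinert i) hPisp hPbot hℓmem⟩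
    · exfalso
      have hle2 : Q j ≤ P := by
        rw [hQdef]
        simp only
        rw [Ideal.span_le, Set.singleton_subset_iff]
        exact hℓmem
      have hmax : (Q j).IsMaximal := Ideal.IsPrime.isMaximal (hqinert j) (hQbot j)
      have heq : Q j = P := hmax.eq_of_le hPisp.ne_top hle2
      have hcnt : F'.count (Q j) ≠ 0 := by
        rw [heq]
        exact Multiset.count_ne_zero.mpr hPF'
      exact hcnt (hcount0 j)
  set X := (F'.map Ideal.absNorm).prod with hX
  have hm2 : A * B = X * ∏ j, q j ^ (2 * v j) := by
    have h1 : A * B = (F.map Ideal.absNorm).prod := by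
      rw [← hN, ← hFprod, map_multiset_prod]
    rw [h1, ← hFsplit, Multiset.map_add, Multiset.prod_add, hG, sum_replicate_map,
      sum_replicate_prod]
    congr 1
    refine Finset.prod_congr rfl fun j _ => ?_
    rw [hQn j, ← pow_mul]
  have hXp : ∀ x ∈ F'.map Ideal.absNorm, ∃ i, x = p i := by
    intro x hx
    obtain ⟨P, hPF', rfl⟩ := Multiset.mem_map.mp hx
    exact classify P hPF'
  have heven : ∀ j, e j = 2 * v j := by
    intro j
    have hfact : ∀ (E : Fin s → ℕ), (∏ k, q k ^ E k).factorization (q j) = E j := by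
      intro E
      rw [Nat.factorization_prod (fun k _ => pow_ne_zero _ (hq k).ne_zero)]
      rw [Finsupp.finset_sum_apply]
      rw [Finset.sum_eq_single j (fun k _ hkj => by
          rw [(hq k).factorization_pow, Finsupp.single_apply,
            if_neg fun h => hkj (hqinj h)])
        (fun h => absurd (Finset.mem_univ j) h)]
      rw [(hq j).factorization_pow, Finsupp.single_apply, if_pos rfl]
    have hXcop : Nat.Coprime (q j) X :=
      coprime_multiset_prod _ _ fun x hx => by
        obtain ⟨i, rfl⟩ := hXp x hx
        exact (Nat.coprime_primes (hq j) (hp i)).mpr (hqp j i)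
    have hAcop : Nat.Coprime (q j) A :=
      Nat.Coprime.prod_right fun i _ => (Nat.coprime_primes (hq j) (hp i)).mpr (hqp j i)
    have hX0 : X ≠ 0 := by
      intro h0
      rw [h0, zero_mul] at hm2
      exact hm0 hm2
    have hD0 : (∏ k, q k ^ (2 * v k)) ≠ 0 :=
      Finset.prod_ne_zero_iff.mpr fun k _ => pow_ne_zero _ (hq k).ne_zero
    have h2 : (A * B).factorization (q j) = e j := by
      rw [Nat.factorization_mul hA0 hB0, Finsupp.add_apply,
        Nat.factorization_eq_zero_of_not_dvd ((Nat.Prime.coprime_iff_not_dvd (hq j)).mp hAcop),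
        hB, hfact e, zero_add]
    have h3 : (A * B).factorization (q j) = 2 * v j := by
      rw [hm2, Nat.factorization_mul hX0 hD0, Finsupp.add_apply,
        Nat.factorization_eq_zero_of_not_dvd ((Nat.Prime.coprime_iff_not_dvd (hq j)).mp hXcop),
        hfact (fun k => 2 * v k), zero_add]
    omega
  have hBD : B = ∏ j, q j ^ (2 * v j) := Finset.prod_congr rfl fun j _ => by rw [← heven j]
  have hXA : X = A := by
    have h4 : X * B = A * B := by rw [hm2, hBD]
    exact Nat.eq_of_mul_eq_mul_right (Nat.pos_of_ne_zero hB0) h4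
  have hmapeq : F'.map Ideal.absNorm = Multiset.map p Finset.univ.val := by
    have hprime1 : ∀ x ∈ F'.map Ideal.absNorm, Irreducible x := by
      intro x hx; obtain ⟨i, rfl⟩ := hXp x hx; exact hp i
    have hprime2 : ∀ x ∈ Multiset.map p Finset.univ.val, Irreducible x := by
      intro x hx
      obtain ⟨i, _, rfl⟩ := Multiset.mem_map.mp hx
      exact hp i
    have hassoc : Associated (F'.map Ideal.absNorm).prod (Multiset.map p Finset.univ.val).prod := by
      rw [← hX, hXA, hA, Finset.prod_eq_multiset_prod]
    have hrel := UniqueFactorizationMonoid.factors_unique hprime1 hprime2 hassoc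
    exact Multiset.rel_eq.mp (hrel.mono fun a _ b _ h => associated_iff_eq.mp h)
  obtain ⟨𝔔, h𝔔F', h𝔔N, h𝔔prod⟩ := multiset_matching Ideal.absNorm r p F' hmapeq
  refine ⟨fun j => ⟨v j, by have := heven j; omega⟩, 𝔔, ?_, h𝔔N, ?_⟩
  · exact fun i => Ideal.isPrime_of_prime (hFprime _ (hmem' _ (h𝔔F' i)))
  · rw [← hFprod, ← hFsplit, Multiset.prod_add, h𝔔prod, hG, sum_replicate_prod]
    congr 1
    refine Finset.prod_congr rfl fun j _ => ?_
    have := heven j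
    have hv2 : e j / 2 = v j := by omega
    rw [hv2]

end Main
section FinalHelpers

/-- Inclusion of an order into the ring of integers. -/
def incMap {K : Type*} [Field K] (O : Subring K) (h : ∀ x : O, IsIntegral ℤ (x : K)) :
    O →+* 𝓞 K where
  toFun x := ⟨(x : K), h x⟩
  map_one' := by ext; rfl
  map_mul' x y := by ext; rfl
  map_zero' := by ext; rfl
  map_add' x y := by ext; rfl

lemma map_finset_prod' {R S γ : Type*} [CommRing R] [CommRing S] (ι : R →+* S)
    (s : Finset γ) (I : γ → Ideal R) :
    Ideal.map ι (∏ i ∈ s, I i) = ∏ i ∈ s, Ideal.map ι (I i) := by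
  classical
  induction s using Finset.induction_on with
  | empty => simp [Ideal.map_top]
  | insert _ _ hx ih => rw [Finset.prod_insert hx, Finset.prod_insert hx, Ideal.map_mul, ih]

end FinalHelpers

theorem norm_decomposition_order_coprime_case
    (K : Type*) [Field K] [NumberField K]
    (hdeg : Module.finrank ℚ K = 2) (himag : IsEmpty (K →+* ℝ))
    (O : Subring K) (hO : IsQuadraticOrder K O)
    (f : ℕ) (hf : orderConductor K O = f)
    (𝔞 : Ideal O) (h𝔞 : IsProperIdeal O 𝔞)
    (m : ℕ) (hm : 0 < m) (hmf : Nat.Coprime m f)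
    (r s : ℕ) (p : Fin r → ℕ) (q : Fin s → ℕ) (e : Fin s → ℕ)
    (hp : ∀ i, (p i).Prime) (hpf : ∀ i, Nat.Coprime (p i) f)
    (hpnotinert : ∀ i, ¬(Ideal.span {((p i : ℕ) : 𝓞 K)} : Ideal (𝓞 K)).IsPrime)
    (hq : ∀ j, (q j).Prime) (hqf : ∀ j, Nat.Coprime (q j) f)
    (hqinj : Function.Injective q)
    (hqinert : ∀ j, (Ideal.span {((q j : ℕ) : 𝓞 K)} : Ideal (𝓞 K)).IsPrime)
    (he : ∀ j, 0 < e j)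
    (hmfact : m = (∏ i, p i) * ∏ j, q j ^ e j) :
    Nat.card (↥O ⧸ 𝔞) = m ↔
      (∀ j, Even (e j)) ∧
      ∃ 𝔭 : Fin r → Ideal O,
        (∀ i, (𝔭 i).IsPrime) ∧ (∀ i, Nat.card (↥O ⧸ 𝔭 i) = p i) ∧
        𝔞 = (∏ i, 𝔭 i) *
          ∏ j, (Ideal.span {((q j : ℕ) : O)} : Ideal O) ^ (e j / 2) := by
  classical
  obtain ⟨hfree, hrank⟩ := hO
  have hfin : Module.Finite ℤ O := Module.finite_of_finrank_pos (by omega)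
  have hint : ∀ x : O, IsIntegral ℤ (x : K) := fun x =>
    IsIntegral.map (O.subtype.toIntAlgHom) (Algebra.IsIntegral.isIntegral x)
  set ι : O →+* 𝓞 K := incMap O hint with hιdef
  have hι : ∀ x : O, ((ι x : 𝓞 K) : K) = (x : K) := fun x => rfl
  -- the conductor property
  have hcond : ∀ y : 𝓞 K, ∃ z : O, ι z = (f : 𝓞 K) * y := by
    intro y
    set T := (integralClosure ℤ K).toSubring.toAddSubgroup with hT
    have hyT : (y : K) ∈ T := y.2
    set H := O.toAddSubgroup.addSubgroupOf T with hH
    have hidx : Nat.card (T ⧸ H) = f := hf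
    have key : f • ((QuotientAddGroup.mk ⟨(y : K), hyT⟩ : T ⧸ H)) = 0 := by
      rw [← hidx]; exact card_nsmul_eq_zero'
    rw [← QuotientAddGroup.mk_nsmul, QuotientAddGroup.eq_zero_iff] at key
    have hmem : ((f • (⟨(y : K), hyT⟩ : T) : T) : K) ∈ O := key
    refine ⟨⟨(f : K) * y, by simpa [nsmul_eq_mul] using hmem⟩, ?_⟩
    ext
    push_cast
    rfl
  constructor
  · -- forward direction
    intro hcard
    have hmem : ((m : ℕ) : O) ∈ 𝔞 := hcard ▸ card_smul_mem' 𝔞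
    have habs : Ideal.absNorm (Ideal.map ι 𝔞) = m :=
      (card_eq_absNorm_map ι hι f hcond hmem hmf).symm.trans hcard
    obtain ⟨heven, 𝔔, h1, h2, h3⟩ := ok_forward hdeg hp hpnotinert hq hqinj hqinert
      (Ideal.map ι 𝔞) (by rw [habs, hmfact])
    have h𝔔mem : ∀ i, ((p i : ℕ) : 𝓞 K) ∈ 𝔔 i := fun i => h2 i ▸ Ideal.absNorm_mem (𝔔 i)
    have h𝔔bot : ∀ i, 𝔔 i ≠ ⊥ := fun i hz => (hp i).ne_zero (by
      rw [← h2 i, hz, Ideal.absNorm_bot])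
    have hcomapmem : ∀ i, ((p i : ℕ) : O) ∈ Ideal.comap ι (𝔔 i) := fun i => by
      rw [Ideal.mem_comap, map_natCast]; exact h𝔔mem i
    refine ⟨heven, fun i => Ideal.comap ι (𝔔 i), fun i => ?_, fun i => ?_, ?_⟩
    · haveI := h1 i
      exact Ideal.IsPrime.comap ι
    · rw [quot_card ι hι f hcond (h𝔔mem i) (hpf i)]
      rw [← Submodule.cardQuot_apply, ← Ideal.absNorm_apply, h2 i]
    · -- the ideal equality
      set P_O : Ideal O := (∏ i, Ideal.comap ι (𝔔 i)) *
        ∏ j, (Ideal.span {((q j : ℕ) : O)} : Ideal O) ^ (e j / 2) with hPO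
      have hqmemO : ∀ j, ((q j : ℕ) : O) ∈ Ideal.span {((q j : ℕ) : O)} :=
        fun j => Ideal.subset_span rfl
      have hcop : ∀ (I : Ideal O) (n : ℕ), ((n : ℕ) : O) ∈ I → n.Coprime f →
          IsCoprime I (Ideal.span {((f : ℕ) : O)}) := fun I n hn hnf =>
        (Ideal.isCoprime_iff_sup_eq).mpr (prime_to_f f hn hnf)
      have hPOf : P_O ⊔ Ideal.span {((f : ℕ) : O)} = ⊤ := by
        rw [← Ideal.isCoprime_iff_sup_eq]
        refine IsCoprime.mul_left (IsCoprime.prod_left fun i _ => ?_)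
          (IsCoprime.prod_left fun j _ => IsCoprime.pow_left ?_)
        · exact hcop _ (p i) (hcomapmem i) (hpf i)
        · exact hcop _ (q j) (hqmemO j) (hqf j)
      have h𝔞f : 𝔞 ⊔ Ideal.span {((f : ℕ) : O)} = ⊤ := prime_to_f f hmem hmf
      have hmapPO : Ideal.map ι P_O = Ideal.map ι 𝔞 := by
        rw [hPO, Ideal.map_mul, h3, map_finset_prod', map_finset_prod']
        congr 1
        · exact Finset.prod_congr rfl fun i _ =>
            map_comap_eq ι hι f hcond (h𝔔bot i) (by rw [h2 i]; exact hpf i)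
        · refine Finset.prod_congr rfl fun j _ => ?_
          rw [Ideal.map_pow, Ideal.map_span, Set.image_singleton, map_natCast]
      calc 𝔞 = Ideal.comap ι (Ideal.map ι 𝔞) := (contract_eq ι hι f hcond h𝔞f).symm
      _ = Ideal.comap ι (Ideal.map ι P_O) := by rw [hmapPO]
      _ = P_O := contract_eq ι hι f hcond hPOf
  · -- backward direction
    rintro ⟨heven, 𝔭, hprime, hcards, h3⟩
    have hpmem : ∀ i, ((p i : ℕ) : O) ∈ 𝔭 i := fun i => hcards i ▸ card_smul_mem' (𝔭 i)
    have hqmem : ∀ j, ((q j ^ e j : ℕ) : O) ∈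
        (Ideal.span {((q j : ℕ) : O)} : Ideal O) ^ (e j / 2) := by
      intro j
      rw [Ideal.span_singleton_pow, Ideal.mem_span_singleton]
      push_cast
      exact pow_dvd_pow _ (Nat.div_le_self _ _)
    have hmmem : ((m : ℕ) : O) ∈ 𝔞 := by
      rw [h3, hmfact]
      push_cast
      exact Ideal.mul_mem_mul
        (Ideal.prod_mem_prod fun i _ => hpmem i)
        (Ideal.prod_mem_prod fun j _ => by
          have := hqmem j; push_cast at this; exact this)
    rw [card_eq_absNorm_map ι hι f hcond hmmem hmf]
    rw [h3, Ideal.map_mul, map_finset_prod', map_finset_prod', _root_.map_mul]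
    have hnorm1 : ∀ i, Ideal.absNorm (Ideal.map ι (𝔭 i)) = p i := fun i =>
      (card_eq_absNorm_map ι hι f hcond (hpmem i) (hpf i)).symm.trans (hcards i)
    have hnorm2 : ∀ j, Ideal.absNorm (Ideal.map ι
        ((Ideal.span {((q j : ℕ) : O)} : Ideal O) ^ (e j / 2))) = q j ^ e j := by
      intro j
      rw [Ideal.map_pow, Ideal.map_span, Set.image_singleton, map_natCast, _root_.map_pow,
        absNorm_span_natCast hdeg, ← pow_mul]
      congr 1
      obtain ⟨k, hk⟩ := heven j
      omega
    rw [map_prod, map_prod]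
    rw [Finset.prod_congr rfl fun i _ => hnorm1 i, Finset.prod_congr rfl fun j _ => hnorm2 j]
    exact hmfact.symm
end

section
/- Let O and O' be orders in an imaginary quadratic field K with O ⊆ O'. If 𝔞 is a proper O-ideal, then 𝔞O' (the O'-ideal generated by 𝔞) is a proper O'-ideal. -/
set_option maxHeartbeats 1000000
set_option synthInstance.maxHeartbeats 200000

theorem proper_ideal_extension (K : Type*) [Field K] [NumberField K]
    (hdeg : Module.finrank ℚ K = 2) (himag : IsEmpty (K →+* ℝ))
    (O O' : Subring K) (hO : IsQuadraticOrder K O) (hO' : IsQuadraticOrder K O')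
    (h : O ≤ O') (𝔞 : Ideal O) (h𝔞 : IsProperIdeal O 𝔞) :
    IsProperIdeal O' (Ideal.map (Subring.inclusion h) 𝔞) := by
  classical
  obtain ⟨hO_free, hO_rank⟩ := hO
  obtain ⟨h𝔞ne, h𝔞prop⟩ := h𝔞
  haveI := hO_free
  haveI : Module.Finite ℤ O := Module.finite_of_finrank_pos (by rw [hO_rank]; norm_num)
  haveI : IsNoetherian ℤ O := inferInstance
  obtain ⟨x₀, hx₀mem, hx₀ne⟩ := (Submodule.ne_bot_iff 𝔞).mp h𝔞ne
  set IA : Submodule ℤ O := 𝔞.restrictScalars ℤ with hIA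
  haveI : Module.Finite ℤ IA := Module.Finite.iff_fg.mpr (IsNoetherian.noetherian IA)
  obtain ⟨n, bI⟩ := Submodule.basisOfPid (Module.Free.chooseBasis ℤ O) IA
  -- n = 2
  have hfinIA : Module.finrank ℤ IA = n := by
    simpa using Module.finrank_eq_card_basis bI
  have hn : n = 2 := by
    have hle : n ≤ 2 := by
      rw [← hfinIA, ← hO_rank]; exact Submodule.finrank_le IA
    have hmem : ∀ y : O, x₀ * y ∈ IA := fun y => Ideal.mul_mem_right y 𝔞 hx₀mem
    have hinj : Function.Injective
        (LinearMap.codRestrict IA (LinearMap.mulLeft ℤ x₀) hmem) := by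
      intro y z hyz
      exact mul_left_cancel₀ hx₀ne (congrArg Subtype.val hyz)
    have hge : 2 ≤ n := by
      rw [← hfinIA, ← hO_rank]
      exact LinearMap.finrank_le_finrank_of_injective hinj
    omega
  subst hn
  -- embed into K
  set jO : O →ₗ[ℤ] K := O.subtype.toAddMonoidHom.toIntLinearMap with hjO
  have hjOinj : Function.Injective jO := Subtype.val_injective
  set emb : IA →ₗ[ℤ] K := jO.comp IA.subtype with hemb
  have hembinj : Function.Injective emb := hjOinj.comp Subtype.val_injective
  set α : K := emb (bI 0) with hα
  set β' : K := emb (bI 1) with hβ'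
  have hindep : LinearIndependent ℤ (⇑emb ∘ ⇑bI) :=
    bI.linearIndependent.map' emb (LinearMap.ker_eq_bot.mpr hembinj)
  have hα0 : α ≠ 0 := by
    rw [hα]
    intro hc
    exact bI.ne_zero 0 (hembinj (by rw [hc, map_zero]))
  have hβ'0 : β' ≠ 0 := by
    rw [hβ']
    intro hc
    exact bI.ne_zero 1 (hembinj (by rw [hc, map_zero]))
  -- the ideal as a span in K
  set T : Submodule ℤ K := Submodule.span ℤ {α, β'} with hT
  have hrangeb : Set.range (⇑emb ∘ ⇑bI) = {α, β'} := by
    ext x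
    simp only [Set.mem_insert_iff, Set.mem_singleton_iff, Set.mem_range,
      Function.comp_apply]
    constructor
    · rintro ⟨i, rfl⟩
      fin_cases i
      · exact Or.inl hα.symm
      · exact Or.inr rfl
    · rintro (rfl | rfl)
      exacts [⟨0, rfl⟩, ⟨1, rfl⟩]
  have hTeq : Submodule.map emb ⊤ = T := by
    rw [← bI.span_eq, Submodule.map_span, ← Set.range_comp, hrangeb]
  have hmemT : ∀ x : K, x ∈ T ↔ ∃ y ∈ 𝔞, (y : K) = x := by
    intro x
    rw [← hTeq]
    constructor
    · rintro ⟨y, -, rfl⟩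
      exact ⟨(y : O), y.2, rfl⟩
    · rintro ⟨y, hy, rfl⟩
      exact ⟨⟨y, hy⟩, trivial, rfl⟩
  -- τ
  set τ : K := β' / α with hτ
  have hατ : α * τ = β' := by rw [hτ]; field_simp
  have hτ0 : τ ≠ 0 := by
    rw [hτ]; exact div_ne_zero hβ'0 hα0
  clear_value τ
  -- τ is irrational
  have hτirr : ∀ q : ℚ, τ ≠ (q : K) := by
    intro q hq
    have hden0 : ((q.den : ℕ) : K) ≠ 0 := Nat.cast_ne_zero.mpr q.den_pos.ne'
    have hq' : (q : K) * ((q.den : ℕ) : K) = ((q.num : ℤ) : K) := by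
      rw [Rat.cast_def]
      field_simp
    have hrel : ((q.den : ℕ) : K) * β' - ((q.num : ℤ) : K) * α = 0 := by
      have h1 : β' = (q : K) * α := by rw [← hατ, hq]; ring
      rw [h1]
      linear_combination α * hq'
    have := Fintype.linearIndependent_iff.mp hindep ![-(q.num), (q.den : ℤ)]
      (by
        rw [Fin.sum_univ_two]
        simp only [Matrix.cons_val_zero, Matrix.cons_val_one, Matrix.head_cons,
          Function.comp_apply]
        rw [← hα, ← hβ']
        push_cast [zsmul_eq_mul]
        push_cast at hrel
        linear_combination hrel) 1
    simp only [Matrix.cons_val_one, Matrix.head_cons] at this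
    exact q.den_pos.ne' (by simpa using this)
  -- 1, τ is a ℚ-basis of K
  have hliQ : LinearIndependent ℚ ![(1 : K), τ] := by
    rw [linearIndependent_fin2]
    refine ⟨hτ0, fun q hq => ?_⟩
    simp only [Matrix.cons_val_one, Matrix.head_cons, Matrix.cons_val_zero] at hq
    rcases eq_or_ne q 0 with rfl | hq0
    · simp at hq
    · refine hτirr q⁻¹ ?_
      have h1 : (q : K) * τ = 1 := by rw [← hq, Rat.smul_def]
      have hqK : (q : K) ≠ 0 := by exact_mod_cast hq0
      push_cast
      field_simp
      rw [mul_comm]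
      exact h1
  have hspanQ : Submodule.span ℚ (Set.range ![(1 : K), τ]) = ⊤ :=
    hliQ.span_eq_top_of_card_eq_finrank (by simp [hdeg])
  -- τ² = u + v τ
  obtain ⟨u, v, huv⟩ : ∃ u v : ℚ, u • (1 : K) + v • τ = τ ^ 2 := by
    have hmem2 : τ ^ 2 ∈ Submodule.span ℚ (Set.range ![(1 : K), τ]) := by
      rw [hspanQ]; trivial
    have hrange : Set.range ![(1 : K), τ] = {(1 : K), τ} := by
      ext x
      simp [Fin.exists_fin_two]
      tauto
    rw [hrange] at hmem2
    exact Submodule.mem_span_pair.mp hmem2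
  have huv' : τ ^ 2 = (u : K) + (v : K) * τ := by
    rw [← huv, Rat.smul_def, Rat.smul_def, mul_one]
  -- integer coefficients for the relation
  obtain ⟨a, b, c, haK, hrelK, hbez⟩ :
      ∃ a b c : ℤ, ((a : K) ≠ 0) ∧ ((a : K) * τ ^ 2 + (b : K) * τ + (c : K) = 0) ∧
        ∃ x y z : ℤ, x * a + y * b + z * c = 1 := by
    have hdenu : ((u.den : ℕ) : K) ≠ 0 := Nat.cast_ne_zero.mpr u.den_pos.ne'
    have hdenv : ((v.den : ℕ) : K) ≠ 0 := Nat.cast_ne_zero.mpr v.den_pos.ne'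
    have hu' : (u : K) * ((u.den : ℕ) : K) = ((u.num : ℤ) : K) := by
      rw [Rat.cast_def]; field_simp
    have hv' : (v : K) * ((v.den : ℕ) : K) = ((v.num : ℤ) : K) := by
      rw [Rat.cast_def]; field_simp
    set a0 : ℤ := (u.den : ℤ) * (v.den : ℤ) with ha0
    set b0 : ℤ := -(v.num * (u.den : ℤ)) with hb0
    set c0 : ℤ := -(u.num * (v.den : ℤ)) with hc0
    have ha00 : a0 ≠ 0 := by
      rw [ha0]
      exact mul_ne_zero (by exact_mod_cast u.den_pos.ne') (by exact_mod_cast v.den_pos.ne')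
    have hrel0 : (a0 : K) * τ ^ 2 + (b0 : K) * τ + (c0 : K) = 0 := by
      rw [huv', ha0, hb0, hc0]
      push_cast
      linear_combination ((v.den : ℕ) : K) * hu' + ((u.den : ℕ) : K) * τ * hv'
    set g : ℤ := (Int.gcd a0 ((Int.gcd b0 c0 : ℤ)) : ℤ) with hgdef
    have hg0 : g ≠ 0 := by
      rw [hgdef]
      intro hcon
      have := Int.gcd_eq_zero_iff.mp (by exact_mod_cast hcon)
      exact ha00 this.1
    have hga : g ∣ a0 := Int.gcd_dvd_left _ _
    have hgbc : g ∣ (Int.gcd b0 c0 : ℤ) := Int.gcd_dvd_right _ _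
    have hgb : g ∣ b0 := hgbc.trans (Int.gcd_dvd_left _ _)
    have hgc : g ∣ c0 := hgbc.trans (Int.gcd_dvd_right _ _)
    have e1 : g * (a0 / g) = a0 := Int.mul_ediv_cancel' hga
    have e2 : g * (b0 / g) = b0 := Int.mul_ediv_cancel' hgb
    have e3 : g * (c0 / g) = c0 := Int.mul_ediv_cancel' hgc
    have hgK : (g : K) ≠ 0 := Int.cast_ne_zero.mpr hg0
    refine ⟨a0 / g, b0 / g, c0 / g, ?_, ?_, ?_⟩
    · rw [Int.cast_ne_zero]
      intro hz
      rw [hz, mul_zero] at e1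
      exact ha00 e1.symm
    · apply mul_left_cancel₀ hgK
      rw [mul_zero, ← hrel0]
      have ee1 : (a0 : K) = (g : K) * ((a0 / g : ℤ) : K) := by exact_mod_cast e1.symm
      have ee2 : (b0 : K) = (g : K) * ((b0 / g : ℤ) : K) := by exact_mod_cast e2.symm
      have ee3 : (c0 : K) = (g : K) * ((c0 / g : ℤ) : K) := by exact_mod_cast e3.symm
      rw [ee1, ee2, ee3]; ring
    · refine ⟨Int.gcdA a0 (Int.gcd b0 c0), Int.gcdA b0 c0 * Int.gcdB a0 (Int.gcd b0 c0),
        Int.gcdB b0 c0 * Int.gcdB a0 (Int.gcd b0 c0), ?_⟩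
      apply mul_left_cancel₀ hg0
      have h1 := Int.gcd_eq_gcd_ab a0 (Int.gcd b0 c0)
      have h2 := Int.gcd_eq_gcd_ab b0 c0
      rw [mul_one]
      rw [← hgdef] at h1
      linear_combination (Int.gcdA a0 (Int.gcd b0 c0)) * e1 +
        (Int.gcdA b0 c0 * Int.gcdB a0 (Int.gcd b0 c0)) * e2 +
        (Int.gcdB b0 c0 * Int.gcdB a0 (Int.gcd b0 c0)) * e3 - h1 -
        (Int.gcdB a0 (Int.gcd b0 c0)) * h2
  -- a·τ is a multiplier of T, hence lies in O
  have hmemαβ : α ∈ ({α, β'} : Set K) := Or.inl rfl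
  have hmemβ : β' ∈ ({α, β'} : Set K) := Or.inr rfl
  have haτT : ∀ x ∈ T, (a : K) * τ * x ∈ T := by
    intro x hx
    rw [hT] at hx ⊢
    induction hx using Submodule.span_induction with
    | mem y hym =>
      rcases hym with rfl | rfl
      · have hid : (a : K) * τ * α = (a : ℤ) • β' := by
          rw [zsmul_eq_mul]; push_cast; rw [← hατ]; ring
        rw [hid]
        exact Submodule.smul_mem _ _ (Submodule.subset_span hmemβ)
      · have hid : (a : K) * τ * β' = (-b : ℤ) • β' + (-c : ℤ) • α := by
          push_cast [zsmul_eq_mul]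
          rw [← hατ]
          linear_combination α * hrelK
        rw [hid]
        exact Submodule.add_mem _
          (Submodule.smul_mem _ _ (Submodule.subset_span hmemβ))
          (Submodule.smul_mem _ _ (Submodule.subset_span hmemαβ))
    | zero => simpa using Submodule.zero_mem (Submodule.span ℤ {α, β'})
    | add p q hp hq ihp ihq => rw [mul_add]; exact Submodule.add_mem _ ihp ihq
    | smul r p hp ih => rw [mul_smul_comm]; exact Submodule.smul_mem _ _ ih
  have haτO : (a : K) * τ ∈ O := by
    apply (h𝔞prop ((a : K) * τ)).mp
    intro y hy
    obtain ⟨c', hc', hc'eq⟩ := (hmemT _).mp (haτT _ ((hmemT _).mpr ⟨y, hy, rfl⟩))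
    exact ⟨c', hc', hc'eq.symm⟩
  -- submodule algebra in K
  set M' : Submodule ℤ K := AddSubgroup.toIntSubmodule O'.toAddSubgroup with hM'
  have hM'mem : ∀ x : K, x ∈ M' ↔ x ∈ O' := fun x => Iff.rfl
  have h1M' : (1 : K) ∈ M' := O'.one_mem
  have hM'mul : M' * M' ≤ M' := Submodule.mul_le.mpr (fun m hm n hn => O'.mul_mem hm hn)
  set C : Submodule ℤ K := Submodule.span ℤ {(a : K) * α⁻¹, α⁻¹ * (-(b : K) - (a : K) * τ)}
    with hC
  set P : Submodule ℤ K := Submodule.span ℤ {(1 : K), (a : K) * τ} with hP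
  have hmemC1 : (a : K) * α⁻¹ ∈ C := Submodule.subset_span (Or.inl rfl)
  have hmemC2 : α⁻¹ * (-(b : K) - (a : K) * τ) ∈ C := Submodule.subset_span (Or.inr rfl)
  have hmemTα : α ∈ T := Submodule.subset_span hmemαβ
  have hmemTβ : β' ∈ T := Submodule.subset_span hmemβ
  have f1 : α * ((a : K) * α⁻¹) = (a : K) := by field_simp
  have f2 : α * (α⁻¹ * (-(b : K) - (a : K) * τ)) = -(b : K) - (a : K) * τ := by
    field_simp
  have hrelβ : (a : K) * β' ^ 2 + (b : K) * β' * α + (c : K) * α ^ 2 = 0 := by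
    rw [← hατ]
    linear_combination (α ^ 2) * hrelK
  have f3 : β' * ((a : K) * α⁻¹) = (a : K) * τ := by
    rw [← hατ]; field_simp [hα0]
  have f4 : β' * (α⁻¹ * (-(b : K) - (a : K) * τ)) = (c : K) := by
    rw [← hατ]
    field_simp [hα0]
    linear_combination (-1 : K) * hrelK
  have haTC : (a : K) ∈ T * C := by
    rw [← f1]; exact Submodule.mul_mem_mul hmemTα hmemC1
  have haτTC : (a : K) * τ ∈ T * C := by
    rw [← f3]; exact Submodule.mul_mem_mul hmemTβ hmemC1
  have hcTC : (c : K) ∈ T * C := by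
    rw [← f4]; exact Submodule.mul_mem_mul hmemTβ hmemC2
  have hbTC : (b : K) ∈ T * C := by
    have h2' : -(b : K) - (a : K) * τ ∈ T * C := by
      rw [← f2]; exact Submodule.mul_mem_mul hmemTα hmemC2
    have hid : (b : K) = (-1 : ℤ) • (-(b : K) - (a : K) * τ) + (-1 : ℤ) • ((a : K) * τ) := by
      push_cast [zsmul_eq_mul]; ring
    rw [hid]
    exact Submodule.add_mem _ (Submodule.smul_mem _ _ h2') (Submodule.smul_mem _ _ haτTC)
  have hTC : T * C = P := by
    apply le_antisymm
    · rw [hT, hC, Submodule.span_mul_span]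
      apply Submodule.span_le.mpr
      rintro x ⟨m, hm, n, hn, rfl⟩
      dsimp only
      simp only [Set.mem_insert_iff, Set.mem_singleton_iff] at hm hn
      have hPP : ∀ z : K, (∃ s t : ℤ, (s : K) + (t : K) * ((a : K) * τ) = z) → z ∈ P := by
        rintro z ⟨s, t, rfl⟩
        rw [hP]
        exact Submodule.mem_span_pair.mpr ⟨s, t, by push_cast [zsmul_eq_mul]; ring⟩
      rcases hm with rfl | rfl <;> rcases hn with rfl | rfl
      · rw [f1]; exact hPP _ ⟨a, 0, by push_cast; ring⟩
      · rw [f2]; exact hPP _ ⟨-b, -1, by push_cast; ring⟩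
      · rw [f3]; exact hPP _ ⟨0, 1, by push_cast; ring⟩
      · rw [f4]; exact hPP _ ⟨c, 0, by push_cast; ring⟩
    · rw [hP]
      apply Submodule.span_le.mpr
      rintro x (rfl | rfl)
      · obtain ⟨xx, yy, zz, hxyz⟩ := hbez
        have hcast : ((xx * a + yy * b + zz * c : ℤ) : K) = 1 := by
          rw [hxyz]; norm_num
        push_cast at hcast
        have hid : (1 : K) = (xx : ℤ) • (a : K) + (yy : ℤ) • (b : K) + (zz : ℤ) • (c : K) := by
          push_cast [zsmul_eq_mul]
          linear_combination -hcast
        rw [hid]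
        exact Submodule.add_mem _
          (Submodule.add_mem _ (Submodule.smul_mem _ _ haTC) (Submodule.smul_mem _ _ hbTC))
          (Submodule.smul_mem _ _ hcTC)
      · exact haτTC
  have hPsubM' : P ≤ M' := by
    rw [hP]
    apply Submodule.span_le.mpr
    rintro x (rfl | rfl)
    · exact h1M'
    · exact h haτO
  have hPM' : P * M' = M' := by
    apply le_antisymm
    · exact Submodule.mul_le.mpr (fun p hp m hm => O'.mul_mem (hPsubM' hp) hm)
    · intro m hm
      have h1P : (1 : K) ∈ P := Submodule.subset_span (Or.inl rfl)
      have := Submodule.mul_mem_mul h1P hm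
      rwa [one_mul] at this
  -- the extended ideal as a submodule of K
  set jO' : O' →ₗ[ℤ] K := O'.subtype.toAddMonoidHom.toIntLinearMap with hjO'
  set E : Submodule ℤ K :=
    Submodule.map jO' ((Ideal.map (Subring.inclusion h) 𝔞).restrictScalars ℤ) with hEdef
  have hmemE : ∀ x : K, x ∈ E ↔ ∃ y ∈ Ideal.map (Subring.inclusion h) 𝔞, (y : K) = x := by
    intro x
    constructor
    · rintro ⟨y, hy, rfl⟩; exact ⟨y, hy, rfl⟩
    · rintro ⟨y, hy, rfl⟩; exact ⟨y, hy, rfl⟩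
  have hswap : M' * (T * M') ≤ T * M' := by
    have hcomm : M' * (T * M') = T * (M' * M') := by
      rw [← mul_assoc, mul_comm M' T, mul_assoc]
    rw [hcomm]
    exact Submodule.mul_le.mpr (fun t ht mm hmm => Submodule.mul_mem_mul ht (hM'mul hmm))
  have hETM' : E = T * M' := by
    apply le_antisymm
    · rintro x ⟨z, hz, rfl⟩
      have hz' : z ∈ Ideal.span (⇑(Subring.inclusion h) '' ↑𝔞) := hz
      clear hz
      induction hz' using Submodule.span_induction with
      | mem y hym =>
        obtain ⟨w, hw, rfl⟩ := hym
        have h1 : (w : K) ∈ T := (hmemT _).mpr ⟨w, hw, rfl⟩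
        have := Submodule.mul_mem_mul h1 h1M'
        rwa [mul_one] at this
      | zero => simpa using Submodule.zero_mem (T * M')
      | add p q hp hq ihp ihq =>
        have : jO' (p + q) = jO' p + jO' q := map_add _ _ _
        rw [this]; exact Submodule.add_mem _ ihp ihq
      | smul r p hp ih =>
        have hid : jO' (r • p) = (r : K) * jO' p := rfl
        rw [hid]
        exact hswap (Submodule.mul_mem_mul (r.2 : (r : K) ∈ M') ih)
    · apply Submodule.mul_le.mpr
      intro t ht m hm
      obtain ⟨y, hy, rfl⟩ := (hmemT t).mp ht
      refine (hmemE _).mpr ⟨(Subring.inclusion h) y * ⟨m, hm⟩, ?_, ?_⟩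
      · exact Ideal.mul_mem_right _ _ (Ideal.mem_map_of_mem _ hy)
      · rfl
  refine ⟨?_, ?_⟩
  · intro hbot
    have hmem0 : (Subring.inclusion h) x₀ ∈ Ideal.map (Subring.inclusion h) 𝔞 :=
      Ideal.mem_map_of_mem _ hx₀mem
    rw [hbot] at hmem0
    have : (Subring.inclusion h) x₀ = 0 := by simpa using hmem0
    apply hx₀ne
    have : (x₀ : K) = 0 := congrArg Subtype.val this
    exact Subtype.ext this
  · intro β
    constructor
    · intro hβ
      have hβE : ∀ x ∈ E, β * x ∈ E := by
        intro x hx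
        obtain ⟨y, hy, rfl⟩ := (hmemE x).mp hx
        obtain ⟨c', hc', hc'eq⟩ := hβ y hy
        exact (hmemE _).mpr ⟨c', hc', hc'eq.symm⟩
      have hEC : M' = E * C := by
        calc M' = P * M' := hPM'.symm
        _ = (T * C) * M' := by rw [hTC]
        _ = (T * M') * C := by rw [mul_right_comm]
        _ = E * C := by rw [hETM']
      have hmul : ∀ y, y ∈ E * C → β * y ∈ E * C := by
        intro y hy
        refine Submodule.mul_induction_on hy (fun m hm n hn => ?_) (fun p q hp hq => ?_)
        · rw [← mul_assoc]; exact Submodule.mul_mem_mul (hβE m hm) hn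
        · rw [mul_add]; exact Submodule.add_mem _ hp hq
      have h1EC : (1 : K) ∈ E * C := hEC ▸ h1M'
      have : β * 1 ∈ E * C := hmul 1 h1EC
      rw [mul_one] at this
      rw [← hEC] at this
      exact this
    · intro hβ a' ha'
      exact ⟨⟨β, hβ⟩ * a', Ideal.mul_mem_left _ _ ha', rfl⟩
end

section
/- Let O and O' be orders in an imaginary quadratic field K with O ⊆ O', and let r = [O' : O] be the relative conductor of O in O'. If 𝔞' is a nonzero O'-ideal prime to r (i.e., 𝔞' + rO' = O'), then N(𝔞' ∩ O) = N(𝔞'); in particular, 𝔞' ∩ O is an O-ideal prime to r. -/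
theorem norm_of_contraction_of_ideal_prime_to_relative_conductor
    (K : Type*) [Field K] [NumberField K]
    (hdeg : Module.finrank ℚ K = 2) (himag : IsEmpty (K →+* ℝ))
    (O O' : Subring K) (hO : IsQuadraticOrder K O) (hO' : IsQuadraticOrder K O')
    (h : O ≤ O')
    (r : ℕ) (hr : AddSubgroup.relIndex O.toAddSubgroup O'.toAddSubgroup = r)
    (𝔞' : Ideal O') (h𝔞' : 𝔞' ≠ ⊥)
    (hprime : 𝔞' ⊔ Ideal.span {(r : O')} = ⊤) :
    Nat.card (↥O ⧸ Ideal.comap (Subring.inclusion h) 𝔞') = Nat.card (↥O' ⧸ 𝔞') ∧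
      Ideal.comap (Subring.inclusion h) 𝔞' ⊔ Ideal.span {(r : O)} = ⊤ := by
  -- Key: r • x ∈ O for all x ∈ O'
  have key : ∀ x : O', ((r : O') * x : K) ∈ O := by
    intro x
    have := AddSubgroup.nsmul_index_mem (O.toAddSubgroup.addSubgroupOf O'.toAddSubgroup) x
    rw [← AddSubgroup.relIndex, hr] at this
    have : ((r • x : O') : K) ∈ O.toAddSubgroup := this
    simpa [nsmul_eq_mul] using this
  rcases Nat.eq_zero_or_pos r with hr0 | hrpos
  · subst hr0
    have htop : 𝔞' = ⊤ := by
      rw [Nat.cast_zero, Ideal.span_singleton_eq_bot.mpr rfl, sup_bot_eq] at hprime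
      exact hprime
    subst htop
    constructor
    · have h1 : Subsingleton (↥O ⧸ Ideal.comap (Subring.inclusion h) (⊤ : Ideal O')) := by
        rw [Ideal.comap_top]
        exact Submodule.Quotient.subsingleton_iff.mpr rfl
      have h2 : Subsingleton (↥O' ⧸ (⊤ : Ideal O')) :=
        Submodule.Quotient.subsingleton_iff.mpr rfl
      rw [Nat.card_of_subsingleton (default), Nat.card_of_subsingleton (default)]
    · rw [Ideal.comap_top]; simp
  -- main case
  · set f : O →+* O' ⧸ 𝔞' := (Ideal.Quotient.mk 𝔞').comp (Subring.inclusion h) with hf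
    have hker : RingHom.ker f = Ideal.comap (Subring.inclusion h) 𝔞' := by
      rw [hf, ← RingHom.comap_ker, Ideal.mk_ker]
    have hsurj : Function.Surjective f := by
      intro y
      obtain ⟨x, rfl⟩ := Ideal.Quotient.mk_surjective y
      obtain ⟨a, ha, b, hb, hab⟩ := Submodule.mem_sup.mp (hprime ▸ Submodule.mem_top : x ∈ 𝔞' ⊔ Ideal.span {(r : O')})
      obtain ⟨c, rfl⟩ := Ideal.mem_span_singleton'.mp hb
      refine ⟨⟨((c * r : O') : K), by simpa [mul_comm] using key c⟩, ?_⟩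
      have hmap : (Subring.inclusion h) ⟨((c * r : O') : K), by simpa [mul_comm] using key c⟩ = c * (r : O') := by
        ext; rfl
      rw [hf, RingHom.comp_apply, hmap, ← hab]
      rw [Ideal.Quotient.eq]
      simpa using ha
    constructor
    · have e := RingHom.quotientKerEquivOfSurjective hsurj
      replace e := (Ideal.quotEquivOfEq hker.symm).trans e
      exact Nat.card_congr e.toEquiv
    · rw [Ideal.eq_top_iff_one]
      -- 1 = a + r*c with a ∈ 𝔞'
      obtain ⟨a, ha, b, hb, hab⟩ := Submodule.mem_sup.mp
        (hprime ▸ Submodule.mem_top : (1 : O') ∈ 𝔞' ⊔ Ideal.span {(r : O')})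
      obtain ⟨c, rfl⟩ := Ideal.mem_span_singleton'.mp hb
      -- d = r * (c*c) ∈ O
      set d : O := ⟨(((r : O') * (c * c) : O') : K), key (c * c)⟩ with hd
      have hmem : (1 : O) - (r : O) * d ∈ Ideal.comap (Subring.inclusion h) 𝔞' := by
        rw [Ideal.mem_comap]
        have hone : (Subring.inclusion h) ((1 : O) - (r : O) * d)
            = 1 - (r : O') * ((r : O') * (c * c)) := by
          have hincl : ∀ y : O, (((Subring.inclusion h) y : O') : K) = (y : K) := fun y => rfl
          ext
          rw [hincl]
          push_cast [hd]
          ring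
        rw [hone]
        have h1 : (1 : O') = a + c * (r : O') := hab.symm
        have : (1 : O') - (r : O') * ((r : O') * (c * c)) = a * (a + 2 * (c * (r : O'))) := by
          have : (a : O') = 1 - c * (r : O') := by rw [h1]; ring
          rw [this]; push_cast; ring
        rw [this]
        exact Ideal.mul_mem_right _ _ ha
      have : (1 : O) ∈ Ideal.comap (Subring.inclusion h) 𝔞' ⊔ Ideal.span {(r : O)} := by
        have : (1 : O) = ((1 : O) - (r : O) * d) + (r : O) * d := by ring
        rw [this]
        exact Submodule.add_mem_sup hmem
          (Ideal.mem_span_singleton'.mpr ⟨d, mul_comm d (r:O)⟩)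
      exact this
end

section
/- Let O and O' be orders in an imaginary quadratic field K with O ⊆ O', and let r = [O' : O] be the relative conductor of O in O'. If 𝔞' is a nonzero O'-ideal prime to r (i.e., 𝔞' + rO' = O'), then (𝔞' ∩ O)O' = 𝔞', where (𝔞' ∩ O)O' is the O'-ideal generated by 𝔞' ∩ O. -/
private lemma conductor_mul_mem {K : Type*} [Field K] {O O' : Subring K} {r : ℕ}
    (hr : AddSubgroup.relIndex O.toAddSubgroup O'.toAddSubgroup = r)
    {x : K} (hx : x ∈ O') : (r : K) * x ∈ O := by
  have := AddSubgroup.nsmul_index_mem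
    (AddSubgroup.addSubgroupOf O.toAddSubgroup O'.toAddSubgroup)
    (⟨x, hx⟩ : O'.toAddSubgroup)
  rw [AddSubgroup.relIndex] at hr
  rw [hr, AddSubgroup.mem_addSubgroupOf] at this
  simpa [nsmul_eq_mul] using this

theorem extension_of_contraction_of_ideal_prime_to_relative_conductor
    (K : Type*) [Field K] [NumberField K]
    (hdeg : Module.finrank ℚ K = 2) (himag : IsEmpty (K →+* ℝ))
    (O O' : Subring K) (hO : IsQuadraticOrder K O) (hO' : IsQuadraticOrder K O')
    (h : O ≤ O')
    (r : ℕ) (hr : AddSubgroup.relIndex O.toAddSubgroup O'.toAddSubgroup = r)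
    (𝔞' : Ideal O') (h𝔞' : 𝔞' ≠ ⊥)
    (hprime : 𝔞' ⊔ Ideal.span {(r : O')} = ⊤) :
    Ideal.map (Subring.inclusion h) (Ideal.comap (Subring.inclusion h) 𝔞') = 𝔞' := by
  set I := Ideal.map (Subring.inclusion h) (Ideal.comap (Subring.inclusion h) 𝔞') with hI
  have key : ∀ x : O', x ∈ 𝔞' → ((x : K) ∈ O) → x ∈ I := by
    intro x hx hxO
    have heq : Subring.inclusion h ⟨(x : K), hxO⟩ = x := Subtype.ext rfl
    have hmem : (⟨(x : K), hxO⟩ : O) ∈ Ideal.comap (Subring.inclusion h) 𝔞' := by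
      rw [Ideal.mem_comap, heq]; exact hx
    have := Ideal.mem_map_of_mem (Subring.inclusion h) hmem
    rwa [heq] at this
  apply le_antisymm Ideal.map_comap_le
  intro a' ha'
  have h1 : (1 : O') ∈ 𝔞' ⊔ Ideal.span {(r : O')} := hprime ▸ Submodule.mem_top
  rcases Submodule.mem_sup.mp h1 with ⟨a, ha, c, hc, hac⟩
  rcases Ideal.mem_span_singleton'.mp hc with ⟨b, hb⟩
  -- (c : K) ∈ O since c = b * r and r * O' ⊆ O
  have hcO : (c : K) ∈ O := by
    have : (c : K) = (r : K) * (b : K) := by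
      rw [← hb]; push_cast; ring
    rw [this]
    exact conductor_mul_mem hr b.2
  -- hence (a : K) ∈ O
  have haO : (a : K) ∈ O := by
    have : (a : K) = 1 - (c : K) := by
      have := congrArg (Subtype.val : O' → K) hac
      push_cast at this
      linear_combination this
    rw [this]
    exact O.sub_mem O.one_mem hcO
  -- r * a' ∈ 𝔞' and its image lies in O
  have hra : ((r : O') * a' : O') ∈ 𝔞' := Ideal.mul_mem_left _ _ ha'
  have hraO : (((r : O') * a' : O') : K) ∈ O := by
    have : (((r : O') * a' : O') : K) = (r : K) * (a' : K) := by push_cast; ring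
    rw [this]
    exact conductor_mul_mem hr a'.2
  have h2 : a' = a * a' + b * ((r : O') * a') := by
    linear_combination (-a') * hac + (-a') * hb
  rw [h2]
  exact I.add_mem (Ideal.mul_mem_right _ _ (key a ha haO))
    (Ideal.mul_mem_left _ _ (key _ hra hraO))
end

section
/- Let O and O' be orders in an imaginary quadratic field K with O ⊆ O', and let r = [O' : O] be the relative conductor of O in O'. If 𝔞' is a proper O'-ideal prime to r (i.e., 𝔞' + rO' = O'), then 𝔞' ∩ O is a proper O-ideal. -/
theorem contraction_of_proper_ideal_prime_to_relative_conductor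
    (K : Type*) [Field K] [NumberField K]
    (hdeg : Module.finrank ℚ K = 2) (himag : IsEmpty (K →+* ℝ))
    (O O' : Subring K) (hO : IsQuadraticOrder K O) (hO' : IsQuadraticOrder K O')
    (h : O ≤ O')
    (r : ℕ) (hr : AddSubgroup.relIndex O.toAddSubgroup O'.toAddSubgroup = r)
    (𝔞' : Ideal O') (h𝔞' : IsProperIdeal O' 𝔞')
    (hprime : 𝔞' ⊔ Ideal.span {(r : O')} = ⊤) :
    IsProperIdeal O (Ideal.comap (Subring.inclusion h) 𝔞') := by
  classical
  set 𝔞 : Ideal O := Ideal.comap (Subring.inclusion h) 𝔞' with h𝔞def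
  have hmem𝔞 : ∀ a : O, a ∈ 𝔞 ↔ Subring.inclusion h a ∈ 𝔞' := fun a => Iff.rfl
  have hincl : ∀ z : O, ((Subring.inclusion h z : O') : K) = (z : K) := fun z => rfl
  by_cases htop : 𝔞' = ⊤
  · -- trivial case: 𝔞' = ⊤, so 𝔞 = ⊤
    have h𝔞top : ∀ a : O, a ∈ 𝔞 := fun a => by
      rw [hmem𝔞, htop]; trivial
    constructor
    · intro hb
      have h1 : (1 : O) ∈ 𝔞 := h𝔞top 1
      rw [hb, Ideal.mem_bot] at h1
      exact one_ne_zero (by simpa using congrArg (Subtype.val) h1 : (1:K) = 0)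
    · intro β
      constructor
      · intro hβ
        obtain ⟨c, _, hc2⟩ := hβ 1 (h𝔞top 1)
        have : β = (c : K) := by simpa using hc2
        rw [this]; exact c.2
      · intro hβ a _
        exact ⟨⟨β * (a : K), mul_mem hβ a.2⟩, h𝔞top _, rfl⟩
  · -- main case
    have hr0 : r ≠ 0 := by
      rintro rfl
      rw [Nat.cast_zero, Ideal.span_singleton_eq_bot.mpr rfl, sup_bot_eq] at hprime
      exact htop hprime
    -- r * O' ⊆ O
    have hrO : ∀ x : K, x ∈ O' → (r : K) * x ∈ O := by
      intro x hx
      have := AddSubgroup.nsmul_index_mem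
        ((O.toAddSubgroup).addSubgroupOf O'.toAddSubgroup) (⟨x, hx⟩ : O'.toAddSubgroup)
      rw [AddSubgroup.mem_addSubgroupOf] at this
      rw [AddSubgroup.relIndex] at hr
      rw [hr] at this
      simpa [nsmul_eq_mul] using this
    -- decomposition O = 𝔞 + rO'
    have hsplit : ∀ x : K, x ∈ O → ∃ (a : O') (y : O'),
        a ∈ 𝔞' ∧ (a : K) ∈ O ∧ x = (a : K) + (r : K) * (y : K) := by
      intro x hx
      have hx' : (⟨x, h hx⟩ : O') ∈ 𝔞' ⊔ Ideal.span {(r : O')} := by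
        rw [hprime]; trivial
      obtain ⟨a, ha, b, hb, hab⟩ := Submodule.mem_sup.mp hx'
      obtain ⟨y, hy⟩ := Ideal.mem_span_singleton'.mp hb
      have habK : (a : K) + (b : K) = x := by
        have := congrArg Subtype.val hab
        push_cast at this
        exact this
      have hbK : (b : K) = (r : K) * (y : K) := by
        rw [← hy]; push_cast; ring
      refine ⟨a, y, ha, ?_, by linear_combination -habK + hbK⟩
      have haK : (a : K) = x - (r : K) * (y : K) := by linear_combination habK - hbK
      rw [haK]
      exact sub_mem hx (hrO _ y.2)
    constructor
    · -- 𝔞 ≠ ⊥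
      obtain ⟨x, hx, hx0⟩ := Submodule.exists_mem_ne_zero_of_ne_bot h𝔞'.1
      intro hb
      have hrx : (r : K) * (x : K) ∈ O := hrO _ x.2
      have hmem : (⟨(r : K) * (x : K), hrx⟩ : O) ∈ 𝔞 := by
        rw [hmem𝔞]
        have : Subring.inclusion h (⟨(r : K) * (x : K), hrx⟩ : O) = (r : O') * x := by
          apply Subtype.ext; rw [hincl]; push_cast; ring
        rw [this]
        exact Ideal.mul_mem_left _ _ hx
      rw [hb, Ideal.mem_bot] at hmem
      have : (r : K) * (x : K) = 0 := by
        simpa using congrArg (Subtype.val) hmem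
      rcases mul_eq_zero.mp this with h1 | h2
      · exact hr0 (Nat.cast_injective.ne hr0 (by exact_mod_cast h1 : ((r:ℕ):K) = ((0:ℕ):K)) |>.elim)
      · exact hx0 (Subtype.ext h2)
    · intro β
      constructor
      · intro hβ
        -- decompose 1 = a + r y
        obtain ⟨a, y, ha𝔞', haO, h1⟩ := hsplit 1 (one_mem O)
        have hamk : (((⟨(a : K), haO⟩ : O)) : K) = (a : K) := rfl
        have ha𝔞 : (⟨(a : K), haO⟩ : O) ∈ 𝔞 := by
          rw [hmem𝔞]
          have : Subring.inclusion h (⟨(a : K), haO⟩ : O) = a := Subtype.ext rfl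
          rw [this]; exact ha𝔞'
        -- first show β stabilizes 𝔞'
        have hβ𝔞' : ∀ x : O', x ∈ 𝔞' → ∃ c : O', c ∈ 𝔞' ∧ β * (x : K) = (c : K) := by
          intro x hx
          obtain ⟨c0, hc0𝔞, hc0⟩ := hβ _ ha𝔞
          -- t = r * (x*y) ∈ 𝔞 (as element of O)
          have htO : (r : K) * ((x : K) * (y : K)) ∈ O := hrO _ (mul_mem x.2 y.2)
          have ht𝔞 : (⟨(r : K) * ((x : K) * (y : K)), htO⟩ : O) ∈ 𝔞 := by
            rw [hmem𝔞]
            have : Subring.inclusion h (⟨(r : K) * ((x : K) * (y : K)), htO⟩ : O)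
                = (r : O') * y * x := by
              apply Subtype.ext; rw [hincl]; push_cast; ring
            rw [this]
            exact Ideal.mul_mem_left _ _ hx
          obtain ⟨c1, hc1𝔞, hc1⟩ := hβ _ ht𝔞
          rw [hamk] at hc0
          have htmk : (((⟨(r : K) * ((x : K) * (y : K)), htO⟩ : O)) : K)
              = (r : K) * ((x : K) * (y : K)) := rfl
          rw [htmk] at hc1
          refine ⟨Subring.inclusion h c0 * x + Subring.inclusion h c1, ?_, ?_⟩
          · exact Ideal.add_mem _ (Ideal.mul_mem_left _ _ hx) (by
              rw [hmem𝔞] at hc1𝔞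
              exact hc1𝔞)
          · push_cast [hincl]
            linear_combination β * (x : K) * h1 + (x : K) * hc0 + hc1
        have hβO' : β ∈ O' := (h𝔞'.2 β).mp (fun a' ha' => by
          obtain ⟨c, hc, hceq⟩ := hβ𝔞' a' ha'
          exact ⟨c, hc, hceq⟩)
        -- now β = β*a + r*(β*y) ∈ O
        obtain ⟨c0, hc0𝔞, hc0⟩ := hβ _ ha𝔞
        rw [hamk] at hc0
        have : β = (c0 : K) + (r : K) * (β * (y : K)) := by
          linear_combination β * h1 + hc0
        rw [this]
        exact add_mem c0.2 (hrO _ (mul_mem hβO' y.2))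
      · intro hβ a ha
        refine ⟨⟨β * (a : K), mul_mem hβ a.2⟩, ?_, rfl⟩
        rw [hmem𝔞] at ha ⊢
        have : Subring.inclusion h (⟨β * (a : K), mul_mem hβ a.2⟩ : O)
            = (⟨β, h hβ⟩ : O') * Subring.inclusion h a := Subtype.ext rfl
        rw [this]
        exact Ideal.mul_mem_left _ _ ha
end

section
/- Let O and O' be orders in an imaginary quadratic field K with O ⊆ O', and let r = [O' : O] be the relative conductor of O in O'. If 𝔞' and 𝔟' are proper O'-ideals prime to r (i.e., 𝔞' + rO' = O' and 𝔟' + rO' = O'), then 𝔞'𝔟' ∩ O = (𝔞' ∩ O)(𝔟' ∩ O). -/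
theorem contraction_multiplicative_on_ideals_prime_to_relative_conductor
    (K : Type*) [Field K] [NumberField K]
    (hdeg : Module.finrank ℚ K = 2) (himag : IsEmpty (K →+* ℝ))
    (O O' : Subring K) (hO : IsQuadraticOrder K O) (hO' : IsQuadraticOrder K O')
    (h : O ≤ O')
    (r : ℕ) (hr : AddSubgroup.relIndex O.toAddSubgroup O'.toAddSubgroup = r)
    (𝔞' 𝔟' : Ideal O') (h𝔞' : IsProperIdeal O' 𝔞') (h𝔟' : IsProperIdeal O' 𝔟')
    (hprimea : 𝔞' ⊔ Ideal.span {(r : O')} = ⊤)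
    (hprimeb : 𝔟' ⊔ Ideal.span {(r : O')} = ⊤) :
    Ideal.comap (Subring.inclusion h) (𝔞' * 𝔟') =
      Ideal.comap (Subring.inclusion h) 𝔞' * Ideal.comap (Subring.inclusion h) 𝔟' := by
  classical
  rcases Nat.eq_zero_or_pos r with hr0 | hrpos
  · -- degenerate case: if `r = 0` then both ideals are the unit ideal
    subst hr0
    simp only [Nat.cast_zero, Ideal.span_singleton_eq_bot.mpr rfl, sup_bot_eq] at hprimea hprimeb
    rw [hprimea, hprimeb]
    simp
  -- main case: `r > 0`
  -- Key fact: `r * γ ∈ O` for every `γ ∈ O'`.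
  have hrK : ∀ γ : O', (r : K) * (γ : K) ∈ O := by
    intro γ
    have hidx : (O.toAddSubgroup.addSubgroupOf O'.toAddSubgroup).index = r := hr
    have := AddSubgroup.nsmul_index_mem (O.toAddSubgroup.addSubgroupOf O'.toAddSubgroup) γ
    rw [hidx] at this
    have : ((r • γ : O') : K) ∈ O := this
    simpa [nsmul_eq_mul] using this
  set f := Subring.inclusion h with hf
  have hfK : ∀ x : O, ((f x : O') : K) = (x : K) := fun x => rfl
  set a := Ideal.comap f 𝔞' with ha
  set b := Ideal.comap f 𝔟' with hb
  -- from primality to `r`, find an `O`-witness of the decomposition `1 = A + r² w`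
  have key : ∀ (I : Ideal O'), I ⊔ Ideal.span {(r : O')} = ⊤ →
      ∃ (A w : O') (a₀ : O), A ∈ I ∧ ((a₀ : K) = (A : K)) ∧ (1 : O') = A + (r : O')^2 * w := by
    intro I hI
    have h1 : (1 : O') ∈ I ⊔ Ideal.span {(r : O')} := hI ▸ Submodule.mem_top
    rcases Submodule.mem_sup.mp h1 with ⟨α, hα, z, hz, hsum⟩
    rcases Ideal.mem_span_singleton'.mp hz with ⟨β, hβ⟩
    have h1' : (1 : O') = α + β * (r : O') := by rw [← hsum, hβ]
    refine ⟨α * (1 + β * (r : O')), β^2, ?_, Ideal.mul_mem_right _ _ hα, ?_, ?_⟩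
    · refine ⟨((α : K) * ((1 : K) + (β : K) * (r : K))), ?_⟩
      have hα' : (α : K) ∈ O := by
        have : (α : K) = 1 - (r : K) * (β : K) := by
          have := Subtype.ext_iff.mp h1'
          push_cast at this
          linear_combination -this
        rw [this]
        exact O.sub_mem O.one_mem (hrK β)
      have hβ' : ((1 : K) + (β : K) * (r : K)) ∈ O := by
        refine O.add_mem O.one_mem ?_
        rw [mul_comm]; exact hrK β
      exact O.mul_mem hα' hβ'
    · push_cast; ring
    · linear_combination (1 + β * (r : O')) * h1'
  obtain ⟨A₁, w₁, a₀, hA₁I, ha₀K, e₁⟩ := key 𝔞' hprimea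
  obtain ⟨A₂, w₂, b₀, hA₂I, hb₀K, e₂⟩ := key 𝔟' hprimeb
  have ha₀ : a₀ ∈ a := by
    show f a₀ ∈ 𝔞'
    have : f a₀ = A₁ := Subtype.ext (by rw [hfK, ha₀K])
    rwa [this]
  have hb₀ : b₀ ∈ b := by
    show f b₀ ∈ 𝔟'
    have : f b₀ = A₂ := Subtype.ext (by rw [hfK, hb₀K])
    rwa [this]
  -- combined decomposition  1 = A₁A₂ + r² w
  set w : O' := A₁ * w₂ + w₁ * (A₂ + (r : O')^2 * w₂) with hw
  have hone : (1 : O') = A₁ * A₂ + (r : O')^2 * w := by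
    rw [hw]; linear_combination e₁ + A₁ * e₂ + ((r:O')^2 * w₁) * e₂
  -- r² times anything in 𝔞'𝔟' comes from a·b
  have key2 : ∀ z ∈ 𝔞' * 𝔟', ∃ t ∈ a * b, f t = (r : O')^2 * z := by
    intro z hz
    refine Submodule.mul_induction_on hz ?_ ?_
    · intro m hm n hn
      refine ⟨⟨(r : K) * (m : K), hrK m⟩ * ⟨(r : K) * (n : K), hrK n⟩,
        Ideal.mul_mem_mul ?_ ?_, ?_⟩
      · show f _ ∈ 𝔞'
        have : f (⟨(r : K) * (m : K), hrK m⟩ : O) = (r : O') * m := Subtype.ext (by push_cast [hfK]; ring)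
        rw [this]; exact Ideal.mul_mem_left _ _ hm
      · show f _ ∈ 𝔟'
        have : f (⟨(r : K) * (n : K), hrK n⟩ : O) = (r : O') * n := Subtype.ext (by push_cast [hfK]; ring)
        rw [this]; exact Ideal.mul_mem_left _ _ hn
      · apply Subtype.ext
        push_cast [hfK]
        ring
    · rintro x y ⟨t₁, ht₁, hft₁⟩ ⟨t₂, ht₂, hft₂⟩
      exact ⟨t₁ + t₂, Ideal.add_mem _ ht₁ ht₂, by rw [map_add, hft₁, hft₂, mul_add]⟩
  apply le_antisymm
  · -- hard direction
    intro x hx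
    have hξ : f x ∈ 𝔞' * 𝔟' := hx
    obtain ⟨t, htab, hft⟩ := key2 (w * f x) (Ideal.mul_mem_left _ _ hξ)
    have hxeq : x = x * (a₀ * b₀) + t := by
      apply Subtype.ext
      have h1 : ((f x : O') : K) = (x : K) := hfK x
      have h2 : (1 : K) = (A₁ : K) * (A₂ : K) + (r : K)^2 * (w : K) := by
        have := Subtype.ext_iff.mp hone
        push_cast at this
        exact this
      have h3 : (t : K) = (r : K)^2 * ((w : K) * (x : K)) := by
        have h4 := Subtype.ext_iff.mp hft
        rw [hfK t] at h4
        push_cast at h4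
        rw [h4, hfK x]
      push_cast
      rw [ha₀K, hb₀K, h3]
      linear_combination (x : K) * h2
    rw [hxeq]
    exact Ideal.add_mem _ (Ideal.mul_mem_left _ _ (Ideal.mul_mem_mul ha₀ hb₀)) htab
  · -- easy direction
    rw [Ideal.mul_le]
    intro x hx y hy
    show f (x * y) ∈ 𝔞' * 𝔟'
    rw [map_mul]
    exact Ideal.mul_mem_mul hx hy
end

section
/- Let O be the order of conductor f in an imaginary quadratic field K, where f = l_1^{λ_1}⋯l_t^{λ_t} with the l_k distinct primes and λ_k > 0. Let 𝔞 be a proper O-ideal, and let m be an arbitrary positive integer written as m = n · l_1^{h_1}⋯l_t^{h_t}, where n is a positive integer relatively prime to f and h_1, …, h_t ≥ 0. Then N(𝔞) = m if and only if there exist a proper O-ideal 𝔟 with N(𝔟) = n and proper O-ideals 𝔠_1, …, 𝔠_t with N(𝔠_k) = l_k^{h_k} such that 𝔞 = 𝔟 · 𝔠_1⋯𝔠_t. -/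
open NumberField

section Aux

variable {R : Type*} [CommRing R]

/-- If the quotient by `I` has positive cardinality `c`, then `(c : R) ∈ I`. -/
lemma auxNS_natCast_mem (I : Ideal R) {c : ℕ} (hc : c ≠ 0)
    (h : Nat.card (R ⧸ I) = c) : (c : R) ∈ I := by
  have hfin : Finite (R ⧸ I) := Nat.finite_of_card_ne_zero (by rw [h]; exact hc)
  have h0 : (c : R ⧸ I) = 0 := by
    have h1 : (Nat.card (R ⧸ I)) • (1 : R ⧸ I) = 0 := card_nsmul_eq_zero'
    rw [h, nsmul_eq_mul, mul_one] at h1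
    exact h1
  rwa [← map_natCast (Ideal.Quotient.mk I), Ideal.Quotient.eq_zero_iff_mem] at h0

lemma auxNS_isCoprime (I J : Ideal R) {a b : ℕ} (hab : Nat.Coprime a b)
    (ha : (a : R) ∈ I) (hb : (b : R) ∈ J) : IsCoprime I J := by
  rw [Ideal.isCoprime_iff_sup_eq, Ideal.eq_top_iff_one]
  have h1 : (1 : ℤ) = a * Nat.gcdA a b + b * Nat.gcdB a b := by
    have := Nat.gcd_eq_gcd_ab a b
    rwa [hab, Nat.cast_one] at this
  have h2 : (1 : R) = (a : R) * ((Nat.gcdA a b : ℤ) : R) + (b : R) * ((Nat.gcdB a b : ℤ) : R) := by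
    have := congrArg (fun z : ℤ => (z : R)) h1
    push_cast at this
    simpa using this
  rw [h2]
  exact add_mem (Ideal.mem_sup_left (I.mul_mem_right _ ha))
    (Ideal.mem_sup_right (J.mul_mem_right _ hb))

lemma auxNS_card_quot_mul (I J : Ideal R) (h : IsCoprime I J) :
    Nat.card (R ⧸ (I * J)) = Nat.card (R ⧸ I) * Nat.card (R ⧸ J) := by
  rw [Nat.card_congr (Ideal.quotientMulEquivQuotientProd I J h).toEquiv, Nat.card_prod]

lemma auxNS_card_quot_top : Nat.card (R ⧸ (⊤ : Ideal R)) = 1 := by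
  have : Subsingleton (R ⧸ (⊤ : Ideal R)) := by
    rw [Ideal.Quotient.subsingleton_iff]
  exact Nat.card_eq_one_iff_unique.mpr ⟨this, inferInstance⟩

lemma auxNS_card_quot_prod {ι : Type*} [DecidableEq ι] (s : Finset ι) (J : ι → Ideal R)
    (hcop : ∀ i ∈ s, ∀ j ∈ s, i ≠ j → IsCoprime (J i) (J j)) :
    Nat.card (R ⧸ ∏ i ∈ s, J i) = ∏ i ∈ s, Nat.card (R ⧸ J i) := by
  induction s using Finset.induction with
  | empty => simp only [Finset.prod_empty, Ideal.one_eq_top]; exact auxNS_card_quot_top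
  | @insert a s hi ih =>
    rw [Finset.prod_insert hi, Finset.prod_insert hi,
      auxNS_card_quot_mul _ _ (IsCoprime.prod_right fun i his =>
        hcop a (Finset.mem_insert_self a s) i (Finset.mem_insert_of_mem his)
          (fun e => hi (e ▸ his))),
      ih (fun i hisa j hjsa hij =>
        hcop i (Finset.mem_insert_of_mem hisa) j (Finset.mem_insert_of_mem hjsa) hij)]

lemma auxNS_finite_double_quot {I : Ideal R} (S : Ideal (R ⧸ I)) [Finite (R ⧸ I)] :
    Finite ((R ⧸ I) ⧸ S) :=
  Finite.of_surjective _ (Submodule.Quotient.mk_surjective S)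

lemma auxNS_finite_quot_of_le {I J : Ideal R} (hIJ : I ≤ J) [Finite (R ⧸ I)] :
    Finite (R ⧸ J) := by
  haveI := auxNS_finite_double_quot (J.map (Ideal.Quotient.mk I))
  exact Finite.of_surjective (DoubleQuot.quotQuotEquivQuotOfLE hIJ)
    (DoubleQuot.quotQuotEquivQuotOfLE hIJ).surjective

lemma auxNS_card_quot_dvd {I J : Ideal R} (hIJ : I ≤ J) [Finite (R ⧸ I)] :
    Nat.card (R ⧸ J) ∣ Nat.card (R ⧸ I) := by
  rw [← Nat.card_congr (DoubleQuot.quotQuotEquivQuotOfLE hIJ).toEquiv]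
  exact ⟨Nat.card (J.map (Ideal.Quotient.mk I)), by
    rw [mul_comm]; exact Submodule.card_eq_card_quotient_mul_card _⟩

lemma auxNS_prime_dvd (I : Ideal R) {c : ℕ} (hc : (c : R) ∈ I) [Finite (R ⧸ I)]
    {p : ℕ} (hp : p.Prime) (hpd : p ∣ Nat.card (R ⧸ I)) : p ∣ c := by
  cases nonempty_fintype (R ⧸ I)
  haveI : Fact p.Prime := ⟨hp⟩
  rw [Nat.card_eq_fintype_card] at hpd
  obtain ⟨x, hx⟩ := exists_prime_addOrderOf_dvd_card p hpd
  have hcx : c • x = 0 := by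
    have h0 : (c : R ⧸ I) = 0 := by
      rwa [← map_natCast (Ideal.Quotient.mk I), Ideal.Quotient.eq_zero_iff_mem]
    rw [nsmul_eq_mul, h0, zero_mul]
  rw [← hx]
  exact addOrderOf_dvd_of_nsmul_eq_zero hcx

end Aux


section Aux2

lemma auxNS_dvd_of_primes {a m n s : ℕ} (ha : a ∣ m) (hm : m = n * s)
    (hns : Nat.Coprime n s) (hp : ∀ p, p.Prime → p ∣ a → p ∣ n) : a ∣ n := by
  have has : Nat.Coprime a s := by
    by_contra hg
    obtain ⟨p, hp', hpd⟩ := Nat.exists_prime_and_dvd hg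
    have h1 : p ∣ a := hpd.trans (Nat.gcd_dvd_left a s)
    have h2 : p ∣ s := hpd.trans (Nat.gcd_dvd_right a s)
    have h3 : p ∣ n := hp p hp' h1
    have : p ∣ 1 := hns ▸ Nat.dvd_gcd h3 h2
    exact hp'.one_lt.ne' (Nat.eq_one_of_dvd_one this)
  exact has.dvd_of_dvd_mul_right (hm ▸ ha)

lemma auxNS_eq_of_dvd_mul {d a e b : ℕ} (hd : d ∣ a) (he : e ∣ b)
    (h : d * e = a * b) (hd0 : 0 < d) (he0 : 0 < e) : d = a ∧ e = b := by
  obtain ⟨x, rfl⟩ := hd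
  obtain ⟨y, rfl⟩ := he
  have hxy : x * y = 1 := by
    have h1 : (d * e) * (x * y) = (d * e) * 1 := by ring_nf; ring_nf at h; omega
    exact Nat.eq_of_mul_eq_mul_left (Nat.mul_pos hd0 he0) h1
  have hx : x = 1 := Nat.eq_one_of_dvd_one ⟨y, hxy.symm⟩
  have hy : y = 1 := Nat.eq_one_of_dvd_one ⟨x, by rw [← hxy]; ring⟩
  subst hx; subst hy; simp

lemma auxNS_prod_eq {ι : Type*} [DecidableEq ι] (s : Finset ι) (N L : ι → ℕ)
    (hd : ∀ i ∈ s, N i ∣ L i) (hN : ∀ i ∈ s, 0 < N i)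
    (h : ∏ i ∈ s, N i = ∏ i ∈ s, L i) : ∀ i ∈ s, N i = L i := by
  induction s using Finset.induction with
  | empty => simp
  | @insert a s hi ih =>
    rw [Finset.prod_insert hi, Finset.prod_insert hi] at h
    have hprodpos : 0 < ∏ i ∈ s, N i :=
      Finset.prod_pos fun i his => hN i (Finset.mem_insert_of_mem his)
    have hpair := auxNS_eq_of_dvd_mul (hd a (Finset.mem_insert_self a s))
      (Finset.prod_dvd_prod_of_dvd N L fun i his => hd i (Finset.mem_insert_of_mem his))
      h (hN a (Finset.mem_insert_self a s)) hprodpos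
    intro i hisa
    rcases Finset.mem_insert.mp hisa with rfl | his
    · exact hpair.1
    · exact ih (fun j hjs => hd j (Finset.mem_insert_of_mem hjs))
        (fun j hjs => hN j (Finset.mem_insert_of_mem hjs)) hpair.2 i his

variable {R : Type*} [CommRing R]

lemma auxNS_mul_add_le (A I J : Ideal R) : (A + I) * (A + J) ≤ A + I * J := by
  rw [Ideal.add_eq_sup, Ideal.add_eq_sup, Ideal.add_eq_sup]
  refine Ideal.mul_le.mpr fun r hr s hs => ?_
  obtain ⟨a, ha, i, hi, rfl⟩ := Submodule.mem_sup.mp hr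
  obtain ⟨a', ha', j, hj, rfl⟩ := Submodule.mem_sup.mp hs
  have hexp : (a + i) * (a' + j) = (a * a' + a * j + i * a') + i * j := by ring
  rw [hexp]
  exact Submodule.mem_sup.mpr ⟨a * a' + a * j + i * a',
    add_mem (add_mem (A.mul_mem_right _ ha) (A.mul_mem_right _ ha)) (A.mul_mem_left _ ha'),
    i * j, Ideal.mul_mem_mul hi hj, rfl⟩

lemma auxNS_prod_add_le {ι : Type*} [DecidableEq ι] (A : Ideal R) (s : Finset ι) (y : ι → R) :
    ∏ i ∈ s, (A + Ideal.span {y i}) ≤ A + Ideal.span {∏ i ∈ s, y i} := by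
  induction s using Finset.induction with
  | empty => simp
  | @insert a s hi ih =>
    rw [Finset.prod_insert hi, Finset.prod_insert hi]
    calc (A + Ideal.span {y a}) * ∏ i ∈ s, (A + Ideal.span {y i})
        ≤ (A + Ideal.span {y a}) * (A + Ideal.span {∏ i ∈ s, y i}) :=
          Ideal.mul_mono le_rfl ih
      _ ≤ A + Ideal.span {y a} * Ideal.span {∏ i ∈ s, y i} := auxNS_mul_add_le _ _ _
      _ = A + Ideal.span {y a * ∏ i ∈ s, y i} := by
          rw [Ideal.span_singleton_mul_span_singleton]

lemma auxNS_le_mul {A I J : Ideal R} (hI : A ≤ I) (hJ : A ≤ J) (h : IsCoprime I J) :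
    A ≤ I * J := by
  obtain ⟨u, v, huv⟩ := h
  calc A = A * (u * I + v * J) := by rw [huv, mul_one]
    _ = u * (A * I) + v * (A * J) := by ring
    _ ≤ I * J := by
        refine sup_le ?_ ?_
        · exact le_trans Ideal.mul_le_right
            (le_trans (Ideal.mul_mono hJ le_rfl) (le_of_eq (mul_comm J I)))
        · exact le_trans Ideal.mul_le_right (Ideal.mul_mono hI le_rfl)

lemma auxNS_le_prod {ι : Type*} [DecidableEq ι] {A : Ideal R} (s : Finset ι) (J : ι → Ideal R)
    (hle : ∀ i ∈ s, A ≤ J i)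
    (hcop : ∀ i ∈ s, ∀ j ∈ s, i ≠ j → IsCoprime (J i) (J j)) :
    A ≤ ∏ i ∈ s, J i := by
  induction s using Finset.induction with
  | empty => simp [Ideal.one_eq_top]
  | @insert a s hi ih =>
    rw [Finset.prod_insert hi]
    refine auxNS_le_mul (hle a (Finset.mem_insert_self a s)) ?_ ?_
    · exact ih (fun i his => hle i (Finset.mem_insert_of_mem his))
        (fun i his j hjs hij =>
          hcop i (Finset.mem_insert_of_mem his) j (Finset.mem_insert_of_mem hjs) hij)
    · exact IsCoprime.prod_right fun i his =>
        hcop a (Finset.mem_insert_self a s) i (Finset.mem_insert_of_mem his)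
          (fun e => hi (e ▸ his))

end Aux2


lemma auxNS_proper_factor {K : Type*} [Field K] (O : Subring K) (I J : Ideal O)
    (h : IsProperIdeal O (I * J)) : IsProperIdeal O I := by
  constructor
  · intro hbot
    exact h.1 (by rw [hbot, Ideal.bot_mul])
  · intro β
    constructor
    · intro hβ
      apply (h.2 β).mp
      intro a ha
      refine Submodule.mul_induction_on ha ?_ ?_
      · intro i hi j hj
        obtain ⟨c, hc, hc'⟩ := hβ i hi
        refine ⟨c * j, Ideal.mul_mem_mul hc hj, ?_⟩
        push_cast
        rw [← mul_assoc, hc']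
      · rintro x y ⟨cx, hcx, ex⟩ ⟨cy, hcy, ey⟩
        refine ⟨cx + cy, add_mem hcx hcy, ?_⟩
        push_cast
        rw [mul_add, ex, ey]
    · intro hβO a ha
      refine ⟨⟨β, hβO⟩ * a, I.mul_mem_left _ ha, ?_⟩
      push_cast
      ring

theorem norm_splitting_general_conductor
    (K : Type*) [Field K] [NumberField K]
    (hdeg : Module.finrank ℚ K = 2) (himag : IsEmpty (K →+* ℝ))
    (O : Subring K) (hO : IsQuadraticOrder K O)
    (f : ℕ) (hf : orderConductor K O = f)
    (t : ℕ) (l : Fin t → ℕ) (lexp : Fin t → ℕ)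
    (hl : ∀ k, (l k).Prime) (hlinj : Function.Injective l) (hlexp : ∀ k, 0 < lexp k)
    (hffact : f = ∏ k, l k ^ lexp k)
    (𝔞 : Ideal O) (h𝔞 : IsProperIdeal O 𝔞)
    (m n : ℕ) (h : Fin t → ℕ) (hn : 0 < n) (hnf : Nat.Coprime n f)
    (hmfact : m = n * ∏ k, l k ^ h k) :
    Nat.card (↥O ⧸ 𝔞) = m ↔
      ∃ (𝔟 : Ideal O) (𝔠 : Fin t → Ideal O),
        IsProperIdeal O 𝔟 ∧ Nat.card (↥O ⧸ 𝔟) = n ∧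
        (∀ k, IsProperIdeal O (𝔠 k)) ∧ (∀ k, Nat.card (↥O ⧸ 𝔠 k) = l k ^ h k) ∧
        𝔞 = 𝔟 * ∏ k, 𝔠 k := by
  classical
  have hlf : ∀ k, l k ∣ f := fun k => hffact ▸
    dvd_trans (dvd_pow_self (l k) (hlexp k).ne') (Finset.dvd_prod_of_mem _ (Finset.mem_univ k))
  have hcopn : ∀ k, Nat.Coprime n (l k ^ h k) := fun k =>
    (Nat.Coprime.coprime_dvd_right (hlf k) hnf).pow_right _
  have hcopkk : ∀ j k : Fin t, j ≠ k → Nat.Coprime (l j ^ h j) (l k ^ h k) := fun j k hjk =>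
    ((Nat.coprime_primes (hl j) (hl k)).mpr (fun e => hjk (hlinj e))).pow _ _
  have hlh0 : ∀ k, 0 < l k ^ h k := fun k => pow_pos (hl k).pos _
  have hm0 : 0 < m := hmfact ▸ Nat.mul_pos hn (Finset.prod_pos fun k _ => hlh0 k)
  have hcopnprod : Nat.Coprime n (∏ k, l k ^ h k) :=
    Nat.Coprime.prod_right fun k _ => hcopn k
  constructor
  · -- forward direction
    intro hcard
    haveI hfinA : Finite (↥O ⧸ 𝔞) :=
      Nat.finite_of_card_ne_zero (by rw [hcard]; exact hm0.ne')
    have hmA : ((m : ℕ) : ↥O) ∈ 𝔞 := auxNS_natCast_mem 𝔞 hm0.ne' hcard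
    set 𝔟 : Ideal ↥O := 𝔞 + Ideal.span {((n : ℕ) : ↥O)} with h𝔟
    set 𝔠 : Fin t → Ideal ↥O :=
      fun k => 𝔞 + Ideal.span {((l k ^ h k : ℕ) : ↥O)} with h𝔠
    have hnB : ((n : ℕ) : ↥O) ∈ 𝔟 := by
      rw [h𝔟, Ideal.add_eq_sup]
      exact Ideal.mem_sup_right (Ideal.subset_span rfl)
    have hkC : ∀ k, ((l k ^ h k : ℕ) : ↥O) ∈ 𝔠 k := by
      intro k
      simp only [h𝔠, Ideal.add_eq_sup]
      exact Ideal.mem_sup_right (Ideal.subset_span rfl)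
    have hAB : 𝔞 ≤ 𝔟 := by rw [h𝔟, Ideal.add_eq_sup]; exact le_sup_left
    have hAC : ∀ k, 𝔞 ≤ 𝔠 k := by
      intro k; simp only [h𝔠, Ideal.add_eq_sup]; exact le_sup_left
    have hcopBC : ∀ k, IsCoprime 𝔟 (𝔠 k) := fun k =>
      auxNS_isCoprime _ _ (hcopn k) hnB (hkC k)
    have hcopCC : ∀ j k, j ≠ k → IsCoprime (𝔠 j) (𝔠 k) := fun j k hjk =>
      auxNS_isCoprime _ _ (hcopkk j k hjk) (hkC j) (hkC k)
    have heq : 𝔞 = 𝔟 * ∏ k, 𝔠 k := by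
      apply le_antisymm
      · exact auxNS_le_mul hAB
          (auxNS_le_prod Finset.univ 𝔠 (fun k _ => hAC k)
            (fun i _ j _ hij => hcopCC i j hij))
          (IsCoprime.prod_right fun k _ => hcopBC k)
      · have hcast : ((n : ℕ) : ↥O) * ∏ k, ((l k ^ h k : ℕ) : ↥O) = ((m : ℕ) : ↥O) := by
          rw [hmfact]; push_cast; ring
        calc 𝔟 * ∏ k, 𝔠 k
            ≤ 𝔟 * (𝔞 + Ideal.span {∏ k, ((l k ^ h k : ℕ) : ↥O)}) :=
              Ideal.mul_mono le_rfl (auxNS_prod_add_le 𝔞 Finset.univ _)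
          _ ≤ 𝔞 + Ideal.span {((n : ℕ) : ↥O)} *
                Ideal.span {∏ k, ((l k ^ h k : ℕ) : ↥O)} := auxNS_mul_add_le _ _ _
          _ = 𝔞 + Ideal.span {((m : ℕ) : ↥O)} := by
              rw [Ideal.span_singleton_mul_span_singleton, hcast]
          _ ≤ 𝔞 := by
              rw [Ideal.add_eq_sup]
              exact sup_le le_rfl ((Ideal.span_singleton_le_iff_mem _).mpr hmA)
    haveI hfinB : Finite (↥O ⧸ 𝔟) := auxNS_finite_quot_of_le hAB
    have hfinC : ∀ k, Finite (↥O ⧸ 𝔠 k) := fun k => auxNS_finite_quot_of_le (hAC k)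
    have hNbn : Nat.card (↥O ⧸ 𝔟) ∣ n := by
      refine auxNS_dvd_of_primes (hcard ▸ auxNS_card_quot_dvd hAB) hmfact hcopnprod ?_
      exact fun p hp hpd => auxNS_prime_dvd 𝔟 hnB hp hpd
    have hNk : ∀ k, Nat.card (↥O ⧸ 𝔠 k) ∣ l k ^ h k := by
      intro k
      haveI := hfinC k
      have h1 : Nat.card (↥O ⧸ 𝔠 k) ∣ m := hcard ▸ auxNS_card_quot_dvd (hAC k)
      have hm' : m = l k ^ h k * (n * ∏ j ∈ Finset.univ.erase k, l j ^ h j) := by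
        rw [hmfact, ← Finset.mul_prod_erase Finset.univ (fun j => l j ^ h j)
          (Finset.mem_univ k)]
        ring
      have hcop' : Nat.Coprime (l k ^ h k)
          (n * ∏ j ∈ Finset.univ.erase k, l j ^ h j) :=
        Nat.Coprime.mul_right ((hcopn k).symm)
          (Nat.Coprime.prod_right fun j hj =>
            hcopkk k j (fun e => (Finset.mem_erase.mp hj).1 e.symm))
      exact auxNS_dvd_of_primes h1 hm' hcop'
        (fun p hp hpd => auxNS_prime_dvd _ (hkC k) hp hpd)
    have hmul : Nat.card (↥O ⧸ 𝔟) * ∏ k, Nat.card (↥O ⧸ 𝔠 k) = n * ∏ k, l k ^ h k := by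
      rw [← auxNS_card_quot_prod Finset.univ 𝔠 (fun i _ j _ hij => hcopCC i j hij),
        ← auxNS_card_quot_mul _ _ (IsCoprime.prod_right fun k _ => hcopBC k),
        ← heq, hcard, hmfact]
    have hcardBpos : 0 < Nat.card (↥O ⧸ 𝔟) := Nat.card_pos
    have hcardCpos : ∀ k, 0 < Nat.card (↥O ⧸ 𝔠 k) := fun k => by
      haveI := hfinC k; exact Nat.card_pos
    have hpair := auxNS_eq_of_dvd_mul hNbn
      (Finset.prod_dvd_prod_of_dvd _ _ fun k _ => hNk k) hmul hcardBpos
      (Finset.prod_pos fun k _ => hcardCpos k)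
    have hPb : IsProperIdeal O 𝔟 := auxNS_proper_factor O 𝔟 _ (heq ▸ h𝔞)
    have hPc : ∀ k, IsProperIdeal O (𝔠 k) := by
      intro k
      have e : 𝔟 * ∏ j, 𝔠 j = 𝔠 k * (𝔟 * ∏ j ∈ Finset.univ.erase k, 𝔠 j) := by
        rw [← Finset.mul_prod_erase Finset.univ 𝔠 (Finset.mem_univ k)]
        ring
      exact auxNS_proper_factor O (𝔠 k) _ (by rw [← e, ← heq]; exact h𝔞)
    exact ⟨𝔟, 𝔠, hPb, hpair.1,
      hPc, fun k => auxNS_prod_eq Finset.univ _ _ (fun j _ => hNk j)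
        (fun j _ => hcardCpos j) hpair.2 k (Finset.mem_univ k), heq⟩
  · -- reverse direction
    rintro ⟨𝔟, 𝔠, hPb, hbn, hPc, hck, rfl⟩
    have hnB : ((n : ℕ) : ↥O) ∈ 𝔟 := auxNS_natCast_mem 𝔟 hn.ne' hbn
    have hkC : ∀ k, ((l k ^ h k : ℕ) : ↥O) ∈ 𝔠 k := fun k =>
      auxNS_natCast_mem _ (hlh0 k).ne' (hck k)
    have hcopBC : ∀ k, IsCoprime 𝔟 (𝔠 k) := fun k =>
      auxNS_isCoprime _ _ (hcopn k) hnB (hkC k)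
    have hcopCC : ∀ j k, j ≠ k → IsCoprime (𝔠 j) (𝔠 k) := fun j k hjk =>
      auxNS_isCoprime _ _ (hcopkk j k hjk) (hkC j) (hkC k)
    rw [auxNS_card_quot_mul _ _ (IsCoprime.prod_right fun k _ => hcopBC k),
      auxNS_card_quot_prod Finset.univ 𝔠 (fun i _ j _ hij => hcopCC i j hij),
      hbn, hmfact]
    exact congrArg (n * ·) (Finset.prod_congr rfl fun k _ => hck k)
end

section
/- Let O and O' be orders in an imaginary quadratic field K with O ⊆ O'. The homomorphism C(O) → C(O') from the ideal class group of O to the ideal class group of O' induced by 𝔞 ↦ 𝔞O' (extension of fractional ideals) is surjective; that is, for every class c' ∈ C(O') there exists a proper O-ideal 𝔞 with [𝔞O'] = c'. -/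
open Module

/-- Two (invertible) ideals of an order are in the same class of the ideal class
group `C(O)` iff they agree up to nonzero principal multiples:
`[𝔞] = [𝔟]` in `C(O)` iff `(α)𝔞 = (β)𝔟` for some nonzero `α, β ∈ O`. -/
def SameIdealClass {K : Type*} [Field K] (O : Subring K) (𝔞 𝔟 : Ideal O) : Prop :=
  ∃ α β : O, α ≠ 0 ∧ β ≠ 0 ∧
    Ideal.span {α} * 𝔞 = Ideal.span {β} * 𝔟

/- ### Auxiliary lemmas -/

/-- A primitive integral binary quadratic form represents a value coprime to any
nonzero integer `f`. -/
lemma exists_coprime_form_value (a b c f u v w : ℤ) (hbez : u*a + v*b + w*c = 1) (hf : f ≠ 0) :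
    ∃ x y : ℤ, 0 < x ∧ 0 < y ∧ IsCoprime (a*x^2 + b*x*y + c*y^2) f := by
  classical
  refine ⟨∏ p ∈ f.natAbs.primeFactors.filter (fun p : ℕ => (p:ℤ) ∣ a ∧ ¬ (p:ℤ) ∣ c), (p:ℤ),
          ∏ p ∈ f.natAbs.primeFactors.filter (fun p : ℕ => ¬ (p:ℤ) ∣ a), (p:ℤ), ?_, ?_, ?_⟩
  · refine Finset.prod_pos fun p hp => ?_
    have := Nat.prime_of_mem_primeFactors (Finset.mem_filter.mp hp).1
    exact_mod_cast this.pos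
  · refine Finset.prod_pos fun p hp => ?_
    have := Nat.prime_of_mem_primeFactors (Finset.mem_filter.mp hp).1
    exact_mod_cast this.pos
  · set x := ∏ p ∈ f.natAbs.primeFactors.filter (fun p : ℕ => (p:ℤ) ∣ a ∧ ¬ (p:ℤ) ∣ c), (p:ℤ) with hx
    set y := ∏ p ∈ f.natAbs.primeFactors.filter (fun p : ℕ => ¬ (p:ℤ) ∣ a), (p:ℤ) with hy
    have hmemx : ∀ p : ℕ, p.Prime →
        ((p:ℤ) ∣ x ↔ (p ∈ f.natAbs.primeFactors ∧ (p:ℤ) ∣ a ∧ ¬ (p:ℤ) ∣ c)) := by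
      intro p pp
      constructor
      · intro hdvd
        obtain ⟨q, hq, hpq⟩ := (Prime.dvd_finset_prod_iff (Nat.prime_iff_prime_int.mp pp) _).mp hdvd
        have : p = q := by
          have := Int.natCast_dvd_natCast.mp hpq
          exact (Nat.prime_dvd_prime_iff_eq pp
            (Nat.prime_of_mem_primeFactors (Finset.mem_filter.mp hq).1)).mp this
        subst this
        exact ⟨(Finset.mem_filter.mp hq).1, (Finset.mem_filter.mp hq).2⟩
      · intro ⟨h1, h2⟩
        exact Finset.dvd_prod_of_mem _ (Finset.mem_filter.mpr ⟨h1, h2⟩)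
    have hmemy : ∀ p : ℕ, p.Prime →
        ((p:ℤ) ∣ y ↔ (p ∈ f.natAbs.primeFactors ∧ ¬ (p:ℤ) ∣ a)) := by
      intro p pp
      constructor
      · intro hdvd
        obtain ⟨q, hq, hpq⟩ := (Prime.dvd_finset_prod_iff (Nat.prime_iff_prime_int.mp pp) _).mp hdvd
        have : p = q := by
          have := Int.natCast_dvd_natCast.mp hpq
          exact (Nat.prime_dvd_prime_iff_eq pp
            (Nat.prime_of_mem_primeFactors (Finset.mem_filter.mp hq).1)).mp this
        subst this
        exact ⟨(Finset.mem_filter.mp hq).1, (Finset.mem_filter.mp hq).2⟩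
      · intro ⟨h1, h2⟩
        exact Finset.dvd_prod_of_mem _ (Finset.mem_filter.mpr ⟨h1, h2⟩)
    rw [Int.isCoprime_iff_gcd_eq_one]
    by_contra hne
    obtain ⟨p, hp, hpd⟩ := Nat.exists_prime_and_dvd hne
    have hpp : Prime (p:ℤ) := (Nat.prime_iff_prime_int.mp hp)
    have hpQ : (p:ℤ) ∣ a*x^2 + b*x*y + c*y^2 :=
      (Int.natCast_dvd_natCast.mpr hpd).trans (Int.gcd_dvd_left _ _)
    have hpf : (p:ℤ) ∣ f :=
      (Int.natCast_dvd_natCast.mpr hpd).trans (Int.gcd_dvd_right _ _)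
    have hpS : p ∈ f.natAbs.primeFactors :=
      Nat.mem_primeFactors.mpr ⟨hp, Int.natCast_dvd.mp hpf, Int.natAbs_ne_zero.mpr hf⟩
    by_cases hpa : (p:ℤ) ∣ a
    · by_cases hpc : (p:ℤ) ∣ c
      · have hpx : ¬ (p:ℤ) ∣ x := fun hd => ((hmemx p hp).mp hd).2.2 hpc
        have hpy : ¬ (p:ℤ) ∣ y := fun hd => ((hmemy p hp).mp hd).2 hpa
        have hpb : (p:ℤ) ∣ b := by
          have h1 : (p:ℤ) ∣ b*x*y := by
            have : b*x*y = (a*x^2 + b*x*y + c*y^2) - a*x^2 - c*y^2 := by ring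
            rw [this]
            exact dvd_sub (dvd_sub hpQ (hpa.mul_right _)) (hpc.mul_right _)
          rcases hpp.dvd_mul.mp h1 with h2 | h2
          · rcases hpp.dvd_mul.mp h2 with h3 | h3
            · exact h3
            · exact absurd h3 hpx
          · exact absurd h2 hpy
        have : (p:ℤ) ∣ 1 :=
          hbez ▸ dvd_add (dvd_add (hpa.mul_left u) (hpb.mul_left v)) (hpc.mul_left w)
        exact hpp.not_dvd_one this
      · have hpx : (p:ℤ) ∣ x := (hmemx p hp).mpr ⟨hpS, hpa, hpc⟩
        have h1 : (p:ℤ) ∣ c*y^2 := by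
          have : c*y^2 = (a*x^2 + b*x*y + c*y^2) - a*x^2 - b*x*y := by ring
          rw [this]
          exact dvd_sub (dvd_sub hpQ (hpa.mul_right _)) ((hpx.mul_left b).mul_right y)
        rcases hpp.dvd_mul.mp h1 with h2 | h2
        · exact hpc h2
        · have hpy := (hpp.dvd_of_dvd_pow h2)
          exact ((hmemy p hp).mp hpy).2 hpa
    · have hpy : (p:ℤ) ∣ y := (hmemy p hp).mpr ⟨hpS, hpa⟩
      have h1 : (p:ℤ) ∣ a*x^2 := by
        have : a*x^2 = (a*x^2 + b*x*y + c*y^2) - b*x*y - c*y^2 := by ring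
        rw [this]
        exact dvd_sub (dvd_sub hpQ ((hpy.mul_left (b*x)))) ((hpy.pow two_ne_zero).mul_left c)
      rcases hpp.dvd_mul.mp h1 with h2 | h2
      · exact hpa h2
      · have hpx := hpp.dvd_of_dvd_pow h2
        exact ((hmemx p hp).mp hpx).2.1 |> fun h => hpa h

lemma finite_of_free_finrank_two {M : Type*} [AddCommGroup M] [Module ℤ M] [Module.Free ℤ M]
    (h : Module.finrank ℤ M = 2) : Module.Finite ℤ M := by
  have hr : Module.rank ℤ M < Cardinal.aleph0 := by
    by_contra hge
    push_neg at hge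
    have : Module.finrank ℤ M = 0 := by
      rw [Module.finrank, Cardinal.toNat_apply_of_aleph0_le hge]
    omega
  rw [Module.Free.rank_eq_card_chooseBasisIndex, Cardinal.mk_lt_aleph0_iff] at hr
  haveI := Fintype.ofFinite (Module.Free.ChooseBasisIndex ℤ M)
  exact Module.Finite.of_basis (Module.Free.chooseBasis ℤ M)

lemma den_mul_cast {K : Type*} [Field K] [CharZero K] (q : ℚ) :
    ((q.den:ℕ):K) * (q:K) = ((q.num:ℤ):K) := by
  have hd : ((q.den:ℕ):K) ≠ 0 := Nat.cast_ne_zero.mpr q.den_nz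
  rw [Rat.cast_def]
  push_cast
  field_simp

lemma pair_basis {K : Type*} [Field K] [CharZero K] (M : Submodule ℤ K)
    [Module.Free ℤ M] [Module.Finite ℤ M] (hfr : Module.finrank ℤ ↥M = 2) :
    ∃ d0 d1 : K, d0 ∈ M ∧ d1 ∈ M ∧ (∀ z ∈ M, ∃ m n : ℤ, z = (m:K)*d0 + (n:K)*d1) ∧
      (∀ m n : ℤ, (m:K)*d0 + (n:K)*d1 = 0 → m = 0 ∧ n = 0) := by
  let b := (Module.finBasis ℤ ↥M).reindex (finCongr hfr)
  refine ⟨(b 0 : ↥M), (b 1 : ↥M), (b 0).2, (b 1).2, ?_, ?_⟩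
  · intro z hz
    have := b.sum_repr ⟨z, hz⟩
    rw [Fin.sum_univ_two] at this
    refine ⟨b.repr ⟨z, hz⟩ 0, b.repr ⟨z, hz⟩ 1, ?_⟩
    have := congrArg (Submodule.subtype M) this
    simp only [map_add, map_zsmul, Submodule.coe_subtype] at this
    simpa [zsmul_eq_mul] using this.symm
  · intro m n hmn
    have hli : LinearIndependent ℤ (M.subtype ∘ b) :=
      b.linearIndependent.map' M.subtype (Submodule.ker_subtype M)
    have := Fintype.linearIndependent_iff.mp hli ![m, n] ?_
    · exact ⟨this 0, this 1⟩
    · rw [Fin.sum_univ_two]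
      simp only [Matrix.cons_val_zero, Matrix.cons_val_one, Matrix.head_cons, Function.comp_apply,
        Submodule.coe_subtype, zsmul_eq_mul]
      exact_mod_cast hmn

noncomputable def subringEquiv {K : Type*} [Field K] (S : Subring K) :
    ↥S ≃ₗ[ℤ] ↥(AddSubgroup.toIntSubmodule S.toAddSubgroup) where
  toFun x := ⟨(x:K), x.2⟩
  invFun x := ⟨(x:K), x.2⟩
  left_inv x := rfl
  right_inv x := rfl
  map_add' x y := rfl
  map_smul' m x := by
    apply Subtype.ext
    simp

lemma subring_pair {K : Type*} [Field K] [CharZero K] (S : Subring K)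
    (h1 : Module.Free ℤ ↥S) (h2 : Module.finrank ℤ ↥S = 2) :
    ∃ d0 d1 : K, d0 ∈ S ∧ d1 ∈ S ∧ (∀ z ∈ S, ∃ m n : ℤ, z = (m:K)*d0 + (n:K)*d1) ∧
      (∀ m n : ℤ, (m:K)*d0 + (n:K)*d1 = 0 → m = 0 ∧ n = 0) := by
  haveI := h1
  haveI : Module.Finite ℤ ↥S := finite_of_free_finrank_two h2
  haveI : Module.Free ℤ ↥(AddSubgroup.toIntSubmodule S.toAddSubgroup) :=
    Module.Free.of_equiv (subringEquiv S)
  haveI : Module.Finite ℤ ↥(AddSubgroup.toIntSubmodule S.toAddSubgroup) :=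
    Module.Finite.equiv (subringEquiv S)
  have h3 : Module.finrank ℤ ↥(AddSubgroup.toIntSubmodule S.toAddSubgroup) = 2 := by
    rw [← (subringEquiv S).finrank_eq, h2]
  obtain ⟨d0, d1, h0, h1', hsp, hin⟩ := pair_basis _ h3
  exact ⟨d0, d1, h0, h1', fun z hz => hsp z hz, hin⟩

lemma ideal_pair_basis {K : Type*} [Field K] [CharZero K] (O' : Subring K)
    (hfree : Module.Free ℤ ↥O') (hfr : Module.finrank ℤ ↥O' = 2)
    (𝔟' : Ideal O') (hbne : 𝔟' ≠ ⊥) :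
    ∃ α β : K, (∃ t : ↥O', t ∈ 𝔟' ∧ (t:K) = α) ∧ (∃ t : ↥O', t ∈ 𝔟' ∧ (t:K) = β) ∧
      (∀ t : ↥O', t ∈ 𝔟' → ∃ m n : ℤ, (t:K) = (m:K)*α + (n:K)*β) ∧
      (∀ m n : ℤ, (m:K)*α + (n:K)*β = 0 → m = 0 ∧ n = 0) := by
  classical
  haveI := hfree
  haveI : Module.Finite ℤ ↥O' := finite_of_free_finrank_two hfr
  obtain ⟨γ, hγ𝔟, hγ0⟩ := (Submodule.ne_bot_iff _).mp hbne
  set N : Submodule ℤ ↥O' := Submodule.restrictScalars ℤ 𝔟' with hN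
  haveI : IsNoetherian ℤ ↥O' := isNoetherian_of_isNoetherianRing_of_finite ℤ ↥O'
  haveI : Module.Finite ℤ ↥N := Module.Finite.iff_fg.mpr (IsNoetherian.noetherian N)
  haveI : Module.Free ℤ ↥N := inferInstance
  have hle : Module.finrank ℤ ↥N ≤ 2 := hfr ▸ N.finrank_le
  let φ : ↥O' →ₗ[ℤ] ↥N :=
    { toFun := fun z => ⟨γ * z, Ideal.mul_mem_right _ _ hγ𝔟⟩
      map_add' := fun z₁ z₂ => by apply Subtype.ext; simp [mul_add]
      map_smul' := fun m z => by apply Subtype.ext; simp; ring }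
  have hφ : Function.Injective φ := by
    intro z₁ z₂ hz
    have : γ * z₁ = γ * z₂ := congrArg Subtype.val hz
    exact mul_left_cancel₀ hγ0 this
  have hge : 2 ≤ Module.finrank ℤ ↥N := hfr ▸ LinearMap.finrank_le_finrank_of_injective hφ
  have hfrN : Module.finrank ℤ ↥N = 2 := le_antisymm hle hge
  let cmap : ↥O' →ₗ[ℤ] K := (O'.subtype.toAddMonoidHom).toIntLinearMap
  have hcinj : Function.Injective cmap := Subtype.coe_injective
  set M𝔟 : Submodule ℤ K := N.map cmap with hM𝔟
  let e : ↥N ≃ₗ[ℤ] ↥M𝔟 := Submodule.equivMapOfInjective cmap hcinj N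
  haveI : Module.Free ℤ ↥M𝔟 := Module.Free.of_equiv e
  haveI : Module.Finite ℤ ↥M𝔟 := Module.Finite.equiv e
  have hfrM : Module.finrank ℤ ↥M𝔟 = 2 := by rw [← e.finrank_eq]; exact hfrN
  obtain ⟨d0, d1, h0, h1, hsp, hin⟩ := pair_basis M𝔟 hfrM
  have hmem : ∀ z : K, z ∈ M𝔟 ↔ ∃ t : ↥O', t ∈ 𝔟' ∧ (t:K) = z := by
    intro z
    constructor
    · rintro ⟨t, ht, rfl⟩
      exact ⟨t, ht, rfl⟩
    · rintro ⟨t, ht, rfl⟩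
      exact ⟨t, ht, rfl⟩
  exact ⟨d0, d1, (hmem d0).mp h0, (hmem d1).mp h1,
    fun t ht => hsp _ ((hmem _).mpr ⟨t, ht, rfl⟩), hin⟩

set_option maxHeartbeats 1000000 in
/-- Surjectivity of `C(O) → C(O')`, `[𝔞] ↦ [𝔞O']`: since every class of `C(O')`
contains a proper (integral) `O'`-ideal, it is stated as: for every proper
`O'`-ideal `𝔟'` there is a proper `O`-ideal `𝔞` with `[𝔞O'] = [𝔟']` in `C(O')`. -/
theorem classGroup_extension_surjective
    (K : Type*) [Field K] [NumberField K]
    (hdeg : Module.finrank ℚ K = 2) (himag : IsEmpty (K →+* ℝ))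
    (O O' : Subring K) (hO : IsQuadraticOrder K O) (hO' : IsQuadraticOrder K O')
    (h : O ≤ O')
    (𝔟' : Ideal O') (h𝔟' : IsProperIdeal O' 𝔟') :
    ∃ 𝔞 : Ideal O, IsProperIdeal O 𝔞 ∧
      SameIdealClass O' (Ideal.map (Subring.inclusion h) 𝔞) 𝔟' := by
  classical
  obtain ⟨hfreeO, hfrO⟩ := hO
  obtain ⟨hfreeO', hfrO'⟩ := hO'
  obtain ⟨hbne, hprop⟩ := h𝔟'
  -- ℤ-bases of O and O'
  obtain ⟨e0, e1, he0, he1, hOspan, hOind⟩ := subring_pair O hfreeO hfrO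
  obtain ⟨e0', e1', he0', he1', hO'span, hO'ind⟩ := subring_pair O' hfreeO' hfrO'
  -- an irrational element of O
  obtain ⟨θ, hθO, hθirr⟩ : ∃ θ, θ ∈ O ∧ ∀ p q : ℤ, (q:K)*θ = (p:K) → q = 0 := by
    by_cases h0 : ∀ p q : ℤ, (q:K)*e0 = (p:K) → q = 0
    · exact ⟨e0, he0, h0⟩
    by_cases h1 : ∀ p q : ℤ, (q:K)*e1 = (p:K) → q = 0
    · exact ⟨e1, he1, h1⟩
    exfalso
    push_neg at h0 h1
    obtain ⟨p0, q0, hpq0, hq0⟩ := h0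
    obtain ⟨p1, q1, hpq1, hq1⟩ := h1
    have hrel : ((p1*q0 :ℤ):K)*e0 + ((-(p0*q1):ℤ):K)*e1 = 0 := by
      push_cast
      linear_combination (p1:K) * hpq0 - (p0:K) * hpq1
    obtain ⟨hA, hB⟩ := hOind _ _ hrel
    have hp1 : p1 = 0 := by
      rcases mul_eq_zero.mp hA with h' | h'
      · exact h'
      · exact absurd h' hq0
    rw [hp1] at hpq1
    have : q1 = 0 := by
      have he10 : e1 = 0 := by
        have : (q1:K) * e1 = 0 := by rw [hpq1]; norm_num
        rcases mul_eq_zero.mp this with h' | h'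
        · exact absurd (by exact_mod_cast h') hq1
        · exact h'
      exact absurd he10 (by
        intro hh
        have := hOind 0 1 (by rw [hh]; norm_num)
        exact one_ne_zero this.2)
    exact hq1 this
  -- denominators into O
  have hden : ∀ z : K, ∃ n : ℤ, n ≠ 0 ∧ (n:K)*z ∈ O := by
    have hpairli : LinearIndependent ℚ ![(1:K), θ] := by
      rw [LinearIndependent.pair_iff]
      intro s t hst
      have hst' : (s:K) + (t:K)*θ = 0 := by
        simpa [Rat.smul_def] using hst
      by_cases ht : t = 0
      · subst ht
        constructor
        · have : (s:K) = 0 := by simpa using hst'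
          exact_mod_cast this
        · rfl
      · exfalso
        apply ht
        have key : ((t.num * s.den:ℤ):K) * θ = ((-(s.num * t.den):ℤ):K) := by
          push_cast
          linear_combination ((s.den:K) * (t.den:K)) * hst' - (t.den:K) * den_mul_cast (K := K) s
            - θ * (s.den:K) * den_mul_cast (K := K) t
        have := hθirr _ _ key
        have ht0 : t.num = 0 := by
          rcases mul_eq_zero.mp this with h' | h'
          · exact h'
          · exact absurd h' (by exact_mod_cast s.den_nz)
        exact Rat.num_eq_zero.mp ht0
    have hsp : Submodule.span ℚ (Set.range ![(1:K), θ]) = ⊤ := by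
      apply Submodule.eq_top_of_finrank_eq
      rw [finrank_span_eq_card hpairli, hdeg]
      simp
    intro z
    have hz : z ∈ Submodule.span ℚ (Set.range ![(1:K), θ]) := by
      rw [hsp]; trivial
    rw [Submodule.mem_span_range_iff_exists_fun] at hz
    obtain ⟨cq, hcq⟩ := hz
    rw [Fin.sum_univ_two] at hcq
    simp only [Matrix.cons_val_zero, Matrix.cons_val_one, Matrix.head_cons] at hcq
    refine ⟨(cq 0).den * (cq 1).den, by positivity, ?_⟩
    have : ((((cq 0).den * (cq 1).den : ℤ)):K) * z
        = (((cq 0).num * (cq 1).den : ℤ):K) * 1 + (((cq 1).num * (cq 0).den : ℤ):K) * θ := by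
      push_cast
      have h0 := den_mul_cast (K := K) (cq 0)
      have h1 := den_mul_cast (K := K) (cq 1)
      have hcq' : (cq 0 : K) + (cq 1 : K) * θ = z := by
        simpa [Rat.smul_def] using hcq
      push_cast at h0 h1
      linear_combination -(((cq 0).den : K) * ((cq 1).den:K)) * hcq' + ((cq 1).den:K) * h0
        + θ * ((cq 0).den:K) * h1
    rw [this]
    exact O.add_mem (O.mul_mem (intCast_mem O _) (O.one_mem))
      (O.mul_mem (intCast_mem O _) hθO)
  -- the conductor
  obtain ⟨f, hf0, hfcond⟩ : ∃ f : ℤ, f ≠ 0 ∧ ∀ z ∈ O', (f:K)*z ∈ O := by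
    obtain ⟨n0, hn00, hn0O⟩ := hden e0'
    obtain ⟨n1, hn10, hn1O⟩ := hden e1'
    refine ⟨n0 * n1, mul_ne_zero hn00 hn10, ?_⟩
    intro z hz
    obtain ⟨m, n, hmn⟩ := hO'span z hz
    have : ((n0*n1 : ℤ):K) * z
        = ((m:ℤ):K)*((n1:ℤ):K)*(((n0:ℤ):K)*e0') + ((n:ℤ):K)*((n0:ℤ):K)*(((n1:ℤ):K)*e1') := by
      rw [hmn]; push_cast; ring
    rw [this]
    exact O.add_mem
      (O.mul_mem (O.mul_mem (intCast_mem O _) (intCast_mem O _)) hn0O)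
      (O.mul_mem (O.mul_mem (intCast_mem O _) (intCast_mem O _)) hn1O)
  -- ℤ-basis of 𝔟'
  obtain ⟨α, β, hαmem, hβmem, hspan, hind⟩ :=
    ideal_pair_basis O' hfreeO' hfrO' 𝔟' hbne
  obtain ⟨tα, htα, htαc⟩ := hαmem
  obtain ⟨tβ, htβ, htβc⟩ := hβmem
  have hβ0 : β ≠ 0 := by
    intro hb
    have := hOind 0 1  -- dummy to avoid unused warnings; real proof below
    have h' := hind 0 1 (by rw [hb]; norm_num)
    exact one_ne_zero h'.2
  set τ : K := α / β with hτdef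
  have hατ : α = τ * β := by
    rw [hτdef]; field_simp
  have hτirr : ∀ p q : ℤ, (q:K)*τ = (p:K) → q = 0 := by
    intro p q hpq
    have : (q:K)*α + ((-p : ℤ):K)*β = 0 := by
      rw [hατ]
      push_cast
      linear_combination β * hpq
    exact (hind _ _ this).1
  -- quadratic relation for τ
  obtain ⟨a, b, c, ha0, hrel, u, v, w, hbez⟩ : ∃ a b c : ℤ, a ≠ 0 ∧
      (a:K)*τ^2 + (b:K)*τ + (c:K) = 0 ∧ ∃ u v w : ℤ, u*a + v*b + w*c = 1 := by
    have hnli : ¬ LinearIndependent ℚ ![(1:K), τ, τ^2] := by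
      intro hli
      have hcard := LinearIndependent.fintype_card_le_finrank hli
      rw [hdeg] at hcard
      simp at hcard
    obtain ⟨g, hsum, i0, hi0⟩ := Fintype.not_linearIndependent_iff.mp hnli
    rw [Fin.sum_univ_three] at hsum
    simp only [Matrix.cons_val_zero, Matrix.cons_val_one, Matrix.head_cons,
      Matrix.cons_val_two, Matrix.tail_cons] at hsum
    have hsum' : ((g 0 : ℚ):K) + ((g 1 : ℚ):K)*τ + ((g 2 : ℚ):K)*τ^2 = 0 := by
      simpa [Rat.smul_def] using hsum
    have hg2 : g 2 ≠ 0 := by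
      intro h2
      rw [h2] at hsum'
      push_cast at hsum'
      by_cases hg1 : g 1 = 0
      · rw [hg1] at hsum'
        push_cast at hsum'
        have hg0 : g 0 = 0 := by
          have : ((g 0 : ℚ):K) = 0 := by linear_combination hsum'
          exact_mod_cast this
        apply hi0
        fin_cases i0 <;> assumption
      · have h0' := den_mul_cast (K := K) (g 0)
        have h1' := den_mul_cast (K := K) (g 1)
        push_cast at h0' h1'
        have key : (((g 1).num * (g 0).den : ℤ):K) * τ = ((-((g 0).num * (g 1).den) : ℤ):K) := by
          push_cast
          linear_combination (((g 0).den:K) * ((g 1).den:K)) * hsum' - ((g 1).den:K) * h0'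
            - τ * ((g 0).den:K) * h1'
        have := hτirr _ _ key
        have : (g 1).num = 0 := by
          rcases mul_eq_zero.mp this with h' | h'
          · exact h'
          · exact absurd h' (by exact_mod_cast (g 0).den_nz)
        exact hg1 (Rat.num_eq_zero.mp this)
    have h0' := den_mul_cast (K := K) (g 0)
    have h1' := den_mul_cast (K := K) (g 1)
    have h2' := den_mul_cast (K := K) (g 2)
    push_cast at h0' h1' h2'
    set a₀ : ℤ := (g 2).num * (g 0).den * (g 1).den with ha₀
    set b₀ : ℤ := (g 1).num * (g 0).den * (g 2).den with hb₀
    set c₀ : ℤ := (g 0).num * (g 1).den * (g 2).den with hc₀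
    have ha₀0 : a₀ ≠ 0 := by
      have : (g 2).num ≠ 0 := Rat.num_ne_zero.mpr hg2
      have d0 : ((g 0).den : ℤ) ≠ 0 := by exact_mod_cast (g 0).den_nz
      have d1 : ((g 1).den : ℤ) ≠ 0 := by exact_mod_cast (g 1).den_nz
      exact mul_ne_zero (mul_ne_zero this d0) d1
    have hrel₀ : (a₀:K)*τ^2 + (b₀:K)*τ + (c₀:K) = 0 := by
      rw [ha₀, hb₀, hc₀]
      push_cast
      linear_combination (((g 0).den:K) * ((g 1).den:K) * ((g 2).den:K)) * hsum'
        - τ^2 * ((g 0).den:K) * ((g 1).den:K) * h2'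
        - τ * ((g 0).den:K) * ((g 2).den:K) * h1'
        - ((g 1).den:K) * ((g 2).den:K) * h0'
    set g1i : ℤ := (Int.gcd a₀ b₀ : ℤ) with hg1i
    set G : ℤ := (Int.gcd g1i c₀ : ℤ) with hGdef
    have hGg1 : G ∣ g1i := Int.gcd_dvd_left _ _
    have hGa : G ∣ a₀ := hGg1.trans (Int.gcd_dvd_left _ _)
    have hGb : G ∣ b₀ := hGg1.trans (Int.gcd_dvd_right _ _)
    have hGc : G ∣ c₀ := Int.gcd_dvd_right _ _
    have hG0 : G ≠ 0 := by
      intro h0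
      rw [hGdef] at h0
      obtain ⟨hg1z, -⟩ := Int.gcd_eq_zero_iff.mp (by exact_mod_cast h0)
      rw [hg1i] at hg1z
      obtain ⟨haz, -⟩ := Int.gcd_eq_zero_iff.mp (by exact_mod_cast hg1z)
      exact ha₀0 haz
    obtain ⟨a, haG⟩ := hGa
    obtain ⟨b, hbG⟩ := hGb
    obtain ⟨c, hcG⟩ := hGc
    refine ⟨a, b, c, ?_, ?_, ?_⟩
    · intro h0
      exact ha₀0 (by rw [haG, h0, mul_zero])
    · have hGK : (G:K) ≠ 0 := Int.cast_ne_zero.mpr hG0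
      have hfac : (G:K) * ((a:K)*τ^2 + (b:K)*τ + (c:K)) = 0 := by
        rw [haG, hbG, hcG] at hrel₀
        push_cast at hrel₀
        linear_combination hrel₀
      rcases mul_eq_zero.mp hfac with h' | h'
      · exact absurd h' hGK
      · exact h'
    · have e1 : g1i = a₀ * Int.gcdA a₀ b₀ + b₀ * Int.gcdB a₀ b₀ := Int.gcd_eq_gcd_ab a₀ b₀
      have e2 : G = g1i * Int.gcdA g1i c₀ + c₀ * Int.gcdB g1i c₀ := Int.gcd_eq_gcd_ab g1i c₀
      refine ⟨Int.gcdA a₀ b₀ * Int.gcdA g1i c₀, Int.gcdB a₀ b₀ * Int.gcdA g1i c₀,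
        Int.gcdB g1i c₀, ?_⟩
      apply mul_left_cancel₀ hG0
      rw [mul_one]
      linear_combination (-(Int.gcdA a₀ b₀ * Int.gcdA g1i c₀)) * haG
        - (Int.gcdB a₀ b₀ * Int.gcdA g1i c₀) * hbG
        - (Int.gcdB g1i c₀) * hcG - (Int.gcdA g1i c₀) * e1 - e2
  -- aτ ∈ O'
  have haτ : (a:K)*τ ∈ O' := by
    refine (hprop ((a:K)*τ)).mp ?_
    intro t ht
    obtain ⟨m, n, hmn⟩ := hspan t ht
    refine ⟨((n*a - m*b : ℤ):↥O')*tα + ((-(m*c) : ℤ):↥O')*tβ,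
      Ideal.add_mem _ (Ideal.mul_mem_left _ _ htα) (Ideal.mul_mem_left _ _ htβ), ?_⟩
    push_cast [htαc, htβc, hmn]
    rw [hατ]
    linear_combination ((m:K) * β) * hrel
  -- coprime form value
  obtain ⟨x, y, hx, hy, hcop⟩ := exists_coprime_form_value a b c f u v w hbez hf0
  set Q : ℤ := a*x^2 + b*x*y + c*y^2 with hQdef
  obtain ⟨uu, vv, huv⟩ := hcop
  set δ : K := ((a*x + b*y : ℤ):K) + (y:K)*((a:K)*τ) with hδdef
  have hδO' : δ ∈ O' := O'.add_mem (intCast_mem O' _) (O'.mul_mem (intCast_mem O' _) haτ)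
  have hδτeq : δ*τ = (x:K)*((a:K)*τ) + ((-(y*c):ℤ):K) := by
    rw [hδdef]; push_cast; linear_combination (y:K) * hrel
  have hδτO' : δ*τ ∈ O' := by
    rw [hδτeq]
    exact O'.add_mem (O'.mul_mem (intCast_mem O' _) haτ) (intCast_mem O' _)
  have hQδ : δ * ((x:K) - (y:K)*τ) = ((Q:ℤ):K) := by
    rw [hδdef, hQdef]; push_cast; linear_combination (-(y:K)^2) * hrel
  have hQ0 : (Q:ℤ) ≠ 0 := by
    intro hq
    have hcast : ((Q:ℤ):K) = 0 := by rw [hq]; norm_num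
    rw [hcast] at hQδ
    rcases mul_eq_zero.mp hQδ with hd | hd
    · rw [hδdef] at hd
      push_cast at hd
      have key : ((y*a : ℤ):K) * τ = ((-(a*x + b*y) : ℤ):K) := by
        push_cast
        linear_combination hd
      have := hτirr _ _ key
      rcases mul_eq_zero.mp this with h' | h'
      · omega
      · exact ha0 h'
    · have key : ((y:ℤ):K) * τ = ((x:ℤ):K) := by
        push_cast
        linear_combination -hd
      have := hτirr _ _ key
      omega
  have hδ0 : δ ≠ 0 := by
    intro hd
    apply hQ0
    have : ((Q:ℤ):K) = 0 := by rw [← hQδ, hd, zero_mul]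
    exact_mod_cast this
  -- the ideal 𝔠' = (δ/β)𝔟'
  set 𝔠' : Ideal O' :=
    { carrier := {z : ↥O' | ∃ t : ↥O', t ∈ 𝔟' ∧ δ * (t:K) = β * (z:K)}
      add_mem' := by
        rintro z₁ z₂ ⟨t₁, ht₁, he₁⟩ ⟨t₂, ht₂, he₂⟩
        exact ⟨t₁ + t₂, Ideal.add_mem _ ht₁ ht₂, by push_cast; linear_combination he₁ + he₂⟩
      zero_mem' := ⟨0, Submodule.zero_mem _, by simp⟩
      smul_mem' := by
        rintro r z ⟨t, ht, he⟩
        exact ⟨r * t, Ideal.mul_mem_left _ _ ht, by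
          push_cast [smul_eq_mul]
          linear_combination (r:K) * he⟩ } with h𝔠'
  have hmem𝔠' : ∀ z : ↥O', z ∈ 𝔠' ↔ ∃ t : ↥O', t ∈ 𝔟' ∧ δ * (t:K) = β * (z:K) := fun z => Iff.rfl
  have hcoe𝔠' : ∀ z₁ z₂ : ↥O', (z₁:K) = (z₂:K) → z₁ ∈ 𝔠' → z₂ ∈ 𝔠' := by
    intro z₁ z₂ hz hz₁
    have : z₁ = z₂ := Subtype.coe_injective hz
    rwa [this] at hz₁
  have hsurj : ∀ t : ↥O', t ∈ 𝔟' → ∃ z : ↥O', z ∈ 𝔠' ∧ δ*(t:K) = β*(z:K) := by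
    intro t ht
    obtain ⟨m, n, hmn⟩ := hspan t ht
    refine ⟨((m:ℤ):↥O')*⟨δ*τ, hδτO'⟩ + ((n:ℤ):↥O')*⟨δ, hδO'⟩, ?_, ?_⟩
    · refine (hmem𝔠' _).mpr ⟨t, ht, ?_⟩
      rw [hmn, hατ]
      push_cast
      ring
    · rw [hmn, hατ]
      push_cast
      ring
  have hQO' : ((Q:ℤ):K) ∈ O' := intCast_mem O' _
  have hQO : ((Q:ℤ):K) ∈ O := intCast_mem O _
  have hg𝔠 : (⟨((Q:ℤ):K), hQO'⟩ : ↥O') ∈ 𝔠' := by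
    refine (hmem𝔠' _).mpr ⟨((x:ℤ):↥O')*tβ - ((y:ℤ):↥O')*tα, ?_, ?_⟩
    · exact Submodule.sub_mem _ (Ideal.mul_mem_left _ _ htβ) (Ideal.mul_mem_left _ _ htα)
    · push_cast [htαc, htβc]
      rw [hατ]
      linear_combination β * hQδ
  set 𝔞 : Ideal O := Ideal.comap (Subring.inclusion h) 𝔠' with h𝔞def
  have hg𝔞 : (⟨((Q:ℤ):K), hQO⟩ : ↥O) ∈ 𝔞 := by
    rw [h𝔞def, Ideal.mem_comap]
    exact hcoe𝔠' _ _ rfl hg𝔠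
  -- extension of 𝔞 is 𝔠'
  have hmap : Ideal.map (Subring.inclusion h) 𝔞 = 𝔠' := by
    apply le_antisymm
    · exact Ideal.map_le_iff_le_comap.mpr le_rfl
    · intro z hz
      have hzz : ((uu:ℤ):↥O') * (((Q:ℤ):↥O') * z) + ((vv:ℤ):↥O') * (((f:ℤ):↥O') * z) = z := by
        have h1 : ((uu*Q + vv*f : ℤ) : ↥O') = 1 := by rw [huv]; exact Int.cast_one
        calc ((uu:ℤ):↥O') * (((Q:ℤ):↥O') * z) + ((vv:ℤ):↥O') * (((f:ℤ):↥O') * z)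
            = ((uu*Q + vv*f : ℤ) : ↥O') * z := by push_cast; ring
          _ = z := by rw [h1, one_mul]
      rw [← hzz]
      refine Ideal.add_mem _ (Ideal.mul_mem_left _ _ ?_) (Ideal.mul_mem_left _ _ ?_)
      · have hQmem := Ideal.mem_map_of_mem (Subring.inclusion h) hg𝔞
        have heq : Subring.inclusion h (⟨((Q:ℤ):K), hQO⟩ : ↥O) = ((Q:ℤ):↥O') := by
          apply Subtype.ext
          push_cast
          rfl
        rw [heq] at hQmem
        exact Ideal.mul_mem_right _ _ hQmem
      · have hfz : ((f:K) * (z:K)) ∈ O := hfcond _ z.2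
        have hOelt : (⟨(f:K)*(z:K), hfz⟩ : ↥O) ∈ 𝔞 := by
          rw [h𝔞def, Ideal.mem_comap]
          refine hcoe𝔠' (((f:ℤ):↥O') * z) _ ?_ (Ideal.mul_mem_left _ _ hz)
          push_cast
          rfl
        have hmem := Ideal.mem_map_of_mem (Subring.inclusion h) hOelt
        have heq : Subring.inclusion h (⟨(f:K)*(z:K), hfz⟩ : ↥O) = ((f:ℤ):↥O') * z := by
          apply Subtype.ext
          push_cast
          rfl
        rw [heq] at hmem
        exact hmem
  refine ⟨𝔞, ⟨?_, ?_⟩, ?_⟩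
  · -- 𝔞 ≠ ⊥
    rw [Submodule.ne_bot_iff]
    refine ⟨_, hg𝔞, ?_⟩
    intro hz
    apply hQ0
    have : ((Q:ℤ):K) = 0 := congrArg Subtype.val hz
    exact_mod_cast this
  · -- multiplier ring is O
    intro μ
    constructor
    · intro H
      have hstab : ∀ z : ↥O', z ∈ Ideal.map (Subring.inclusion h) 𝔞 →
          ∃ z' : ↥O', z' ∈ Ideal.map (Subring.inclusion h) 𝔞 ∧ μ * (z:K) = (z':K) := by
        intro z hz
        refine Submodule.span_induction ?_ ?_ ?_ ?_ hz
        · rintro zz ⟨s, hs, rfl⟩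
          obtain ⟨s', hs', hseq⟩ := H s hs
          exact ⟨Subring.inclusion h s', Ideal.mem_map_of_mem _ hs', hseq⟩
        · exact ⟨0, Submodule.zero_mem _, by simp⟩
        · rintro zz₁ zz₂ _ _ ⟨z₁', h₁, e₁⟩ ⟨z₂', h₂, e₂⟩
          exact ⟨z₁' + z₂', Ideal.add_mem _ h₁ h₂, by push_cast; linear_combination e₁ + e₂⟩
        · rintro r zz _ ⟨z', h', e'⟩
          exact ⟨r * z', Ideal.mul_mem_left _ _ h', by
            push_cast [smul_eq_mul]
            linear_combination (r:K) * e'⟩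
      have hμO' : μ ∈ O' := by
        refine (hprop μ).mp ?_
        intro t ht
        obtain ⟨z, hz𝔠, heq⟩ := hsurj t ht
        have hzmap : z ∈ Ideal.map (Subring.inclusion h) 𝔞 := by rw [hmap]; exact hz𝔠
        obtain ⟨z', hz'map, heq'⟩ := hstab z hzmap
        have hz'𝔠 : z' ∈ 𝔠' := by rw [← hmap]; exact hz'map
        obtain ⟨t'', ht'', he''⟩ := (hmem𝔠' z').mp hz'𝔠
        refine ⟨t'', ht'', ?_⟩
        apply mul_left_cancel₀ hδ0
        rw [he'']
        linear_combination μ * heq + β * heq'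
      obtain ⟨s', hs'𝔞, hs'eq⟩ := H _ hg𝔞
      have hμf : (f:K) * μ ∈ O := hfcond μ hμO'
      have h1 : ((uu*Q + vv*f : ℤ):K) = 1 := by rw [huv]; exact Int.cast_one
      push_cast at h1
      have hrepr : μ = (uu:K) * (μ * ((Q:ℤ):K)) + (vv:K) * ((f:K) * μ) := by
        push_cast
        linear_combination (-μ) * h1
      rw [hrepr, hs'eq]
      exact O.add_mem (O.mul_mem (intCast_mem O _) s'.2) (O.mul_mem (intCast_mem O _) hμf)
    · intro hμ s hs
      exact ⟨⟨μ, hμ⟩ * s, Ideal.mul_mem_left _ _ hs, rfl⟩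
  · -- same class
    refine ⟨tβ, ⟨δ, hδO'⟩, ?_, ?_, ?_⟩
    · intro hz
      exact hβ0 (htβc ▸ congrArg Subtype.val hz)
    · intro hz
      exact hδ0 (congrArg Subtype.val hz)
    · rw [hmap]
      ext z
      rw [Ideal.mem_span_singleton_mul, Ideal.mem_span_singleton_mul]
      constructor
      · rintro ⟨z₀, hz₀, rfl⟩
        obtain ⟨t, ht, he⟩ := (hmem𝔠' z₀).mp hz₀
        refine ⟨t, ht, Subtype.ext ?_⟩
        push_cast [htβc]
        rw [he]
      · rintro ⟨t, ht, rfl⟩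
        obtain ⟨z₀, hz₀, he⟩ := hsurj t ht
        refine ⟨z₀, hz₀, Subtype.ext ?_⟩
        push_cast [htβc]
        rw [← he]
end
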